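/- arXiv:1010.6131 — 8 statements merged into one kernel-verified Lean document; each statement's English description precedes it below -/
import Mathlib

section
/- For every integer n ≥ 4, the rainbow connection number of the cycle C_n on n vertices equals ⌈n/2⌉. -/
open SimpleGraph

namespace RCAux
open scoped Fin.NatCast Fin.IntCast Fin.CommRing
variable {n : ℕ}





lemma val_one' (hn : 2 ≤ n) [NeZero n] : (1 : Fin n).val = 1 := by
  rw [Fin.val_one']
  exact Nat.mod_eq_of_lt (by omega)

lemma adj_succ (hn : 2 ≤ n) [NeZero n] (u : Fin n) : (cycleGraph n).Adj u (u + 1) := by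
  rw [cycleGraph_adj']
  right
  rw [add_sub_cancel_left, val_one' hn]

def arc (hn : 2 ≤ n) [NeZero n] : (m : ℕ) → (u : Fin n) → (cycleGraph n).Walk u (u + (m : Fin n))
  | 0, u => Walk.nil.copy rfl (by simp)
  | m+1, u => (Walk.cons (adj_succ hn u) (arc hn m (u+1))).copy rfl (by push_cast; ring)

lemma arc_edges (hn : 2 ≤ n) [NeZero n] (m : ℕ) (u : Fin n) :
    (arc hn m u).edges = (List.range m).map
      (fun i : ℕ => s(u + (i : Fin n), u + (i : Fin n) + 1)) := by
  induction m generalizing u with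
  | zero => simp [arc]
  | succ m ih =>
    rw [arc, Walk.edges_copy, Walk.edges_cons, ih, List.range_succ_eq_map]
    simp only [List.map_cons, List.map_map]
    congr 1
    · push_cast; ring_nf
    · apply List.map_congr_left
      intro i _
      simp only [Function.comp_apply]
      push_cast
      ring_nf

lemma arc_support (hn : 2 ≤ n) [NeZero n] (m : ℕ) (u : Fin n) :
    (arc hn m u).support = (List.range (m+1)).map (fun i : ℕ => u + (i : Fin n)) := by
  induction m generalizing u with
  | zero => simp [arc, List.range_succ]
  | succ m ih =>
    rw [arc, Walk.support_copy, Walk.support_cons, ih, List.range_succ_eq_map (n := m+1)]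
    simp only [List.map_cons, List.map_map]
    congr 1
    · push_cast; ring_nf
    · apply List.map_congr_left
      intro i _
      simp only [Function.comp_apply]
      push_cast
      ring_nf

lemma arc_isPath (hn : 2 ≤ n) [NeZero n] (m : ℕ) (hm : m < n) (u : Fin n) :
    (arc hn m u).IsPath := by
  rw [Walk.isPath_def, arc_support hn m u]
  refine List.Nodup.map_on ?_ List.nodup_range
  intro i hi j hj hij
  simp only [List.mem_range] at hi hj
  have h3 : (i : Fin n) = (j : Fin n) := add_left_cancel hij
  have h1 : ((i : ℕ) : Fin n).val = i := Fin.val_cast_of_lt (by omega)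
  have h2 : ((j : ℕ) : Fin n).val = j := Fin.val_cast_of_lt (by omega)
  rw [← h1, ← h2, h3]

lemma arc_length (hn : 2 ≤ n) [NeZero n] (m : ℕ) (u : Fin n) :
    (arc hn m u).length = m := by
  have h := congrArg List.length (arc_edges hn m u)
  rwa [Walk.length_edges, List.length_map, List.length_range] at h




/-- colour of the edge starting at vertex `w`. -/
def colv (n : ℕ) (w : Fin n) : ℕ := if w.val < (n+1)/2 then w.val else w.val - (n+1)/2

noncomputable def col (n : ℕ) [NeZero n] : Sym2 (Fin n) → ℕ :=
  Sym2.lift ⟨fun i j => min (if j = i + 1 then colv n i else n) (if i = j + 1 then colv n j else n),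
    fun i j => by dsimp only; rw [min_comm]⟩

lemma colv_lt (hn : 4 ≤ n) (w : Fin n) : colv n w < (n+1)/2 := by
  have := w.isLt
  unfold colv
  split <;> omega

lemma finTwoNeZero (hn : 4 ≤ n) [NeZero n] : (2 : Fin n) ≠ 0 := by
  have : ((2 : ℕ) : Fin n).val = 2 := Fin.val_cast_of_lt (by omega)
  intro h
  rw [show ((2 : ℕ) : Fin n) = (2 : Fin n) by push_cast; rfl, h] at this
  simp at this

lemma col_eval (hn : 4 ≤ n) [NeZero n] (w : Fin n) : col n s(w, w + 1) = colv n w := by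
  have h2 : w ≠ w + 1 + 1 := by
    rw [add_assoc, show (1:Fin n)+1 = (2:Fin n) by norm_num]
    intro h
    exact finTwoNeZero hn (left_eq_add.mp h)
  rw [col, Sym2.lift_mk]
  simp only [if_pos rfl, if_neg h2]
  exact min_eq_left (le_of_lt (lt_of_lt_of_le (colv_lt hn w) (by omega)))

lemma adj_cases (hn : 4 ≤ n) [NeZero n] {a b : Fin n} (h : (cycleGraph n).Adj a b) :
    b = a + 1 ∨ a = b + 1 := by
  rw [cycleGraph_adj'] at h
  rcases h with h | h
  · right
    have : a - b = 1 := by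
      apply Fin.ext; rw [h, val_one' (by omega)]
    rw [← this]; ring
  · left
    have : b - a = 1 := by
      apply Fin.ext; rw [h, val_one' (by omega)]
    rw [← this]; ring

lemma col_lt (hn : 4 ≤ n) [NeZero n] {e : Sym2 (Fin n)} (he : e ∈ (cycleGraph n).edgeSet) :
    col n e < (n+1)/2 := by
  induction e with
  | _ a b =>
    rw [mem_edgeSet] at he
    rcases adj_cases hn he with h | h
    · rw [h, col_eval hn]; exact colv_lt hn a
    · rw [h, Sym2.eq_swap, col_eval hn]; exact colv_lt hn b

lemma colv_ne (hn : 4 ≤ n) (a t : ℕ) (ha : a < n) (ht : 1 ≤ t) (h2 : 2*(t+1) ≤ n) :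
    (if a < (n+1)/2 then a else a - (n+1)/2) ≠
      (if (a+t) % n < (n+1)/2 then (a+t) % n else (a+t) % n - (n+1)/2) := by
  rcases lt_or_ge (a+t) n with h | h
  · rw [Nat.mod_eq_of_lt h]; split <;> split <;> omega
  · rw [Nat.mod_eq_sub_mod h, Nat.mod_eq_of_lt (by omega)]
    split <;> split <;> omega

lemma pairwise_range_ne {N : ℕ} {F : ℕ → ℕ} (h : ∀ i j, i < j → j < N → F i ≠ F j) :
    ((List.range N).map F).Nodup := by
  rw [List.Nodup, List.pairwise_map]
  exact List.pairwise_lt_range.imp_of_mem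
    (fun {i j} hi hj hij => h i j hij (List.mem_range.mp hj))

lemma arc_colors_nodup (hn : 4 ≤ n) [NeZero n] (u : Fin n) (m : ℕ) (hm : m ≤ n/2) (h2 : 2 ≤ n) :
    (((arc h2 m u).edges).map (col n)).Nodup := by
  rw [arc_edges, List.map_map]
  have hfe : (col n ∘ fun i : ℕ => s(u + (i : Fin n), u + (i : Fin n) + 1)) =
      fun i : ℕ => colv n (u + (i : Fin n)) := by
    funext i; exact col_eval hn _
  rw [hfe]
  apply pairwise_range_ne
  intro i j hij hj
  set t := j - i with hts
  have hj' : u + (j : Fin n) = (u + (i : Fin n)) + ((t : ℕ) : Fin n) := by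
    rw [show j = i + t by omega]
    push_cast
    ring
  have htv : ((t : ℕ) : Fin n).val = t := Fin.val_cast_of_lt (by omega)
  have hval : (u + (j : Fin n)).val = ((u + (i : Fin n)).val + t) % n := by
    rw [hj', Fin.val_add, htv]
  unfold colv
  rw [hval]
  exact colv_ne hn _ t (Fin.isLt _) (by omega) (by omega)

lemma upper (hn : 4 ≤ n) [NeZero n] :
    ∃ c : Sym2 (Fin n) → ℕ, (∀ e ∈ (cycleGraph n).edgeSet, c e < (n+1)/2) ∧
      ∀ u v : Fin n, u ≠ v → ∃ p : (cycleGraph n).Walk u v,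
        p.IsPath ∧ (p.edges.map c).Nodup := by
  refine ⟨col n, fun e he => col_lt hn he, fun u v huv => ?_⟩
  have h2 : (2:ℕ) ≤ n := by omega
  have hd0 : (v - u).val ≠ 0 := by
    intro h
    have hz : v - u = 0 := Fin.ext (by simpa using h)
    exact huv (sub_eq_zero.mp hz).symm
  rcases le_or_gt ((v - u).val) (n/2) with hle | hgt
  · have hend : u + (((v - u).val : ℕ) : Fin n) = v := by
      rw [Fin.cast_val_eq_self]; ring
    refine ⟨(arc h2 (v - u).val u).copy rfl hend, ?_, ?_⟩
    · rw [Walk.isPath_copy]; exact arc_isPath h2 _ (Fin.isLt _) u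
    · rw [Walk.edges_copy]; exact arc_colors_nodup hn u _ hle h2
  · have hd'0 : (u - v).val ≠ 0 := by
      intro h
      have hz : u - v = 0 := Fin.ext (by simpa using h)
      exact huv (sub_eq_zero.mp hz)
    have hdd : (v - u).val + (u - v).val = n := by
      have hsum : ((v - u) + (u - v) : Fin n) = 0 := by ring
      have hving := congrArg Fin.val hsum
      rw [Fin.val_add] at hving
      have hdvd : n ∣ (v - u).val + (u - v).val := Nat.dvd_of_mod_eq_zero hving
      obtain ⟨c, hc⟩ := hdvd
      have hlt : (v - u).val < n := Fin.isLt _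
      have hlt' : (u - v).val < n := Fin.isLt _
      have hcne : c ≠ 0 := by rintro rfl; omega
      have hc2 : c < 2 := by
        by_contra hcge
        push_neg at hcge
        have := Nat.mul_le_mul_left n hcge
        omega
      have : c = 1 := by omega
      rw [this, mul_one] at hc
      exact hc
    have hle' : (u - v).val ≤ n/2 := by omega
    have hend : v + (((u - v).val : ℕ) : Fin n) = u := by
      rw [Fin.cast_val_eq_self]; ring
    refine ⟨((arc h2 (u - v).val v).copy rfl hend).reverse, ?_, ?_⟩
    · apply Walk.IsPath.reverse
      rw [Walk.isPath_copy]
      exact arc_isPath h2 _ (Fin.isLt _) v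
    · rw [Walk.edges_reverse, List.map_reverse, List.nodup_reverse, Walk.edges_copy]
      exact arc_colors_nodup hn v _ hle' h2

def wind [NeZero n] {u v : Fin n} (p : (cycleGraph n).Walk u v) : ℤ :=
  (p.darts.map (fun d => if d.toProd.2 = d.toProd.1 + 1 then (1:ℤ) else -1)).sum

lemma wind_nil [NeZero n] {u : Fin n} : wind (.nil : (cycleGraph n).Walk u u) = 0 := by
  simp [wind]

lemma wind_cons [NeZero n] {u w v : Fin n} (h : (cycleGraph n).Adj u w)
    (p : (cycleGraph n).Walk w v) :
    wind (.cons h p) = (if w = u + 1 then 1 else -1) + wind p := by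
  simp [wind, Walk.darts_cons]

lemma abs_wind_le [NeZero n] {u v : Fin n} (p : (cycleGraph n).Walk u v) :
    |wind p| ≤ p.length := by
  induction p with
  | nil => simp [wind_nil]
  | @cons a b c h q ih =>
    rw [wind_cons, Walk.length_cons]
    refine le_trans (abs_add_le _ _) ?_
    have habs : |if b = a + 1 then (1:ℤ) else -1| ≤ 1 := by split <;> simp
    push_cast
    omega

lemma wind_spec (hn : 4 ≤ n) [NeZero n] {u v : Fin n} (p : (cycleGraph n).Walk u v) :
    ((wind p : ℤ) : Fin n) = v - u := by
  induction p with
  | nil => simp [wind_nil]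
  | @cons u w v h q ih =>
    rw [wind_cons]
    by_cases hw : w = u + 1
    · rw [if_pos hw]
      push_cast
      rw [ih, hw]
      ring
    · have hu : u = w + 1 := (adj_cases hn h).resolve_left hw
      rw [if_neg hw]
      push_cast
      rw [ih, hu]
      ring

lemma wind_eq_len (hn : 4 ≤ n) [NeZero n] {u v : Fin n} (p : (cycleGraph n).Walk u v)
    (hwl : wind p = p.length) :
    p.edges = (List.range p.length).map
      (fun i : ℕ => s(u + (i : Fin n), u + (i : Fin n) + 1)) := by
  induction p with
  | nil => simp
  | @cons u w v h q ih =>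
    rw [wind_cons, Walk.length_cons] at hwl
    have hb := abs_wind_le q
    have h1 : wind q ≤ q.length := le_trans (le_abs_self _) hb
    by_cases hw : w = u + 1
    · rw [if_pos hw] at hwl
      have hq : wind q = q.length := by push_cast at hwl ⊢; omega
      rw [Walk.edges_cons, ih hq, Walk.length_cons, List.range_succ_eq_map,
        List.map_cons, List.map_map]
      congr 1
      · subst hw; norm_num
      · apply List.map_congr_left
        intro i _
        simp only [Function.comp_apply]
        subst hw
        push_cast
        ring_nf
    · rw [if_neg hw] at hwl
      exfalso
      push_cast at hwl
      omega

lemma length_le_of_nodup_lt {l : List ℕ} (hl : l.Nodup) {m : ℕ} (h : ∀ x ∈ l, x < m) :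
    l.length ≤ m := by
  have hsub : l.toFinset ⊆ Finset.range m := by
    intro x hx
    rw [Finset.mem_range]
    exact h x (List.mem_toFinset.mp hx)
  have hcard := Finset.card_le_card hsub
  rwa [List.toFinset_card_of_nodup hl, Finset.card_range] at hcard

lemma walk_length_le (hn : 4 ≤ n) [NeZero n] {u v : Fin n} {m : ℕ}
    {c : Sym2 (Fin n) → ℕ} (hc : ∀ e ∈ (cycleGraph n).edgeSet, c e < m)
    (p : (cycleGraph n).Walk u v) (hnd : (p.edges.map c).Nodup) : p.length ≤ m := by
  have hmap : ∀ x ∈ p.edges.map c, x < m := by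
    intro x hx
    obtain ⟨e, he', rfl⟩ := List.mem_map.mp hx
    exact hc e (Walk.edges_subset_edgeSet p he')
  have hll := length_le_of_nodup_lt hnd hmap
  rwa [List.length_map, Walk.length_edges] at hll

lemma wind_modeq (hn : 4 ≤ n) [NeZero n] {u : Fin n} {d : ℕ}
    (p : (cycleGraph n).Walk u (u + (d : Fin n))) :
    ∃ t : ℤ, wind p = d + n * t := by
  have hspec := wind_spec hn p
  rw [add_sub_cancel_left] at hspec
  have hcast : ((wind p - d : ℤ) : Fin n) = 0 := by
    push_cast
    rw [hspec]
    ring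
  obtain ⟨t, ht⟩ := (CharP.intCast_eq_zero_iff (Fin n) n _).mp hcast
  exact ⟨t, by linarith⟩

lemma cast_k_ne (hn : 4 ≤ n) [NeZero n] {d : ℕ} (hd0 : 0 < d) (hdn : d < n) (u : Fin n) :
    u ≠ u + (d : Fin n) := by
  intro h
  have h0 : ((d : ℕ) : Fin n) = 0 := by
    have := left_eq_add.mp h
    exact this
  have hv : ((d : ℕ) : Fin n).val = d := Fin.val_cast_of_lt hdn
  rw [h0] at hv
  simp at hv
  omega

lemma lower_even (hn : 4 ≤ n) [NeZero n] (he : n % 2 = 0) (m : ℕ)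
    (c : Sym2 (Fin n) → ℕ) (hc : ∀ e ∈ (cycleGraph n).edgeSet, c e < m)
    (hp : ∀ u v : Fin n, u ≠ v → ∃ p : (cycleGraph n).Walk u v,
      p.IsPath ∧ (p.edges.map c).Nodup) :
    (n+1)/2 ≤ m := by
  by_contra hlt
  push_neg at hlt
  set K := (n+1)/2 with hKdef
  have hK : n = 2*K := by omega
  obtain ⟨p, hpath, hnd⟩ := hp 0 (0 + ((K : ℕ) : Fin n))
    (cast_k_ne hn (by omega) (by omega) 0)
  have hlen : p.length ≤ m := walk_length_le hn hc p hnd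
  obtain ⟨t, ht⟩ := wind_modeq hn p
  have hb := abs_wind_le p
  have habs := abs_le.mp hb
  have hKZ : ((n : ℤ)) = 2 * (K : ℤ) := by omega
  rcases lt_trichotomy t 0 with h | h | h
  · have hmul : (n : ℤ) * t ≤ (n : ℤ) * (-1) := by
      apply mul_le_mul_of_nonneg_left (by omega) (by positivity)
    have h1 := habs.1
    have hmle : (m : ℤ) ≤ (K : ℤ) - 1 := by omega
    have hlenle : ((p.length : ℕ) : ℤ) ≤ (m : ℤ) := by exact_mod_cast hlen
    linarith
  · rw [h, mul_zero, add_zero] at ht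
    have h2 := habs.2
    have hmle : (m : ℤ) ≤ (K : ℤ) - 1 := by omega
    have hlenle : ((p.length : ℕ) : ℤ) ≤ (m : ℤ) := by exact_mod_cast hlen
    linarith
  · have hmul : (n : ℤ) * 1 ≤ (n : ℤ) * t := by
      apply mul_le_mul_of_nonneg_left (by omega) (by positivity)
    have h2 := habs.2
    have hmle : (m : ℤ) ≤ (K : ℤ) - 1 := by omega
    have hlenle : ((p.length : ℕ) : ℤ) ≤ (m : ℤ) := by exact_mod_cast hlen
    linarith

lemma natCast_mod_fin [NeZero n] (a : ℕ) : ((a : ℕ) : Fin n) = ((a % n : ℕ) : Fin n) := by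
  conv_lhs => rw [← Nat.div_add_mod a n]
  push_cast
  rw [Fin.natCast_self]
  ring

lemma lower_odd (hn : 4 ≤ n) [NeZero n] (ho : n % 2 = 1) (m : ℕ)
    (c : Sym2 (Fin n) → ℕ) (hc : ∀ e ∈ (cycleGraph n).edgeSet, c e < m)
    (hp : ∀ u v : Fin n, u ≠ v → ∃ p : (cycleGraph n).Walk u v,
      p.IsPath ∧ (p.edges.map c).Nodup) :
    (n+1)/2 ≤ m := by
  by_contra hlt
  push_neg at hlt
  set K := (n+1)/2 with hKdef
  have hK : n = 2*K - 1 := by omega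
  have hK3 : 3 ≤ K := by omega
  set F : Fin n → ℕ := fun w => c s(w, w + 1) with hF
  -- each window of K-1 consecutive edge colours is rainbow and bounded by m
  have hwin : ∀ u : Fin n,
      ((List.range (K-1)).map (fun i : ℕ => F (u + (i : Fin n)))).Nodup ∧
      ∀ x ∈ (List.range (K-1)).map (fun i : ℕ => F (u + (i : Fin n))), x < m := by
    intro u
    obtain ⟨p, hpath, hnd⟩ := hp u (u + ((K-1 : ℕ) : Fin n))
      (cast_k_ne hn (by omega) (by omega) u)
    have hlen : p.length ≤ m := walk_length_le hn hc p hnd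
    obtain ⟨t, ht⟩ := wind_modeq hn p
    have hb := abs_wind_le p
    have habs := abs_le.mp hb
    have hmle : (m : ℤ) ≤ (K : ℤ) - 1 := by omega
    have hlenle : ((p.length : ℕ) : ℤ) ≤ (m : ℤ) := by omega
    have hnZ : (n : ℤ) = 2*(K:ℤ) - 1 := by omega
    have hKd : ((K - 1 : ℕ) : ℤ) = (K : ℤ) - 1 := by omega
    have ht0 : t = 0 := by
      rcases lt_trichotomy t 0 with h | h | h
      · exfalso
        have hmul : (n : ℤ) * t ≤ (n : ℤ) * (-1) :=
          mul_le_mul_of_nonneg_left (by omega) (by positivity)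
        have h1 := habs.1
        rw [ht, hKd] at h1
        linarith
      · exact h
      · exfalso
        have hmul : (n : ℤ) * 1 ≤ (n : ℤ) * t :=
          mul_le_mul_of_nonneg_left (by omega) (by positivity)
        have h2 := habs.2
        rw [ht, hKd] at h2
        linarith
    rw [ht0, mul_zero, add_zero] at ht
    have hlen' : p.length = K - 1 := by
      have h2 := habs.2
      rw [ht] at h2
      have h3 : (K - 1 : ℕ) ≤ p.length := by exact_mod_cast h2
      omega
    have hedg := wind_eq_len hn p (by rw [ht, hlen'])
    have hmapc : p.edges.map c =
        (List.range (K-1)).map (fun i : ℕ => F (u + (i : Fin n))) := by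
      rw [hedg, hlen', List.map_map]
      rfl
    rw [← hmapc]
    refine ⟨hnd, fun x hx => ?_⟩
    obtain ⟨e, he', rfl⟩ := List.mem_map.mp hx
    exact hc e (Walk.edges_subset_edgeSet p he')
  -- m = K - 1
  have hm : m = K - 1 := by
    have h0 := hwin 0
    have hlen2 := length_le_of_nodup_lt h0.1 h0.2
    rw [List.length_map, List.length_range] at hlen2
    omega
  -- each window, as a finset, is exactly range (K-1)
  have hfin : ∀ u : Fin n,
      ((List.range (K-1)).map (fun i : ℕ => F (u + (i : Fin n)))).toFinset
        = Finset.range (K-1) := by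
    intro u
    apply Finset.eq_of_subset_of_card_le
    · intro x hx
      rw [Finset.mem_range]
      have := (hwin u).2 x (List.mem_toFinset.mp hx)
      omega
    · rw [List.toFinset_card_of_nodup (hwin u).1, Finset.card_range,
        List.length_map, List.length_range]
  -- the colouring is periodic with period K-1
  have hstep : ∀ u : Fin n, F (u + ((K-1 : ℕ) : Fin n)) = F u := by
    intro u
    have hFu0 : F u ∈ (List.range (K-1)).map (fun i : ℕ => F (u + (i : Fin n))) :=
      List.mem_map.mpr ⟨0, List.mem_range.mpr (by omega), by norm_num⟩
    have hFu : F u ∈ ((List.range (K-1)).map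
        (fun i : ℕ => F ((u+1) + (i : Fin n)))).toFinset := by
      rw [hfin (u+1), Finset.mem_range]
      have := (hwin u).2 (F u) hFu0
      omega
    rw [List.mem_toFinset] at hFu
    obtain ⟨i, hi, hfi⟩ := List.mem_map.mp hFu
    rw [List.mem_range] at hi
    rcases Nat.lt_or_ge i (K-2) with hlt2 | hge
    · exfalso
      have hinj := List.inj_on_of_nodup_map (hwin u).1
      have hshift : (u+1) + ((i : ℕ) : Fin n) = u + ((i+1 : ℕ) : Fin n) := by
        push_cast
        ring
      have he1 : F (u + ((0 : ℕ) : Fin n)) = F (u + ((i+1 : ℕ) : Fin n)) := by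
        rw [← hshift, hfi]
        norm_num
      have h01 : (0 : ℕ) = i + 1 :=
        hinj (List.mem_range.mpr (by omega)) (List.mem_range.mpr (by omega)) he1
      omega
    · have hieq : i = K - 2 := by omega
      rw [← hfi, hieq]
      congr 1
      have hshift : ((K - 1 : ℕ) : Fin n) = 1 + ((K - 2 : ℕ) : Fin n) := by
        rw [show K - 1 = (K - 2) + 1 by omega]
        push_cast
        ring
      rw [hshift]
      ring
  -- iterate the period
  have hiter : ∀ (j : ℕ) (u : Fin n), F (u + ((j * (K-1) : ℕ) : Fin n)) = F u := by
    intro j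
    induction j with
    | zero => intro u; norm_num
    | succ j ih =>
      intro u
      have hshift : u + (((j+1) * (K-1) : ℕ) : Fin n)
          = (u + ((j * (K-1) : ℕ) : Fin n)) + ((K-1 : ℕ) : Fin n) := by
        rw [show (j+1) * (K-1) = j * (K-1) + (K-1) by ring]
        push_cast
        ring
      rw [hshift, hstep, ih]
  -- coprimality gives full periodicity
  have hcop : Nat.Coprime (K-1) n := by
    unfold Nat.Coprime
    rw [show n = 1 + 2 * (K-1) by omega, Nat.gcd_add_mul_right_right, Nat.gcd_one_right]
  obtain ⟨j, -, hj⟩ := Nat.exists_mul_mod_eq_one_of_coprime hcop (by omega)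
  have hone : ∀ u : Fin n, F (u + 1) = F u := by
    intro u
    have hcast1 : ((j * (K-1) : ℕ) : Fin n) = 1 := by
      rw [natCast_mod_fin, mul_comm, hj]
      norm_num
    rw [← hcast1, hiter j u]
  -- contradiction with the rainbow window at 0
  have hinj := List.inj_on_of_nodup_map (hwin 0).1
  have he01 : F ((0 : Fin n) + ((0:ℕ) : Fin n)) = F ((0 : Fin n) + ((1:ℕ) : Fin n)) := by
    norm_num
    rw [← hone 0]
    norm_num
  have : (0 : ℕ) = 1 :=
    hinj (List.mem_range.mpr (by omega)) (List.mem_range.mpr (by omega)) he01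
  omega

end RCAux

/-- The rainbow connection number of a graph `G`: the least `k` such that the edges of `G`
can be coloured with colours `0, …, k-1` so that any two distinct vertices are joined by a
path whose edges receive pairwise distinct colours. -/
noncomputable def rc {V : Type*} (G : SimpleGraph V) : ℕ :=
  sInf {k : ℕ | ∃ c : Sym2 V → ℕ, (∀ e ∈ G.edgeSet, c e < k) ∧
    ∀ u v : V, u ≠ v → ∃ p : G.Walk u v, p.IsPath ∧ (p.edges.map c).Nodup}

/-- For every `n ≥ 4`, the rainbow connection number of the cycle on `n` vertices equals
`⌈n/2⌉` (which is `(n+1)/2` with natural-number division). -/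
theorem rc_cycleGraph (n : ℕ) (hn : 4 ≤ n) :
    rc (SimpleGraph.cycleGraph n) = (n + 1) / 2 := by
  haveI : NeZero n := ⟨by omega⟩
  have hub := RCAux.upper hn
  apply le_antisymm
  · exact Nat.sInf_le hub
  · refine le_csInf ⟨(n+1)/2, hub⟩ ?_
    intro m hm
    obtain ⟨c, hc, hp⟩ := hm
    rcases (Nat.mod_two_eq_zero_or_one n : n % 2 = 0 ∨ n % 2 = 1) with he | ho
    · exact RCAux.lower_even hn he m c hc hp
    · exact RCAux.lower_odd hn ho m c hc hp
end

section
/- Let H be a connected graph and let H' be obtained from H by adding four new vertices x_1, x_2, x_3, x_4, where each x_i is joined by edges f_{i1}, f_{i2}, f_{i3} to three distinct vertices of H (and there are no other new edges). Then rc(H') ≤ rc(H) + 2. -/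
open SimpleGraph

private lemma concat_isPath' {V : Type*} {G : SimpleGraph V} {u v w : V} (p : G.Walk u v)
    (h : G.Adj v w) (hp : p.IsPath) (hw : w ∉ p.support) : (p.concat h).IsPath := by
  rw [SimpleGraph.Walk.isPath_def, SimpleGraph.Walk.support_concat,
    List.nodup_append]
  refine ⟨hp.support_nodup, List.nodup_singleton _, ?_⟩
  intro x hx _ hx' rfl
  rw [List.mem_singleton] at hx'
  subst hx'
  exact hw hx

private lemma nodup_helper1 {l : List ℕ} {m : ℕ} (h : l.Nodup) (hl : ∀ x ∈ l, x < m) :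
    (l ++ [m]).Nodup := by
  rw [List.nodup_append]
  refine ⟨h, List.nodup_singleton _, ?_⟩
  intro x hx _ hx' rfl
  rw [List.mem_singleton] at hx'
  subst hx'
  exact absurd (hl _ hx) (lt_irrefl _)

private lemma nodup_helper2 {l : List ℕ} {m : ℕ} (h : l.Nodup) (hl : ∀ x ∈ l, x < m) :
    (m :: (l ++ [m + 1])).Nodup := by
  rw [List.nodup_cons]
  refine ⟨?_, nodup_helper1 h (fun x hx => lt_trans (hl x hx) (Nat.lt_succ_self m))⟩
  intro hmem
  rcases List.mem_append.1 hmem with h' | h'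
  · exact absurd (hl _ h') (lt_irrefl _)
  · rw [List.mem_singleton] at h'
    omega

private def gAux {V : Type*} [DecidableEq V] (a : Fin 4 → Fin 3 → V) (c : Sym2 V → ℕ) (k : ℕ) :
    (V ⊕ Fin 4) → (V ⊕ Fin 4) → ℕ
  | Sum.inl p, Sum.inl q => c s(p, q)
  | Sum.inl p, Sum.inr i => if p = a i 0 then k else k + 1
  | Sum.inr i, Sum.inl p => if p = a i 0 then k else k + 1
  | Sum.inr _, Sum.inr _ => 0

private lemma gAux_symm {V : Type*} [DecidableEq V] (a : Fin 4 → Fin 3 → V) (c : Sym2 V → ℕ)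
    (k : ℕ) (x y : V ⊕ Fin 4) : gAux a c k x y = gAux a c k y x := by
  rcases x with p | i <;> rcases y with q | i' <;> simp only [gAux]
  rw [Sym2.eq_swap]

/-- Adding four new vertices `x₁, x₂, x₃, x₄` to a connected graph `H`, each joined by
three edges to three distinct vertices of `H` (and no other new edges), increases the
rainbow connection number by at most 2.  The new vertex `xᵢ` is `Sum.inr i`, and its three
neighbours in `H` are `a i 0, a i 1, a i 2`. -/
theorem rc_add_four_vertices {V : Type*} (H : SimpleGraph V) (hH : H.Connected)
    (a : Fin 4 → Fin 3 → V) (ha : ∀ i, Function.Injective (a i)) :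
    rc (SimpleGraph.fromRel (fun u v : V ⊕ Fin 4 =>
        (∃ p q, u = Sum.inl p ∧ v = Sum.inl q ∧ H.Adj p q) ∨
        (∃ i j, u = Sum.inl (a i j) ∧ v = Sum.inr i))) ≤ rc H + 2 := by
  classical
  set G' : SimpleGraph (V ⊕ Fin 4) := SimpleGraph.fromRel (fun u v : V ⊕ Fin 4 =>
        (∃ p q, u = Sum.inl p ∧ v = Sum.inl q ∧ H.Adj p q) ∨
        (∃ i j, u = Sum.inl (a i j) ∧ v = Sum.inr i)) with hG'
  -- adjacency characterisations
  have adj_ll : ∀ p q : V, G'.Adj (Sum.inl p) (Sum.inl q) ↔ H.Adj p q := by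
    intro p q
    rw [hG', SimpleGraph.fromRel_adj]
    constructor
    · rintro ⟨hne, (⟨p', q', hp, hq, h⟩ | ⟨i, j, h1, h2⟩) | (⟨p', q', hp, hq, h⟩ | ⟨i, j, h1, h2⟩)⟩
      · obtain rfl : p = p' := Sum.inl_injective hp
        obtain rfl : q = q' := Sum.inl_injective hq
        exact h
      · simp at h2
      · obtain rfl : q = p' := Sum.inl_injective hp
        obtain rfl : p = q' := Sum.inl_injective hq
        exact h.symm
      · simp at h2
    · intro h
      exact ⟨by simp [h.ne], Or.inl (Or.inl ⟨p, q, rfl, rfl, h⟩)⟩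
  have adj_lr : ∀ (p : V) (i : Fin 4), G'.Adj (Sum.inl p) (Sum.inr i) ↔ ∃ j, p = a i j := by
    intro p i
    rw [hG', SimpleGraph.fromRel_adj]
    constructor
    · rintro ⟨hne, (⟨p', q', hp, hq, h⟩ | ⟨i', j, h1, h2⟩) | (⟨p', q', hp, hq, h⟩ | ⟨i', j, h1, h2⟩)⟩
      · simp at hq
      · obtain rfl : i' = i := by simpa using h2.symm
        exact ⟨j, Sum.inl_injective h1⟩
      · simp at hp
      · simp at h1
    · rintro ⟨j, rfl⟩
      exact ⟨by simp, Or.inl (Or.inr ⟨i, j, rfl, rfl⟩)⟩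
  have adj_rl : ∀ (i : Fin 4) (p : V), G'.Adj (Sum.inr i) (Sum.inl p) ↔ ∃ j, p = a i j := by
    intro i p
    rw [SimpleGraph.adj_comm]
    exact adj_lr p i
  have adj_rr : ∀ i i' : Fin 4, ¬ G'.Adj (Sum.inr i) (Sum.inr i') := by
    intro i i' h
    rw [hG', SimpleGraph.fromRel_adj] at h
    obtain ⟨-, h | h⟩ := h <;>
      obtain ⟨p, q, hp, hq, hadj⟩ | ⟨i1, j1, h1, h2⟩ := h <;> simp_all
  -- the graph homomorphism `H →g G'`
  let f : H →g G' := ⟨Sum.inl, fun h => (adj_ll _ _).2 h⟩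
  have finj : Function.Injective f := fun x y h => Sum.inl_injective h
  have hfeq : ∀ x : V, f x = Sum.inl x := fun _ => rfl
  have hsup : ∀ {u w : V} (P : H.Walk u w) (i : Fin 4), Sum.inr i ∉ (P.map f).support := by
    intro u w P i hmem
    rw [SimpleGraph.Walk.support_map] at hmem
    obtain ⟨x, -, hx⟩ := List.mem_map.1 hmem
    exact Sum.inl_ne_inr hx
  clear_value G'
  unfold rc
  by_cases hS : {k : ℕ | ∃ c : Sym2 V → ℕ, (∀ e ∈ H.edgeSet, c e < k) ∧
      ∀ u v : V, u ≠ v → ∃ p : H.Walk u v, p.IsPath ∧ (p.edges.map c).Nodup}.Nonempty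
  · -- main case: a good colouring of `H` with `rc H` colours exists
    obtain ⟨c, hc, hcp⟩ := Nat.sInf_mem hS
    set k : ℕ := sInf {k : ℕ | ∃ c : Sym2 V → ℕ, (∀ e ∈ H.edgeSet, c e < k) ∧
      ∀ u v : V, u ≠ v → ∃ p : H.Walk u v, p.IsPath ∧ (p.edges.map c).Nodup} with hk
    clear_value k
    clear hk
    -- rainbow walks in `H` between possibly equal vertices
    have key : ∀ u w : V, ∃ p : H.Walk u w, p.IsPath ∧ (p.edges.map c).Nodup := by
      intro u w
      by_cases h : u = w
      · subst h
        exact ⟨SimpleGraph.Walk.nil, SimpleGraph.Walk.IsPath.nil, List.nodup_nil⟩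
      · exact hcp u w h
    set c₂ : Sym2 (V ⊕ Fin 4) → ℕ := Sym2.lift ⟨gAux a c k, gAux_symm a c k⟩ with hc₂
    clear_value c₂
    have c₂_map : ∀ e : Sym2 V, c₂ (Sym2.map Sum.inl e) = c e := by
      intro e
      induction e using Sym2.ind with
      | _ x y => simp [hc₂, gAux]
    have c₂_lr : ∀ (i : Fin 4) (j : Fin 3),
        c₂ s(Sum.inl (a i j), Sum.inr i) = if a i j = a i 0 then k else k + 1 := by
      intro i j; simp [hc₂, gAux]
    have c₂_rl : ∀ (i : Fin 4) (j : Fin 3),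
        c₂ s(Sum.inr i, Sum.inl (a i j)) = if a i j = a i 0 then k else k + 1 := by
      intro i j; simp [hc₂, gAux]
    have hmapedges : ∀ {u w : V} (P : H.Walk u w), ((P.map f).edges.map c₂) = P.edges.map c := by
      intro u w P
      rw [SimpleGraph.Walk.edges_map, List.map_map]
      exact List.map_congr_left fun e _ => c₂_map e
    have hlt : ∀ {u w : V} (P : H.Walk u w), ∀ x ∈ P.edges.map c, x < k := by
      intro u w P x hx
      obtain ⟨e, he, rfl⟩ := List.mem_map.1 hx
      exact hc e (P.edges_subset_edgeSet he)
    -- rainbow walks from a vertex of `H` to a new vertex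
    have lr_walk : ∀ (u : V) (i : Fin 4), ∃ p : G'.Walk (Sum.inl u) (Sum.inr i),
        p.IsPath ∧ (p.edges.map c₂).Nodup := by
      intro u i
      obtain ⟨P, hP, hPnd⟩ := key u (a i 0)
      have hadj : G'.Adj (Sum.inl (a i 0)) (Sum.inr i) := (adj_lr _ _).2 ⟨0, rfl⟩
      refine ⟨(P.map f).concat hadj, concat_isPath' _ hadj
        (SimpleGraph.Walk.map_isPath_of_injective finj hP) (hsup P i), ?_⟩
      rw [SimpleGraph.Walk.edges_concat, List.concat_eq_append, List.map_append, hmapedges]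
      have hcol : c₂ s(Sum.inl (a i 0), Sum.inr i) = k := by rw [c₂_lr, if_pos rfl]
      rw [List.map_singleton]
      simp only [hfeq]
      rw [hcol]
      exact nodup_helper1 hPnd (hlt P)
    apply le_trans (Nat.sInf_le ?_) (le_refl (k + 2))
    refine ⟨c₂, ?_, ?_⟩
    · -- bound on the colours of edges
      intro e he
      induction e using Sym2.ind with
      | _ x y =>
        rcases x with p | i <;> rcases y with q | i'
        · have h1 : H.Adj p q := (adj_ll p q).1 ((G'.mem_edgeSet).1 he)
          have h2 : c₂ s(Sum.inl p, Sum.inl q) = c s(p, q) := by simp [hc₂, gAux]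
          have h3 := hc _ ((H.mem_edgeSet).2 h1)
          omega
        · have h2 : c₂ s(Sum.inl p, Sum.inr i') = if p = a i' 0 then k else k + 1 := by
            simp [hc₂, gAux]
          rw [h2]; split <;> omega
        · have h2 : c₂ s(Sum.inr i, Sum.inl q) = if q = a i 0 then k else k + 1 := by
            simp [hc₂, gAux]
          rw [h2]; split <;> omega
        · have h2 : c₂ s(Sum.inr i, Sum.inr i') = 0 := by simp [hc₂, gAux]
          omega
    · -- rainbow connectivity of `G'`
      rintro (u | i) (w | i') hne
      · obtain ⟨P, hP, hPnd⟩ := hcp u w (fun h => hne (by rw [h]))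
        exact ⟨P.map f, SimpleGraph.Walk.map_isPath_of_injective finj hP,
          by rw [hmapedges]; exact hPnd⟩
      · exact lr_walk u i'
      · obtain ⟨p, hp, hnd⟩ := lr_walk w i
        exact ⟨p.reverse, hp.reverse, by
          rw [SimpleGraph.Walk.edges_reverse, List.map_reverse, List.nodup_reverse]; exact hnd⟩
      · have hii' : i ≠ i' := fun h => hne (by rw [h])
        obtain ⟨P, hP, hPnd⟩ := key (a i 0) (a i' 1)
        have hadj1 : G'.Adj (Sum.inr i) (Sum.inl (a i 0)) := (adj_rl _ _).2 ⟨0, rfl⟩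
        have hadj2 : G'.Adj (Sum.inl (a i' 1)) (Sum.inr i') := (adj_lr _ _).2 ⟨1, rfl⟩
        have hW0 : ((P.map f).concat hadj2).IsPath := concat_isPath' _ hadj2
          (SimpleGraph.Walk.map_isPath_of_injective finj hP) (hsup P i')
        have hnotin : Sum.inr i ∉ ((P.map f).concat hadj2).support := by
          rw [SimpleGraph.Walk.support_concat]
          intro hmem
          rcases List.mem_append.1 hmem with h' | h'
          · exact hsup P i h'
          · rw [List.mem_singleton] at h'
            exact hii' (by simpa using h')
        refine ⟨SimpleGraph.Walk.cons hadj1 ((P.map f).concat hadj2), hW0.cons hnotin, ?_⟩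
        rw [SimpleGraph.Walk.edges_cons, List.map_cons, SimpleGraph.Walk.edges_concat,
          List.concat_eq_append, List.map_append, hmapedges, List.map_singleton]
        have h1 : c₂ s(Sum.inr i, Sum.inl (a i 0)) = k := by rw [c₂_rl, if_pos rfl]
        have h2 : c₂ s(Sum.inl (a i' 1), Sum.inr i') = k + 1 := by
          rw [c₂_lr, if_neg]
          intro h
          exact absurd (ha i' h) (by decide)
        simp only [hfeq]
        rw [h1, h2]
        exact nodup_helper2 hPnd (hlt P)
  · -- degenerate case: no good colouring of `H` at all
    have hmapedge : ∀ e ∈ H.edgeSet, Sym2.map Sum.inl e ∈ G'.edgeSet := by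
      intro e he
      induction e using Sym2.ind with
      | _ x y =>
        rw [Sym2.map_pair_eq]
        exact (G'.mem_edgeSet).2 ((adj_ll x y).2 ((H.mem_edgeSet).1 he))
    have hS' : ¬ {k : ℕ | ∃ c : Sym2 (V ⊕ Fin 4) → ℕ, (∀ e ∈ G'.edgeSet, c e < k) ∧
        ∀ u v : V ⊕ Fin 4, u ≠ v → ∃ p : G'.Walk u v, p.IsPath ∧
          (p.edges.map c).Nodup}.Nonempty := by
      rintro ⟨k', c', hc', hp'⟩
      apply hS
      -- fixed walks in `H` between the attachment vertices
      set Q : ∀ (i : Fin 4) (j j' : Fin 3), H.Walk (a i j) (a i j') :=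
        fun i j j' => (hH.preconnected (a i j) (a i j')).some with hQ
      set L : List (Sym2 V) := (List.finRange 4).flatMap (fun i => (List.finRange 3).flatMap
        (fun j => (List.finRange 3).flatMap (fun j' => (Q i j j').edges))) with hL
      have hQL : ∀ (i : Fin 4) (j j' : Fin 3) (e : Sym2 V), e ∈ (Q i j j').edges → e ∈ L := by
        intro i j j' e he
        rw [hL]
        rw [List.mem_flatMap]
        refine ⟨i, List.mem_finRange i, ?_⟩
        rw [List.mem_flatMap]
        refine ⟨j, List.mem_finRange j, ?_⟩
        rw [List.mem_flatMap]
        exact ⟨j', List.mem_finRange j', he⟩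
      set c0 : Sym2 V → ℕ :=
        fun e => if e ∈ L then k' + L.idxOf e else c' (Sym2.map Sum.inl e) with hc0
      refine ⟨k' + L.length, c0, ?_, ?_⟩
      · -- colour bound
        intro e he
        rw [hc0]
        by_cases hmem : e ∈ L
        · simp only [if_pos hmem]
          have h1 : L.idxOf e < L.length := List.idxOf_lt_length_iff.2 hmem
          omega
        · simp only [if_neg hmem]
          have h1 : c' (Sym2.map Sum.inl e) < k' := hc' _ (hmapedge e he)
          omega
      · -- rainbow connectivity of `H`
        have conv : ∀ n : ℕ, ∀ (x y : V ⊕ Fin 4) (P : G'.Walk x y) (u v : V),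
            x = Sum.inl u → y = Sum.inl v → P.length ≤ n →
            ∃ W : H.Walk u v, ∀ e ∈ W.edges, e ∈ L ∨ Sym2.map Sum.inl e ∈ P.edges := by
          intro n
          induction n using Nat.strong_induction_on with
          | _ n ih =>
            intro x y P u v hx hy hlen
            cases P with
            | nil =>
              have hx' : (Sum.inl u : V ⊕ Fin 4) = Sum.inl v := by rw [← hx, hy]
              obtain rfl : u = v := Sum.inl_injective hx'
              exact ⟨SimpleGraph.Walk.nil, by simp⟩
            | @cons _ w _ h P' =>
              subst hx
              subst hy
              rcases w with w' | i
              · -- next vertex is in H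
                have hadj : H.Adj u w' := (adj_ll u w').1 h
                have hlen' : P'.length < n := by
                  rw [SimpleGraph.Walk.length_cons] at hlen
                  omega
                obtain ⟨W', hW'⟩ := ih P'.length hlen' _ _ P' w' v rfl rfl le_rfl
                refine ⟨SimpleGraph.Walk.cons hadj W', ?_⟩
                intro e he
                rw [SimpleGraph.Walk.edges_cons] at he
                rcases List.mem_cons.1 he with rfl | he'
                · right
                  rw [SimpleGraph.Walk.edges_cons, Sym2.map_pair_eq]
                  exact List.mem_cons_self
                · rcases hW' e he' with h2 | h2
                  · exact Or.inl h2
                  · right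
                    rw [SimpleGraph.Walk.edges_cons]
                    exact List.mem_cons_of_mem _ h2
              · -- next vertex is a new vertex `xᵢ`; it is followed by a vertex of `H`
                obtain ⟨j, rfl⟩ := (adj_lr u i).1 h
                cases P' with
                | @cons _ z _ h' P'' =>
                  rcases z with w'' | i''
                  · obtain ⟨j', rfl⟩ := (adj_rl i w'').1 h'
                    have hlen'' : P''.length < n := by
                      rw [SimpleGraph.Walk.length_cons, SimpleGraph.Walk.length_cons] at hlen
                      omega
                    obtain ⟨W'', hW''⟩ := ih P''.length hlen'' _ _ P'' (a i j') v rfl rfl le_rfl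
                    refine ⟨(Q i j j').append W'', ?_⟩
                    intro e he
                    rw [SimpleGraph.Walk.edges_append] at he
                    rcases List.mem_append.1 he with h1 | h1
                    · exact Or.inl (hQL i j j' e h1)
                    · rcases hW'' e h1 with h2 | h2
                      · exact Or.inl h2
                      · right
                        rw [SimpleGraph.Walk.edges_cons, SimpleGraph.Walk.edges_cons]
                        exact List.mem_cons_of_mem _ (List.mem_cons_of_mem _ h2)
                  · exact absurd h' (adj_rr i i'')
        intro u v huv
        obtain ⟨P, hP, hPnd⟩ := hp' (Sum.inl u) (Sum.inl v)
          (fun h => huv (Sum.inl_injective h))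
        obtain ⟨W, hW⟩ := conv P.length _ _ P u v rfl rfl le_rfl
        refine ⟨W.bypass, W.bypass_isPath, ?_⟩
        apply List.Nodup.map_on ?_ W.bypass_isPath.isTrail.edges_nodup
        intro e1 he1 e2 he2 hcc
        have hm1 := hW e1 (W.edges_bypass_subset he1)
        have hm2 := hW e2 (W.edges_bypass_subset he2)
        simp only [hc0] at hcc
        by_cases h1 : e1 ∈ L <;> by_cases h2 : e2 ∈ L
        · rw [if_pos h1, if_pos h2] at hcc
          exact (List.idxOf_inj h1).1 (by omega)
        · exfalso
          rw [if_pos h1, if_neg h2] at hcc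
          have hb : c' (Sym2.map Sum.inl e2) < k' :=
            hc' _ (P.edges_subset_edgeSet (hm2.resolve_left h2))
          omega
        · exfalso
          rw [if_neg h1, if_pos h2] at hcc
          have hb : c' (Sym2.map Sum.inl e1) < k' :=
            hc' _ (P.edges_subset_edgeSet (hm1.resolve_left h1))
          omega
        · rw [if_neg h1, if_neg h2] at hcc
          have := List.inj_on_of_nodup_map hPnd (hm1.resolve_left h1)
            (hm2.resolve_left h2) hcc
          exact Sym2.map.injective Sum.inl_injective this
    rw [Set.not_nonempty_iff_eq_empty] at hS'
    rw [hS', Nat.sInf_empty]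
    exact Nat.zero_le _
end

section
/- Let G be a connected simple graph on n vertices and let H be a connected subgraph of G on n − 1 vertices, so that exactly one vertex x of G lies outside H and x has at least one neighbour in H. Then rc(G) ≤ rc(H) + 1. -/
open SimpleGraph

/-- If `G` is connected on `n` vertices and `H` is a connected subgraph on `n - 1`
vertices, so that exactly one vertex `x` of `G` lies outside `H`, and `x` has at least one
neighbour in `H`, then `rc(G) ≤ rc(H) + 1`. -/
theorem rc_le_rc_subgraph_add_one {V : Type*} [Fintype V] (G : SimpleGraph V)
    (hG : G.Connected) (H : G.Subgraph) (hHconn : H.Connected) (x : V)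
    (hverts : H.verts = {x}ᶜ) (hnbr : ∃ y ∈ H.verts, G.Adj x y) :
    rc G ≤ rc H.coe + 1 := by
  classical
  obtain ⟨y₀, hy₀mem, hxy₀⟩ := hnbr
  have hHc : H.coe.Connected := hHconn
  -- the defining set for `rc H.coe` is nonempty
  have hne : {k : ℕ | ∃ c : Sym2 ↥H.verts → ℕ, (∀ e ∈ H.coe.edgeSet, c e < k) ∧
      ∀ u v : ↥H.verts, u ≠ v → ∃ p : H.coe.Walk u v,
        p.IsPath ∧ (p.edges.map c).Nodup}.Nonempty := by
    obtain ⟨f, hf⟩ := exists_injective_nat (Sym2 ↥H.verts)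
    refine ⟨(Finset.univ.image f).sup id + 1, f, ?_, ?_⟩
    · intro e _
      have : f e ≤ (Finset.univ.image f).sup id :=
        Finset.le_sup (f := id) (Finset.mem_image_of_mem f (Finset.mem_univ e))
      omega
    · intro u v huv
      obtain ⟨p, hp, -⟩ := Reachable.exists_path_of_dist (hHc.preconnected u v)
      exact ⟨p, hp, hp.edges_nodup.map hf⟩
  set k := rc H.coe with hk
  have hkmem := Nat.sInf_mem hne
  obtain ⟨c, hc1, hc2⟩ := hkmem
  -- helper: rainbow paths in `H.coe` also between equal endpoints
  have hpath : ∀ a b : ↥H.verts, ∃ p : H.coe.Walk a b,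
      p.IsPath ∧ (p.edges.map c).Nodup := by
    intro a b
    by_cases hab : a = b
    · subst hab; exact ⟨Walk.nil, Walk.IsPath.nil, List.nodup_nil⟩
    · exact hc2 a b hab
  -- the lifting map
  have hmem : ∀ v : V, v ≠ x → v ∈ H.verts := by
    intro v hv; rw [hverts]; exact hv
  have hnex : ∀ a : ↥H.verts, (a : V) ≠ x := by
    intro a; exact (Set.ext_iff.mp hverts (a : V)).mp a.2
  let g : V → ↥H.verts := fun v => if h : v = x then ⟨y₀, hy₀mem⟩ else ⟨v, hmem v h⟩
  -- the new colouring
  let c' : Sym2 V → ℕ := fun e => if e ∈ H.edgeSet then c (Sym2.map g e) else k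
  -- lifting lemma
  have hlift : ∀ e ∈ H.coe.edgeSet, c' (Sym2.map Subtype.val e) = c e := by
    intro e he
    induction e with
    | _ a b =>
      have hadj : H.coe.Adj a b := he
      have hH : s((a : V), (b : V)) ∈ H.edgeSet := Subgraph.mem_edgeSet.2 hadj
      have hga : g (a : V) = a := by
        simp only [g, dif_neg (hnex a)]
      have hgb : g (b : V) = b := by
        simp only [g, dif_neg (hnex b)]
      simp only [c', Sym2.map_pair_eq, if_pos hH, hga, hgb]
  have hbound : ∀ e ∈ G.edgeSet, c' e < k + 1 := by
    intro e he
    by_cases hH : e ∈ H.edgeSet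
    · induction e with
      | _ a b =>
        have hadj : H.Adj a b := Subgraph.mem_edgeSet.1 hH
        have hca : H.coe.Adj ⟨a, H.edge_vert hadj⟩ ⟨b, H.edge_vert hadj.symm⟩ := hadj
        have := hlift _ ((H.coe.mem_edgeSet).mpr hca)
        simp only [Sym2.map_pair_eq] at this
        calc c' s(a, b) = c s(⟨a, H.edge_vert hadj⟩, ⟨b, H.edge_vert hadj.symm⟩) := this
          _ < k := hc1 _ hca
          _ < k + 1 := Nat.lt_succ_self k
    · simp only [c', if_neg hH]; omega
  -- edges incident to x get colour k
  have hxcol : ∀ v : V, c' s(x, v) = k := by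
    intro v
    have : s(x, v) ∉ H.edgeSet := by
      intro h
      have := H.edge_vert (Subgraph.mem_edgeSet.1 h)
      rw [hverts] at this
      exact this rfl
    simp only [c', if_neg this]
  -- colours on lifted walks
  have hwalkcol : ∀ (a b : ↥H.verts) (p : H.coe.Walk a b),
      ((p.map H.hom).edges.map c') = p.edges.map c := by
    intro a b p
    rw [Walk.edges_map, List.map_map]
    refine List.map_congr_left fun e he => ?_
    exact hlift e (p.edges_subset_edgeSet he)
  have hmaplt : ∀ (a b : ↥H.verts) (p : H.coe.Walk a b), ∀ n ∈ p.edges.map c, n < k := by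
    intro a b p n hn
    obtain ⟨e, he, rfl⟩ := List.mem_map.1 hn
    exact hc1 e (p.edges_subset_edgeSet he)
  have hinj : Function.Injective (H.hom : ↥H.verts → V) := Subtype.val_injective
  -- rainbow walks from x
  have key : ∀ u : V, u ≠ x → ∃ q : G.Walk x u, q.IsPath ∧ (q.edges.map c').Nodup := by
    intro u hu
    obtain ⟨p, hp, hpc⟩ := hpath ⟨y₀, hy₀mem⟩ ⟨u, hmem u hu⟩
    refine ⟨Walk.cons hxy₀ (p.map H.hom), ?_, ?_⟩
    · erw [Walk.cons_isPath_iff]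
      refine ⟨Walk.map_isPath_of_injective hinj hp, ?_⟩
      erw [Walk.support_map]
      intro hx
      obtain ⟨a, _, ha⟩ := List.mem_map.1 hx
      exact hnex a ha
    · erw [Walk.edges_cons, List.map_cons, hxcol, hwalkcol]
      rw [List.nodup_cons]
      refine ⟨fun h => ?_, hpc⟩
      exact absurd (hmaplt _ _ p k h) (lt_irrefl k)
  -- conclude
  refine le_trans (Nat.sInf_le ?_) le_rfl
  refine ⟨c', hbound, ?_⟩
  intro u v huv
  by_cases hu : u = x
  · subst hu
    exact key v (fun h => huv h.symm)
  · by_cases hv : v = x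
    · subst hv
      obtain ⟨q, hq, hqc⟩ := key u hu
      exact ⟨q.reverse, hq.reverse, by rwa [Walk.edges_reverse, List.map_reverse,
        List.nodup_reverse]⟩
    · obtain ⟨p, hp, hpc⟩ := hc2 ⟨u, hmem u hu⟩ ⟨v, hmem v hv⟩ (fun h => huv (congrArg Subtype.val h))
      exact ⟨p.map H.hom, Walk.map_isPath_of_injective hinj hp, by erw [hwalkcol]; exact hpc⟩
end

section
/- Let H be a connected graph with distinct vertices a, b, c, and let H' be obtained from H by adding four new vertices x, u_1, v_1, x_1 together with the edges a u_1, u_1 x, x v_1, v_1 b, x x_1, and x_1 c (and no other new edges). Then rc(H') ≤ rc(H) + 2. -/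
open SimpleGraph

namespace RCWork

variable {V : Type*}

def gRel (H : SimpleGraph V) (a b c : V) : (V ⊕ Fin 4) → (V ⊕ Fin 4) → Prop := fun u v =>
  (∃ p q, u = Sum.inl p ∧ v = Sum.inl q ∧ H.Adj p q) ∨
  (u = Sum.inl a ∧ v = Sum.inr 1) ∨
  (u = Sum.inr 1 ∧ v = Sum.inr 0) ∨
  (u = Sum.inr 0 ∧ v = Sum.inr 2) ∨
  (u = Sum.inr 2 ∧ v = Sum.inl b) ∨
  (u = Sum.inr 0 ∧ v = Sum.inr 3) ∨
  (u = Sum.inr 3 ∧ v = Sum.inl c)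

abbrev GE (H : SimpleGraph V) (a b c : V) : SimpleGraph (V ⊕ Fin 4) := fromRel (gRel H a b c)

variable (H : SimpleGraph V) (a b c : V)

lemma adj_inl_inl {p q : V} : (GE H a b c).Adj (Sum.inl p) (Sum.inl q) ↔ H.Adj p q := by
  rw [fromRel_adj]
  constructor
  · rintro ⟨-, h | h⟩ <;>
      rcases h with ⟨p', q', hp, hq, hadj⟩ | ⟨h1, h2⟩ | ⟨h1, h2⟩ | ⟨h1, h2⟩ | ⟨h1, h2⟩ | ⟨h1, h2⟩ | ⟨h1, h2⟩ <;>
      simp_all [gRel]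
    exact hadj.symm
  · intro h
    exact ⟨by simp [h.ne], Or.inl (Or.inl ⟨p, q, rfl, rfl, h⟩)⟩

lemma adj_e1 : (GE H a b c).Adj (Sum.inl a) (Sum.inr 1) :=
  (fromRel_adj _ _ _).2 ⟨by simp, Or.inl (by simp [gRel])⟩

lemma adj_e2 : (GE H a b c).Adj (Sum.inr 1) (Sum.inr 0) :=
  (fromRel_adj _ _ _).2 ⟨by simp, Or.inl (by simp [gRel])⟩

lemma adj_e3 : (GE H a b c).Adj (Sum.inr 0) (Sum.inr 2) :=
  (fromRel_adj _ _ _).2 ⟨by simp, Or.inl (by simp [gRel])⟩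

lemma adj_e4 : (GE H a b c).Adj (Sum.inr 2) (Sum.inl b) :=
  (fromRel_adj _ _ _).2 ⟨by simp, Or.inl (by simp [gRel])⟩

lemma adj_e5 : (GE H a b c).Adj (Sum.inr 0) (Sum.inr 3) :=
  (fromRel_adj _ _ _).2 ⟨by simp, Or.inl (by simp [gRel])⟩

lemma adj_e6 : (GE H a b c).Adj (Sum.inr 3) (Sum.inl c) :=
  (fromRel_adj _ _ _).2 ⟨by simp, Or.inl (by simp [gRel])⟩

lemma adj_inl_inr {u : V} {g : Fin 4} (h : (GE H a b c).Adj (Sum.inl u) (Sum.inr g)) :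
    u = a ∨ u = b ∨ u = c := by
  rw [fromRel_adj] at h
  rcases h with ⟨-, h | h⟩ <;>
    rcases h with ⟨p', q', hp, hq, hadj⟩ | ⟨h1, h2⟩ | ⟨h1, h2⟩ | ⟨h1, h2⟩ | ⟨h1, h2⟩ | ⟨h1, h2⟩ | ⟨h1, h2⟩ <;>
    simp_all [gRel]


def colF (cH : Sym2 V → ℕ) (k : ℕ) : (V ⊕ Fin 4) → (V ⊕ Fin 4) → ℕ
  | Sum.inl p, Sum.inl q => cH s(p, q)
  | Sum.inl _, Sum.inr i => if i = 1 then k else k + 1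
  | Sum.inr i, Sum.inl _ => if i = 1 then k else k + 1
  | Sum.inr i, Sum.inr j => if i = 2 ∨ j = 2 then k else k + 1

lemma colF_symm (cH : Sym2 V → ℕ) (k : ℕ) :
    ∀ u v, colF cH k u v = colF cH k v u := by
  rintro (p | i) (q | j) <;> simp only [colF]
  · rw [Sym2.eq_swap]
  · simp only [or_comm]

def colE (cH : Sym2 V → ℕ) (k : ℕ) : Sym2 (V ⊕ Fin 4) → ℕ :=
  Sym2.lift ⟨colF cH k, colF_symm cH k⟩

@[simp] lemma colE_mk (cH : Sym2 V → ℕ) (k : ℕ) (u v : V ⊕ Fin 4) :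
    colE cH k s(u, v) = colF cH k u v := Sym2.lift_mk _ _ _

lemma colE_map_inl (cH : Sym2 V → ℕ) (k : ℕ) (e : Sym2 V) :
    colE cH k (Sym2.map Sum.inl e) = cH e := by
  induction e using Sym2.ind with
  | _ x y => rw [Sym2.map_pair_eq, colE_mk]; rfl

def ι : H →g GE H a b c where
  toFun := Sum.inl
  map_rel' := fun h => (adj_inl_inl H a b c).2 h

@[simp] lemma ι_apply (x : V) : ι H a b c x = Sum.inl x := rfl

lemma colE_lt {cH : Sym2 V → ℕ} {k : ℕ} (hlt : ∀ e ∈ H.edgeSet, cH e < k) :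
    ∀ e ∈ (GE H a b c).edgeSet, colE cH k e < k + 2 := by
  intro e
  induction e using Sym2.ind with
  | _ u v =>
    intro he
    rw [mem_edgeSet] at he
    rcases u with p | i <;> rcases v with q | j <;> rw [colE_mk]
    · have h2 : H.Adj p q := (adj_inl_inl H a b c).1 he
      have := hlt _ (H.mem_edgeSet.2 h2)
      simpa [colF] using by omega
    · simp only [colF]; split_ifs <;> omega
    · simp only [colF]; split_ifs <;> omega
    · simp only [colF]; split_ifs <;> omega

lemma lift_exists {cH : Sym2 V → ℕ} {k : ℕ}
    (hlt : ∀ e ∈ H.edgeSet, cH e < k)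
    (hrb : ∀ u v : V, u ≠ v → ∃ p : H.Walk u v, p.IsPath ∧ (p.edges.map cH).Nodup)
    (s w : V) :
    ∃ p : (GE H a b c).Walk (Sum.inl s) (Sum.inl w), p.IsPath ∧
      (∀ x ∈ p.support, ∃ y, x = Sum.inl y) ∧
      (p.edges.map (colE cH k)).Nodup ∧
      (∀ n ∈ p.edges.map (colE cH k), n < k) := by
  rcases eq_or_ne s w with rfl | hne
  · exact ⟨Walk.nil, by simp⟩
  · obtain ⟨p, hp, hnd⟩ := hrb s w hne
    have hmapeq : (p.map (ι H a b c)).edges.map (colE cH k) = p.edges.map cH := by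
      rw [Walk.edges_map, List.map_map]
      refine List.map_congr_left fun e _ => ?_
      exact colE_map_inl cH k e
    refine ⟨p.map (ι H a b c), Walk.map_isPath_of_injective Sum.inl_injective hp, ?_, ?_, ?_⟩
    · intro x hx
      erw [Walk.support_map] at hx
      obtain ⟨y, -, rfl⟩ := List.mem_map.1 hx
      exact ⟨y, rfl⟩
    · erw [hmapeq]; exact hnd
    · erw [hmapeq]
      intro n hn
      obtain ⟨e, he, rfl⟩ := List.mem_map.1 hn
      exact hlt _ (p.edges_subset_edgeSet he)

def Pair (G : SimpleGraph (V ⊕ Fin 4)) (col : Sym2 (V ⊕ Fin 4) → ℕ)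
    (u v : V ⊕ Fin 4) : Prop :=
  ∃ p : G.Walk u v, p.IsPath ∧ (p.edges.map col).Nodup

lemma Pair.symm {G : SimpleGraph (V ⊕ Fin 4)} {col : Sym2 (V ⊕ Fin 4) → ℕ}
    {u v : V ⊕ Fin 4} (h : Pair G col u v) : Pair G col v u := by
  obtain ⟨p, hp, hnd⟩ := h
  exact ⟨p.reverse, hp.reverse, by
    rw [Walk.edges_reverse, List.map_reverse]
    exact List.nodup_reverse.2 hnd⟩


lemma case1_pairs (hab : a ≠ b) (hac : a ≠ c) (hbc : b ≠ c) {cH : Sym2 V → ℕ} {k : ℕ}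
    (hlt : ∀ e ∈ H.edgeSet, cH e < k)
    (hrb : ∀ u v : V, u ≠ v → ∃ p : H.Walk u v, p.IsPath ∧ (p.edges.map cH).Nodup) :
    ∀ u v : V ⊕ Fin 4, u ≠ v → Pair (GE H a b c) (colE cH k) u v := by
  have LR := lift_exists H a b c hlt hrb
  -- from a gadget vertex adjacent to `s : V` via one edge of colour `m ∈ {k, k+1}`
  have gadget_to_V : ∀ (g : V ⊕ Fin 4) (s : V) (hadj : (GE H a b c).Adj g (Sum.inl s))
      (hg : ∀ y : V, g ≠ Sum.inl y) (hcol : colE cH k s(g, Sum.inl s) ≥ k),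
      ∀ w : V, Pair (GE H a b c) (colE cH k) g (Sum.inl w) := by
    intro g s hadj hg hcol w
    obtain ⟨p, hp, hsupp, hnd, hbd⟩ := LR s w
    refine ⟨Walk.cons hadj p, ?_, ?_⟩
    · rw [Walk.cons_isPath_iff]
      refine ⟨hp, fun hmem => ?_⟩
      obtain ⟨y, hy⟩ := hsupp _ hmem
      exact hg y hy
    · rw [Walk.edges_cons, List.map_cons, List.nodup_cons]
      refine ⟨fun hmem => ?_, hnd⟩
      have := hbd _ hmem
      omega
  have PB : ∀ w : V, Pair (GE H a b c) (colE cH k) (Sum.inr 1) (Sum.inl w) := by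
    intro w
    refine gadget_to_V (Sum.inr 1) a (adj_e1 H a b c).symm (by simp) ?_ w
    simp [colF]
  have PC : ∀ w : V, Pair (GE H a b c) (colE cH k) (Sum.inr 2) (Sum.inl w) := by
    intro w
    refine gadget_to_V (Sum.inr 2) b (adj_e4 H a b c) (by simp) ?_ w
    simp [colF]
  have PD : ∀ w : V, Pair (GE H a b c) (colE cH k) (Sum.inr 3) (Sum.inl w) := by
    intro w
    refine gadget_to_V (Sum.inr 3) c (adj_e6 H a b c) (by simp) ?_ w
    simp [colF]
  have PE : ∀ w : V, Pair (GE H a b c) (colE cH k) (Sum.inr 0) (Sum.inl w) := by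
    intro w
    obtain ⟨p, hp, hsupp, hnd, hbd⟩ := LR a w
    refine ⟨Walk.cons (adj_e2 H a b c).symm (Walk.cons (adj_e1 H a b c).symm p), ?_, ?_⟩
    · rw [Walk.cons_isPath_iff, Walk.cons_isPath_iff]
      refine ⟨⟨hp, fun hmem => ?_⟩, fun hmem => ?_⟩
      · obtain ⟨y, hy⟩ := hsupp _ hmem; simp at hy
      · rw [Walk.support_cons] at hmem
        rcases List.mem_cons.1 hmem with h | h
        · simp at h
        · obtain ⟨y, hy⟩ := hsupp _ h; simp at hy
    · rw [Walk.edges_cons, Walk.edges_cons, List.map_cons, List.map_cons,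
        List.nodup_cons, List.nodup_cons]
      have hv1 : colE cH k s((Sum.inr 0 : V ⊕ Fin 4), Sum.inr 1) = k + 1 := by simp [colF]
      have hv2 : colE cH k s((Sum.inr 1 : V ⊕ Fin 4), Sum.inl a) = k := by simp [colF]
      rw [hv1, hv2]
      refine ⟨?_, fun hmem => ?_, hnd⟩
      · intro hmem
        rcases List.mem_cons.1 hmem with h | h
        · omega
        · have := hbd _ h; omega
      · have := hbd _ hmem; omega
  -- single-edge pairs from x = inr 0
  have single : ∀ (u v : V ⊕ Fin 4), (GE H a b c).Adj u v →
      Pair (GE H a b c) (colE cH k) u v := by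
    intro u v hadj
    refine ⟨Walk.cons hadj Walk.nil, ?_, by simp⟩
    rw [Walk.cons_isPath_iff]
    exact ⟨Walk.IsPath.nil, by simp [hadj.ne]⟩
  -- through-H pairs between two gadget vertices
  have through : ∀ (g g' : V ⊕ Fin 4) (s t : V)
      (h1 : (GE H a b c).Adj g (Sum.inl s)) (h2 : (GE H a b c).Adj (Sum.inl t) g')
      (hg : ∀ y : V, g ≠ Sum.inl y) (hg' : ∀ y : V, g' ≠ Sum.inl y)
      (hgg' : g ≠ g')
      (hc1 : colE cH k s(g, Sum.inl s) = k) (hc2 : colE cH k s(Sum.inl t, g') = k + 1),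
      Pair (GE H a b c) (colE cH k) g g' := by
    intro g g' s t h1 h2 hg hg' hgg' hc1 hc2
    obtain ⟨p, hp, hsupp, hnd, hbd⟩ := LR s t
    refine ⟨Walk.cons h1 (p.append (Walk.cons h2 Walk.nil)), ?_, ?_⟩
    · rw [Walk.isPath_def, Walk.support_cons, Walk.support_append, Walk.support_cons,
        Walk.support_nil, List.tail_cons]
      rw [List.nodup_cons, List.nodup_append]
      refine ⟨?_, (Walk.isPath_def _).1 hp, List.nodup_singleton _, ?_⟩
      · intro hmem
        rcases List.mem_append.1 hmem with h | h
        · obtain ⟨y, hy⟩ := hsupp _ h; exact hg y hy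
        · rw [List.mem_singleton] at h; exact hgg' h
      · intro x hx y hx' hxy
        rw [List.mem_singleton] at hx'
        subst hx'; subst hxy
        obtain ⟨y, hy⟩ := hsupp _ hx
        exact hg' y hy
    · rw [Walk.edges_cons, Walk.edges_append, Walk.edges_cons, Walk.edges_nil,
        List.map_cons, List.map_append, List.map_cons, List.map_nil, List.nodup_cons,
        hc1, hc2]
      constructor
      · intro hmem
        rcases List.mem_append.1 hmem with h | h
        · have := hbd _ h; omega
        · rw [List.mem_singleton] at h; omega
      · refine List.Nodup.append hnd (List.nodup_singleton _) ?_
        intro x hx hx'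
        rw [List.mem_singleton] at hx'
        subst hx'
        have := hbd _ hx
        omega
  have PG : Pair (GE H a b c) (colE cH k) (Sum.inr 1) (Sum.inr 2) := by
    refine through (Sum.inr 1) (Sum.inr 2) a b (adj_e1 H a b c).symm (adj_e4 H a b c).symm
      (by simp) (by simp) (by simp) ?_ ?_ <;> simp [colF]
  have PH : Pair (GE H a b c) (colE cH k) (Sum.inr 1) (Sum.inr 3) := by
    refine through (Sum.inr 1) (Sum.inr 3) a c (adj_e1 H a b c).symm (adj_e6 H a b c).symm
      (by simp) (by simp) (by simp) ?_ ?_ <;> simp [colF]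
  have PI : Pair (GE H a b c) (colE cH k) (Sum.inr 2) (Sum.inr 3) := by
    refine ⟨Walk.cons (adj_e3 H a b c).symm (Walk.cons (adj_e5 H a b c) Walk.nil), ?_, ?_⟩
    · rw [Walk.isPath_def]
      simp [Walk.support_cons]
    · rw [Walk.edges_cons, Walk.edges_cons, Walk.edges_nil, List.map_cons, List.map_cons,
        List.map_nil]
      have hv1 : colE cH k s((Sum.inr 2 : V ⊕ Fin 4), Sum.inr 0) = k := by simp [colF]
      have hv2 : colE cH k s((Sum.inr 0 : V ⊕ Fin 4), Sum.inr 3) = k + 1 := by simp [colF]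
      rw [hv1, hv2]
      simp
  have PA : ∀ u v : V, Pair (GE H a b c) (colE cH k) (Sum.inl u) (Sum.inl v) := by
    intro u v
    obtain ⟨p, hp, -, hnd, -⟩ := LR u v
    exact ⟨p, hp, hnd⟩
  rintro (u | i) (v | j) huv
  · exact PA u v
  · fin_cases j
    · exact (PE u).symm
    · exact (PB u).symm
    · exact (PC u).symm
    · exact (PD u).symm
  · fin_cases i
    · exact PE v
    · exact PB v
    · exact PC v
    · exact PD v
  · fin_cases i <;> fin_cases j
    · exact absurd rfl huv
    · exact single _ _ (adj_e2 H a b c).symm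
    · exact single _ _ (adj_e3 H a b c)
    · exact single _ _ (adj_e5 H a b c)
    · exact single _ _ (adj_e2 H a b c)
    · exact absurd rfl huv
    · exact PG
    · exact PH
    · exact single _ _ (adj_e3 H a b c).symm
    · exact PG.symm
    · exact absurd rfl huv
    · exact PI
    · exact single _ _ (adj_e5 H a b c).symm
    · exact PH.symm
    · exact PI.symm
    · exact absurd rfl huv


lemma connector (wb : H.Walk a b) (wc : H.Walk a c) {s t : V}
    (hs : s = a ∨ s = b ∨ s = c) (ht : t = a ∨ t = b ∨ t = c) :
    ∃ q : H.Walk s t, ∀ e ∈ q.edges, e ∈ wb.edges ++ wc.edges := by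
  have base : ∀ x, (x = a ∨ x = b ∨ x = c) →
      ∃ q : H.Walk a x, ∀ e ∈ q.edges, e ∈ wb.edges ++ wc.edges := by
    rintro x (rfl | rfl | rfl)
    · exact ⟨Walk.nil, by simp⟩
    · exact ⟨wb, fun e he => List.mem_append.2 (Or.inl he)⟩
    · exact ⟨wc, fun e he => List.mem_append.2 (Or.inr he)⟩
  obtain ⟨q1, h1⟩ := base s hs
  obtain ⟨q2, h2⟩ := base t ht
  refine ⟨q1.reverse.append q2, fun e he => ?_⟩
  rw [Walk.edges_append] at he
  rcases List.mem_append.1 he with he | he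
  · rw [Walk.edges_reverse, List.mem_reverse] at he
    exact h1 _ he
  · exact h2 _ he

lemma struct (wb : H.Walk a b) (wc : H.Walk a c) :
    ∀ (s z : V ⊕ Fin 4) (w : (GE H a b c).Walk s z) (v : V), z = Sum.inl v →
      (∀ u, s = Sum.inl u → ∃ Wh : H.Walk u v, ∀ e ∈ Wh.edges,
          Sym2.map Sum.inl e ∈ w.edges ∨ e ∈ wb.edges ++ wc.edges) ∧
      (∀ g : Fin 4, s = Sum.inr g → ∃ t, (t = a ∨ t = b ∨ t = c) ∧ ∃ Wh : H.Walk t v,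
          ∀ e ∈ Wh.edges, Sym2.map Sum.inl e ∈ w.edges ∨ e ∈ wb.edges ++ wc.edges) := by
  intro s z w
  induction w with
  | nil =>
    rintro v rfl
    constructor
    · rintro u hu
      obtain rfl : v = u := Sum.inl.inj hu
      exact ⟨Walk.nil, by simp⟩
    · rintro g hg
      simp at hg
  | @cons s m z hadj p ih =>
    rintro v rfl
    obtain ⟨ih1, ih2⟩ := ih v rfl
    constructor
    · rintro u rfl
      rcases m with q | g
      · obtain ⟨Wh', hWh'⟩ := ih1 q rfl
        refine ⟨Walk.cons ((adj_inl_inl H a b c).1 hadj) Wh', fun e he => ?_⟩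
        rw [Walk.edges_cons, List.mem_cons] at he
        rcases he with rfl | he
        · left
          rw [Walk.edges_cons, Sym2.map_pair_eq]
          exact List.mem_cons_self
        · rcases hWh' e he with h | h
          · left; rw [Walk.edges_cons]; exact List.mem_cons_of_mem _ h
          · right; exact h
      · have hu : u = a ∨ u = b ∨ u = c := adj_inl_inr H a b c hadj
        obtain ⟨t, ht, Wh', hWh'⟩ := ih2 g rfl
        obtain ⟨q, hq⟩ := connector H a b c wb wc hu ht
        refine ⟨q.append Wh', fun e he => ?_⟩
        rw [Walk.edges_append, List.mem_append] at he
        rcases he with he | he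
        · right; exact hq _ he
        · rcases hWh' e he with h | h
          · left; rw [Walk.edges_cons]; exact List.mem_cons_of_mem _ h
          · right; exact h
    · rintro g rfl
      rcases m with q | g'
      · have hq : q = a ∨ q = b ∨ q = c := adj_inl_inr H a b c hadj.symm
        obtain ⟨Wh', hWh'⟩ := ih1 q rfl
        refine ⟨q, hq, Wh', fun e he => ?_⟩
        rcases hWh' e he with h | h
        · left; rw [Walk.edges_cons]; exact List.mem_cons_of_mem _ h
        · right; exact h
      · obtain ⟨t, ht, Wh', hWh'⟩ := ih2 g' rfl
        refine ⟨t, ht, Wh', fun e he => ?_⟩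
        rcases hWh' e he with h | h
        · left; rw [Walk.edges_cons]; exact List.mem_cons_of_mem _ h
        · right; exact h

lemma map_inl_mem_edgeSet {e : Sym2 V} (he : e ∈ H.edgeSet) :
    Sym2.map Sum.inl e ∈ (GE H a b c).edgeSet := by
  induction e using Sym2.ind with
  | _ x y =>
    rw [Sym2.map_pair_eq, mem_edgeSet]
    exact (adj_inl_inl H a b c).2 (H.mem_edgeSet.1 he)

lemma case2 (hH : H.Connected) {k' : ℕ} {c' : Sym2 (V ⊕ Fin 4) → ℕ}
    (hlt : ∀ e ∈ (GE H a b c).edgeSet, c' e < k')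
    (hrb : ∀ u v : V ⊕ Fin 4, u ≠ v →
      ∃ p : (GE H a b c).Walk u v, p.IsPath ∧ (p.edges.map c').Nodup) :
    ∃ K, ∃ cH : Sym2 V → ℕ, (∀ e ∈ H.edgeSet, cH e < K) ∧
      ∀ u v : V, u ≠ v → ∃ p : H.Walk u v, p.IsPath ∧ (p.edges.map cH).Nodup := by
  classical
  obtain ⟨wb⟩ := hH.preconnected a b
  obtain ⟨wc⟩ := hH.preconnected a c
  set QE : List (Sym2 V) := wb.edges ++ wc.edges with hQE
  set cH : Sym2 V → ℕ :=
    fun e => if e ∈ QE then k' + QE.idxOf e else c' (Sym2.map Sum.inl e) with hcH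
  refine ⟨k' + QE.length, cH, ?_, ?_⟩
  · intro e he
    by_cases hq : e ∈ QE
    · rw [hcH]
      simp only [hq, if_true]
      exact Nat.add_lt_add_left (List.idxOf_lt_length_iff.2 hq) _
    · rw [hcH]
      simp only [hq, if_false]
      have := hlt _ (map_inl_mem_edgeSet H a b c he)
      omega
  · intro u v huv
    obtain ⟨W, hW, hWnd⟩ := hrb (Sum.inl u) (Sum.inl v) (by simpa using huv)
    obtain ⟨Wh, hWh⟩ := (struct H a b c wb wc _ _ W v rfl).1 u rfl
    refine ⟨Wh.bypass, Walk.bypass_isPath _, ?_⟩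
    refine List.Nodup.map_on ?_ (Walk.bypass_isPath Wh).edges_nodup
    intro e1 he1 e2 he2 hcol
    have hm1 := hWh e1 (Wh.edges_bypass_subset he1)
    have hm2 := hWh e2 (Wh.edges_bypass_subset he2)
    by_cases hq1 : e1 ∈ QE <;> by_cases hq2 : e2 ∈ QE
    · rw [hcH] at hcol
      simp only [hq1, hq2, if_true] at hcol
      exact (List.idxOf_inj hq1).1 (by omega)
    · exfalso
      have hen : Sym2.map Sum.inl e2 ∈ W.edges := by tauto
      have hlt2 := hlt _ (W.edges_subset_edgeSet hen)
      rw [hcH] at hcol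
      simp only [hq1, hq2, if_true, if_false] at hcol
      omega
    · exfalso
      have hen : Sym2.map Sum.inl e1 ∈ W.edges := by tauto
      have hlt1 := hlt _ (W.edges_subset_edgeSet hen)
      rw [hcH] at hcol
      simp only [hq1, hq2, if_true, if_false] at hcol
      omega
    · have hen1 : Sym2.map Sum.inl e1 ∈ W.edges := by tauto
      have hen2 : Sym2.map Sum.inl e2 ∈ W.edges := by tauto
      rw [hcH] at hcol
      simp only [hq1, hq2, if_false] at hcol
      have := List.inj_on_of_nodup_map hWnd hen1 hen2 hcol
      exact Sym2.map.injective Sum.inl_injective this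

end RCWork


/-- Let `H` be connected with distinct vertices `a, b, c`.  Add four new vertices
`x = Sum.inr 0`, `u₁ = Sum.inr 1`, `v₁ = Sum.inr 2`, `x₁ = Sum.inr 3` together with the
edges `a u₁, u₁ x, x v₁, v₁ b, x x₁, x₁ c` (and no other new edges).  Then
`rc(H') ≤ rc(H) + 2`. -/
theorem rc_case1_path_through {V : Type*} (H : SimpleGraph V) (hH : H.Connected)
    (a b c : V) (hab : a ≠ b) (hac : a ≠ c) (hbc : b ≠ c) :
    rc (SimpleGraph.fromRel (fun u v : V ⊕ Fin 4 =>
        (∃ p q, u = Sum.inl p ∧ v = Sum.inl q ∧ H.Adj p q) ∨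
        (u = Sum.inl a ∧ v = Sum.inr 1) ∨
        (u = Sum.inr 1 ∧ v = Sum.inr 0) ∨
        (u = Sum.inr 0 ∧ v = Sum.inr 2) ∨
        (u = Sum.inr 2 ∧ v = Sum.inl b) ∨
        (u = Sum.inr 0 ∧ v = Sum.inr 3) ∨
        (u = Sum.inr 3 ∧ v = Sum.inl c))) ≤ rc H + 2 := by
  show rc (RCWork.GE H a b c) ≤ rc H + 2
  by_cases hS : {k : ℕ | ∃ cH : Sym2 V → ℕ, (∀ e ∈ H.edgeSet, cH e < k) ∧
      ∀ u v : V, u ≠ v → ∃ p : H.Walk u v, p.IsPath ∧ (p.edges.map cH).Nodup}.Nonempty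
  · obtain ⟨cH, hlt, hrb⟩ := Nat.sInf_mem hS
    refine Nat.sInf_le ?_
    refine ⟨RCWork.colE cH (rc H), RCWork.colE_lt H a b c hlt, ?_⟩
    intro u v huv
    exact RCWork.case1_pairs H a b c hab hac hbc hlt hrb u v huv
  · rw [Set.not_nonempty_iff_eq_empty] at hS
    have hempty : {k' : ℕ | ∃ c' : Sym2 (V ⊕ Fin 4) → ℕ,
        (∀ e ∈ (RCWork.GE H a b c).edgeSet, c' e < k') ∧
        ∀ u v : V ⊕ Fin 4, u ≠ v → ∃ p : (RCWork.GE H a b c).Walk u v,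
          p.IsPath ∧ (p.edges.map c').Nodup} = ∅ := by
      rw [Set.eq_empty_iff_forall_notMem]
      rintro k' ⟨c', hlt, hrb⟩
      obtain ⟨K, cH, h1, h2⟩ := RCWork.case2 H a b c hH hlt hrb
      have : K ∈ {k : ℕ | ∃ cH : Sym2 V → ℕ, (∀ e ∈ H.edgeSet, cH e < k) ∧
          ∀ u v : V, u ≠ v → ∃ p : H.Walk u v, p.IsPath ∧ (p.edges.map cH).Nodup} :=
        ⟨cH, h1, h2⟩
      rw [hS] at this
      exact this
    have : rc (RCWork.GE H a b c) = 0 := by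
      rw [rc, hempty, Nat.sInf_empty]
    omega
end

section
/- Let H be a connected graph and let H' be obtained from H by adding four new vertices x, u_1, v_1, x_1 together with the following new edges: a u_1, u_1 x, x v_1, v_1 b, where a and b are distinct vertices of H; an edge e_0 joining x to a vertex of H; and three edges e_0', e_1', e_2' joining x_1 to three distinct vertices of H. Then rc(H') ≤ rc(H) + 2. -/
open SimpleGraph

section
variable {V : Type*}

open Classical in
noncomputable def gcol (k : ℕ) (d1 : V) (p : V) (i : Fin 4) : ℕ :=
  if i = 1 then k else if i = 3 then (if p = d1 then k + 1 else k) else k + 1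

open Classical in
noncomputable def extCol (k : ℕ) (c0 : Sym2 V → ℕ) (d1 : V) : Sym2 (V ⊕ Fin 4) → ℕ :=
  Sym2.lift ⟨fun u v =>
    match u, v with
    | Sum.inl p, Sum.inl q => c0 s(p, q)
    | Sum.inl p, Sum.inr i => gcol k d1 p i
    | Sum.inr i, Sum.inl p => gcol k d1 p i
    | Sum.inr i, Sum.inr j => if i = 1 ∨ j = 1 then k + 1 else k,
   by
    rintro (p | i) (q | j)
    · exact congrArg c0 Sym2.eq_swap
    · rfl
    · rfl
    · simp [or_comm]⟩

@[simp] lemma extCol_ll (k c0 d1 p q) : extCol (V := V) k c0 d1 s(Sum.inl p, Sum.inl q) = c0 s(p, q) := rfl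
@[simp] lemma extCol_lr (k c0 d1 p i) : extCol (V := V) k c0 d1 s(Sum.inl p, Sum.inr i) = gcol k d1 p i := rfl
@[simp] lemma extCol_rl (k c0 d1 p i) : extCol (V := V) k c0 d1 s(Sum.inr i, Sum.inl p) = gcol k d1 p i := rfl
@[simp] lemma extCol_rr (k c0 d1 i j) : extCol (V := V) k c0 d1 s(Sum.inr i, Sum.inr j) = if i = 1 ∨ j = 1 then k + 1 else k := rfl

@[simp] lemma extCol_map_inl (k c0 d1) (e : Sym2 V) : extCol k c0 d1 (Sym2.map Sum.inl e) = c0 e := by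
  induction e using Sym2.ind with
  | _ x y => rfl

lemma aux_path_of_walk {W : Type*} {G : SimpleGraph W} {u v : W} (c : Sym2 W → ℕ)
    (p : G.Walk u v) (h : ∀ e ∈ p.edges, ∀ f ∈ p.edges, c e = c f → e = f) :
    ∃ q : G.Walk u v, q.IsPath ∧ (q.edges.map c).Nodup := by
  classical
  refine ⟨p.bypass, p.bypass_isPath, ?_⟩
  exact List.Nodup.map_on
    (fun e he f hf => h e (p.edges_bypass_subset he) f (p.edges_bypass_subset hf))
    p.bypass_isPath.edges_nodup

lemma aux_swap {W : Type*} {G : SimpleGraph W} {u v : W} (c : Sym2 W → ℕ)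
    (h : ∃ w : G.Walk v u, ∀ e ∈ w.edges, ∀ f ∈ w.edges, c e = c f → e = f) :
    ∃ w : G.Walk u v, ∀ e ∈ w.edges, ∀ f ∈ w.edges, c e = c f → e = f := by
  obtain ⟨w, hw⟩ := h
  refine ⟨w.reverse, ?_⟩
  intro e he f hf
  rw [Walk.edges_reverse, List.mem_reverse] at he hf
  exact hw e he f hf

def HExt (H : SimpleGraph V) (a b c : V) (d : Fin 3 → V) : SimpleGraph (V ⊕ Fin 4) :=
  SimpleGraph.fromRel (fun u v : V ⊕ Fin 4 =>
        (∃ p q, u = Sum.inl p ∧ v = Sum.inl q ∧ H.Adj p q) ∨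
        (u = Sum.inl a ∧ v = Sum.inr 1) ∨
        (u = Sum.inr 1 ∧ v = Sum.inr 0) ∨
        (u = Sum.inr 0 ∧ v = Sum.inr 2) ∨
        (u = Sum.inr 2 ∧ v = Sum.inl b) ∨
        (u = Sum.inr 0 ∧ v = Sum.inl c) ∨
        (∃ j, u = Sum.inr 3 ∧ v = Sum.inl (d j)))

variable {H : SimpleGraph V} {a b c : V} {d : Fin 3 → V}

lemma adj_of_H {p q : V} (h : H.Adj p q) : (HExt H a b c d).Adj (Sum.inl p) (Sum.inl q) := by
  rw [HExt, fromRel_adj]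
  exact ⟨by simp [h.ne], Or.inl (Or.inl ⟨p, q, rfl, rfl, h⟩)⟩

lemma adj_au1 : (HExt H a b c d).Adj (Sum.inl a) (Sum.inr 1) := by
  rw [HExt, fromRel_adj]; exact ⟨by simp, Or.inl (Or.inr (Or.inl ⟨rfl, rfl⟩))⟩

lemma adj_u1x : (HExt H a b c d).Adj (Sum.inr 1) (Sum.inr 0) := by
  rw [HExt, fromRel_adj]
  exact ⟨by simp, Or.inl (Or.inr (Or.inr (Or.inl ⟨rfl, rfl⟩)))⟩

lemma adj_xv1 : (HExt H a b c d).Adj (Sum.inr 0) (Sum.inr 2) := by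
  rw [HExt, fromRel_adj]
  exact ⟨by simp, Or.inl (Or.inr (Or.inr (Or.inr (Or.inl ⟨rfl, rfl⟩))))⟩

lemma adj_v1b : (HExt H a b c d).Adj (Sum.inr 2) (Sum.inl b) := by
  rw [HExt, fromRel_adj]
  exact ⟨by simp, Or.inl (Or.inr (Or.inr (Or.inr (Or.inr (Or.inl ⟨rfl, rfl⟩)))))⟩

lemma adj_xc : (HExt H a b c d).Adj (Sum.inr 0) (Sum.inl c) := by
  rw [HExt, fromRel_adj]
  exact ⟨by simp, Or.inl (Or.inr (Or.inr (Or.inr (Or.inr (Or.inr (Or.inl ⟨rfl, rfl⟩))))))⟩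

lemma adj_x1d (j : Fin 3) : (HExt H a b c d).Adj (Sum.inr 3) (Sum.inl (d j)) := by
  rw [HExt, fromRel_adj]
  exact ⟨by simp, Or.inl (Or.inr (Or.inr (Or.inr (Or.inr (Or.inr (Or.inr ⟨j, rfl, rfl⟩))))))⟩

lemma adj_inl_inl {p q : V} (h : (HExt H a b c d).Adj (Sum.inl p) (Sum.inl q)) : H.Adj p q := by
  rw [HExt, fromRel_adj] at h
  obtain ⟨-, h | h⟩ := h <;>
    rcases h with ⟨p', q', h1, h2, h3⟩ | ⟨h1, h2⟩ | ⟨h1, h2⟩ | ⟨h1, h2⟩ | ⟨h1, h2⟩ | ⟨h1, h2⟩ | ⟨j, h1, h2⟩ <;>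
    simp_all
  exact h3.symm

lemma adj_cases_inr {i : Fin 4} {y : V ⊕ Fin 4} (h : (HExt H a b c d).Adj (Sum.inr i) y) :
    (i = 1 ∧ (y = Sum.inl a ∨ y = Sum.inr 0)) ∨
    (i = 0 ∧ (y = Sum.inr 1 ∨ y = Sum.inr 2 ∨ y = Sum.inl c)) ∨
    (i = 2 ∧ (y = Sum.inr 0 ∨ y = Sum.inl b)) ∨
    (i = 3 ∧ ∃ j, y = Sum.inl (d j)) := by
  rw [HExt, fromRel_adj] at h
  obtain ⟨-, h | h⟩ := h <;>
    rcases h with ⟨p', q', h1, h2, h3⟩ | ⟨h1, h2⟩ | ⟨h1, h2⟩ | ⟨h1, h2⟩ | ⟨h1, h2⟩ | ⟨h1, h2⟩ | ⟨j, h1, h2⟩ <;>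
    simp_all

lemma step1 (hd01 : d 0 ≠ d 1) {k : ℕ} {c0 : Sym2 V → ℕ}
    (h1 : ∀ e ∈ H.edgeSet, c0 e < k)
    (h2 : ∀ u v : V, u ≠ v → ∃ p : H.Walk u v, p.IsPath ∧ (p.edges.map c0).Nodup) :
    ∃ c' : Sym2 (V ⊕ Fin 4) → ℕ,
      (∀ e ∈ (HExt H a b c d).edgeSet, c' e < k + 2) ∧
      ∀ u v : V ⊕ Fin 4, u ≠ v →
        ∃ p : (HExt H a b c d).Walk u v, p.IsPath ∧ (p.edges.map c').Nodup := by
  classical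
  set c' := extCol k c0 (d 1) with hc'
  have hR : ∀ p q : V, ∃ w : H.Walk p q, (w.edges.map c0).Nodup := by
    intro p q
    by_cases h : p = q
    · subst h; exact ⟨Walk.nil, by simp⟩
    · obtain ⟨w, -, hw⟩ := h2 p q h; exact ⟨w, hw⟩
  choose R hR2 using hR
  let φ : H →g HExt H a b c d := ⟨Sum.inl, fun h => adj_of_H h⟩
  have hMmem : ∀ (p q : V), ∀ e ∈ ((R p q).map φ).edges, ∃ e₀ ∈ (R p q).edges, e = Sym2.map Sum.inl e₀ := by
    intro p q e he
    rw [Walk.edges_map] at he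
    obtain ⟨e₀, he₀, rfl⟩ := List.mem_map.mp he
    exact ⟨e₀, he₀, rfl⟩
  have hMlt : ∀ (p q : V), ∀ e ∈ ((R p q).map φ).edges, c' e < k := by
    intro p q e he
    obtain ⟨e₀, he₀, rfl⟩ := hMmem p q e he
    rw [hc', extCol_map_inl]
    exact h1 e₀ ((R p q).edges_subset_edgeSet he₀)
  have hMinj : ∀ (p q : V), ∀ e ∈ ((R p q).map φ).edges, ∀ f ∈ ((R p q).map φ).edges,
      c' e = c' f → e = f := by
    intro p q e he f hf hef
    obtain ⟨e₀, he₀, rfl⟩ := hMmem p q e he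
    obtain ⟨f₀, hf₀, rfl⟩ := hMmem p q f hf
    rw [hc', extCol_map_inl, extCol_map_inl] at hef
    exact congrArg _ (List.inj_on_of_nodup_map (hR2 p q) he₀ hf₀ hef)
  have shapeA : ∀ (s : V ⊕ Fin 4) (p q : V) (h : (HExt H a b c d).Adj s (Sum.inl p)),
      k ≤ c' s(s, Sum.inl p) →
      ∀ e ∈ (Walk.cons h ((R p q).map φ)).edges,
      ∀ f ∈ (Walk.cons h ((R p q).map φ)).edges, c' e = c' f → e = f := by
    intro s p q h hcol e he f hf hef
    rw [Walk.edges_cons, List.mem_cons] at he hf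
    rcases he with rfl | he <;> rcases hf with rfl | hf
    · rfl
    · exact absurd hef (by have := hMlt p q f hf; omega)
    · exact absurd hef (by have := hMlt p q e he; omega)
    · exact hMinj p q e he f hf hef
  have shapeB : ∀ (s t : V ⊕ Fin 4) (p q : V) (h1' : (HExt H a b c d).Adj s (Sum.inl p))
      (h2' : (HExt H a b c d).Adj (Sum.inl q) t),
      k ≤ c' s(s, Sum.inl p) → k ≤ c' s(Sum.inl q, t) → c' s(s, Sum.inl p) ≠ c' s(Sum.inl q, t) →
      ∀ e ∈ (Walk.cons h1' (((R p q).map φ).append (Walk.cons h2' Walk.nil))).edges,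
      ∀ f ∈ (Walk.cons h1' (((R p q).map φ).append (Walk.cons h2' Walk.nil))).edges,
        c' e = c' f → e = f := by
    intro s t p q h1' h2' hk1 hk2 hne e he f hf hef
    have hφ : ∀ z : V, (φ z : V ⊕ Fin 4) = Sum.inl z := fun _ => rfl
    simp only [Walk.edges_cons, Walk.edges_append, Walk.edges_nil, List.mem_cons,
      List.mem_append, List.not_mem_nil, or_false, hφ] at he hf
    rcases he with rfl | he | rfl <;> rcases hf with rfl | hf | rfl
    · rfl
    · exact absurd hef (by have := hMlt p q f hf; omega)
    · exact absurd hef hne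
    · exact absurd hef (by have := hMlt p q e he; omega)
    · exact hMinj p q e he f hf hef
    · exact absurd hef (by have := hMlt p q e he; omega)
    · exact absurd hef (Ne.symm hne)
    · exact absurd hef (by have := hMlt p q f hf; omega)
    · rfl
  have shape1 : ∀ (u v : V ⊕ Fin 4) (h : (HExt H a b c d).Adj u v),
      ∀ e ∈ (Walk.cons h Walk.nil).edges, ∀ f ∈ (Walk.cons h Walk.nil).edges,
        c' e = c' f → e = f := by
    intro u v h e he f hf _
    simp only [Walk.edges_cons, Walk.edges_nil, List.mem_cons, List.not_mem_nil, or_false] at he hf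
    rw [he, hf]
  have shape2 : ∀ (u v w : V ⊕ Fin 4) (ha : (HExt H a b c d).Adj u v)
      (hb : (HExt H a b c d).Adj v w), c' s(u, v) ≠ c' s(v, w) →
      ∀ e ∈ (Walk.cons ha (Walk.cons hb Walk.nil)).edges,
      ∀ f ∈ (Walk.cons ha (Walk.cons hb Walk.nil)).edges, c' e = c' f → e = f := by
    intro u v w ha hb hne e he f hf hef
    simp only [Walk.edges_cons, Walk.edges_nil, List.mem_cons, List.not_mem_nil, or_false] at he hf
    rcases he with rfl | rfl <;> rcases hf with rfl | rfl
    · rfl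
    · exact absurd hef hne
    · exact absurd hef (Ne.symm hne)
    · rfl
  -- colour values
  have e21 : (2 : Fin 4) ≠ 1 := by decide
  have e23 : (2 : Fin 4) ≠ 3 := by decide
  have e01 : (0 : Fin 4) ≠ 1 := by decide
  have e03 : (0 : Fin 4) ≠ 3 := by decide
  have e31 : (3 : Fin 4) ≠ 1 := by decide
  have col_au1 : c' s(Sum.inl a, Sum.inr 1) = k := by
    rw [hc', extCol_lr, gcol, if_pos rfl]
  have col_u1a : c' s(Sum.inr 1, Sum.inl a) = k := by
    rw [hc', extCol_rl, gcol, if_pos rfl]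
  have col_u1x : c' s(Sum.inr 1, Sum.inr 0) = k + 1 := by
    rw [hc', extCol_rr, if_pos (Or.inl rfl)]
  have col_xv1 : c' s(Sum.inr 0, Sum.inr 2) = k := by
    rw [hc', extCol_rr, if_neg (by decide)]
  have col_v1b : c' s(Sum.inr 2, Sum.inl b) = k + 1 := by
    rw [hc', extCol_rl, gcol, if_neg e21, if_neg e23]
  have col_xc : c' s(Sum.inr 0, Sum.inl c) = k + 1 := by
    rw [hc', extCol_rl, gcol, if_neg e01, if_neg e03]
  have col_x1d0 : c' s(Sum.inr 3, Sum.inl (d 0)) = k := by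
    rw [hc', extCol_rl, gcol, if_neg e31, if_pos rfl, if_neg hd01]
  have col_d1x1 : c' s(Sum.inl (d 1), Sum.inr 3) = k + 1 := by
    rw [hc', extCol_lr, gcol, if_neg e31, if_pos rfl, if_pos rfl]
  have col_d0x1 : c' s(Sum.inl (d 0), Sum.inr 3) = k := by
    rw [hc', extCol_lr, gcol, if_neg e31, if_pos rfl, if_neg hd01]
  -- the walks from the new vertices to H-vertices
  have key_x : ∀ p : V, ∃ w : (HExt H a b c d).Walk (Sum.inr 0) (Sum.inl p),
      ∀ e ∈ w.edges, ∀ f ∈ w.edges, c' e = c' f → e = f :=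
    fun p => ⟨Walk.cons adj_xc ((R c p).map φ), shapeA _ c p adj_xc (by rw [col_xc]; omega)⟩
  have key_u1 : ∀ p : V, ∃ w : (HExt H a b c d).Walk (Sum.inr 1) (Sum.inl p),
      ∀ e ∈ w.edges, ∀ f ∈ w.edges, c' e = c' f → e = f :=
    fun p => ⟨Walk.cons adj_au1.symm ((R a p).map φ), shapeA _ a p adj_au1.symm (by rw [col_u1a])⟩
  have key_v1 : ∀ p : V, ∃ w : (HExt H a b c d).Walk (Sum.inr 2) (Sum.inl p),
      ∀ e ∈ w.edges, ∀ f ∈ w.edges, c' e = c' f → e = f :=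
    fun p => ⟨Walk.cons adj_v1b ((R b p).map φ), shapeA _ b p adj_v1b (by rw [col_v1b]; omega)⟩
  have key_x1 : ∀ p : V, ∃ w : (HExt H a b c d).Walk (Sum.inr 3) (Sum.inl p),
      ∀ e ∈ w.edges, ∀ f ∈ w.edges, c' e = c' f → e = f :=
    fun p => ⟨Walk.cons (adj_x1d 0) ((R (d 0) p).map φ), shapeA _ (d 0) p (adj_x1d 0) (by rw [col_x1d0])⟩
  -- walks among new vertices
  have key_u1x : ∃ w : (HExt H a b c d).Walk (Sum.inr 1) (Sum.inr 0),
      ∀ e ∈ w.edges, ∀ f ∈ w.edges, c' e = c' f → e = f :=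
    ⟨Walk.cons adj_u1x Walk.nil, shape1 _ _ adj_u1x⟩
  have key_xv1 : ∃ w : (HExt H a b c d).Walk (Sum.inr 0) (Sum.inr 2),
      ∀ e ∈ w.edges, ∀ f ∈ w.edges, c' e = c' f → e = f :=
    ⟨Walk.cons adj_xv1 Walk.nil, shape1 _ _ adj_xv1⟩
  have key_u1v1 : ∃ w : (HExt H a b c d).Walk (Sum.inr 1) (Sum.inr 2),
      ∀ e ∈ w.edges, ∀ f ∈ w.edges, c' e = c' f → e = f :=
    ⟨Walk.cons adj_u1x (Walk.cons adj_xv1 Walk.nil),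
      shape2 _ _ _ adj_u1x adj_xv1 (by rw [col_u1x, col_xv1]; omega)⟩
  have key_u1x1 : ∃ w : (HExt H a b c d).Walk (Sum.inr 1) (Sum.inr 3),
      ∀ e ∈ w.edges, ∀ f ∈ w.edges, c' e = c' f → e = f :=
    ⟨Walk.cons adj_au1.symm (((R a (d 1)).map φ).append (Walk.cons (adj_x1d 1).symm Walk.nil)),
      shapeB _ _ a (d 1) adj_au1.symm (adj_x1d 1).symm
        (by rw [col_u1a]) (by rw [col_d1x1]; omega) (by rw [col_u1a, col_d1x1]; omega)⟩
  have key_xx1 : ∃ w : (HExt H a b c d).Walk (Sum.inr 0) (Sum.inr 3),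
      ∀ e ∈ w.edges, ∀ f ∈ w.edges, c' e = c' f → e = f :=
    ⟨Walk.cons adj_xc (((R c (d 0)).map φ).append (Walk.cons (adj_x1d 0).symm Walk.nil)),
      shapeB _ _ c (d 0) adj_xc (adj_x1d 0).symm
        (by rw [col_xc]; omega) (by rw [col_d0x1]) (by rw [col_xc, col_d0x1]; omega)⟩
  have key_v1x1 : ∃ w : (HExt H a b c d).Walk (Sum.inr 2) (Sum.inr 3),
      ∀ e ∈ w.edges, ∀ f ∈ w.edges, c' e = c' f → e = f :=
    ⟨Walk.cons adj_v1b (((R b (d 0)).map φ).append (Walk.cons (adj_x1d 0).symm Walk.nil)),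
      shapeB _ _ b (d 0) adj_v1b (adj_x1d 0).symm
        (by rw [col_v1b]; omega) (by rw [col_d0x1]) (by rw [col_v1b, col_d0x1]; omega)⟩
  have key0 : ∀ (i : Fin 4) (p : V), ∃ w : (HExt H a b c d).Walk (Sum.inr i) (Sum.inl p),
      ∀ e ∈ w.edges, ∀ f ∈ w.edges, c' e = c' f → e = f := by
    intro i p
    fin_cases i
    · exact key_x p
    · exact key_u1 p
    · exact key_v1 p
    · exact key_x1 p
  have key : ∀ u v : V ⊕ Fin 4, u ≠ v → ∃ w : (HExt H a b c d).Walk u v,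
      ∀ e ∈ w.edges, ∀ f ∈ w.edges, c' e = c' f → e = f := by
    intro u v huv
    rcases u with p | i <;> rcases v with q | j
    · exact ⟨(R p q).map φ, hMinj p q⟩
    · exact aux_swap _ (key0 j p)
    · exact key0 i q
    · fin_cases i <;> fin_cases j <;>
        first
          | exact absurd rfl huv
          | exact key_u1x
          | exact key_xv1
          | exact key_u1v1
          | exact key_u1x1
          | exact key_xx1
          | exact key_v1x1
          | exact aux_swap _ key_u1x
          | exact aux_swap _ key_xv1
          | exact aux_swap _ key_u1v1
          | exact aux_swap _ key_u1x1
          | exact aux_swap _ key_xx1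
          | exact aux_swap _ key_v1x1
  refine ⟨c', ?_, fun u v huv => ?_⟩
  · intro e he
    induction e using Sym2.ind with
    | _ u v =>
      rw [mem_edgeSet] at he
      rcases u with p | i <;> rcases v with q | j
      · have := h1 s(p, q) ((mem_edgeSet H).mpr (adj_inl_inl he))
        rw [hc', extCol_ll]; omega
      · rw [hc', extCol_lr, gcol]; split_ifs <;> omega
      · rw [hc', extCol_rl, gcol]; split_ifs <;> omega
      · rw [hc', extCol_rr]; split_ifs <;> omega
  · obtain ⟨w, hw⟩ := key u v huv
    exact aux_path_of_walk c' w hw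

lemma step2 (hH : H.Connected) {k : ℕ} {c' : Sym2 (V ⊕ Fin 4) → ℕ}
    (h1 : ∀ e ∈ (HExt H a b c d).edgeSet, c' e < k)
    (h2 : ∀ u v : V ⊕ Fin 4, u ≠ v →
      ∃ p : (HExt H a b c d).Walk u v, p.IsPath ∧ (p.edges.map c').Nodup) :
    ∃ (m : ℕ) (c0 : Sym2 V → ℕ), (∀ e ∈ H.edgeSet, c0 e < m) ∧
      ∀ u v : V, u ≠ v → ∃ p : H.Walk u v, p.IsPath ∧ (p.edges.map c0).Nodup := by
  classical
  have hT : ∀ p q : V, H.Walk p q := fun p q => (hH.preconnected p q).some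
  set verts : List V := [a, b, c, d 0, d 1, d 2] with hverts
  set L : List (Sym2 V) := (verts.flatMap fun p => verts.flatMap fun q => (hT p q).edges).dedup with hL
  have hLmem : ∀ p ∈ verts, ∀ q ∈ verts, ∀ e ∈ (hT p q).edges, e ∈ L := by
    intro p hp q hq e he
    rw [hL, List.mem_dedup]
    exact List.mem_flatMap.mpr ⟨p, hp, List.mem_flatMap.mpr ⟨q, hq, he⟩⟩
  set c0 : Sym2 V → ℕ := fun e => if e ∈ L then k + L.idxOf e else c' (Sym2.map Sum.inl e)
    with hc0
  set Anch : (V ⊕ Fin 4) → V → Prop := fun s p =>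
    Sum.elim (fun p' => p' = p)
      (fun i => if i = 3 then p = d 0 ∨ p = d 1 ∨ p = d 2 else p = a ∨ p = b ∨ p = c) s
    with hAnch
  have hAv : ∀ (i : Fin 4) (p : V), Anch (Sum.inr i) p → p ∈ verts := by
    intro i p hp
    simp only [hAnch, Sum.elim_inr] at hp
    by_cases h3 : i = 3
    · rw [if_pos h3] at hp; rcases hp with rfl | rfl | rfl <;> simp [hverts]
    · rw [if_neg h3] at hp; rcases hp with rfl | rfl | rfl <;> simp [hverts]
  have hAnchEnter : ∀ (j : Fin 4) (p : V),
      (HExt H a b c d).Adj (Sum.inr j) (Sum.inl p) → Anch (Sum.inr j) p := by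
    intro j p h
    rcases adj_cases_inr h with ⟨rfl, hy⟩ | ⟨rfl, hy⟩ | ⟨rfl, hy⟩ | ⟨rfl, jj, hy⟩
    · simp only [hAnch, Sum.elim_inr, if_neg (by decide : (1 : Fin 4) ≠ 3)]
      rcases hy with hy | hy
      · exact Or.inl (Sum.inl.inj hy)
      · exact absurd hy (by simp)
    · simp only [hAnch, Sum.elim_inr, if_neg (by decide : (0 : Fin 4) ≠ 3)]
      rcases hy with hy | hy | hy
      · exact absurd hy (by simp)
      · exact absurd hy (by simp)
      · exact Or.inr (Or.inr (Sum.inl.inj hy))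
    · simp only [hAnch, Sum.elim_inr, if_neg (by decide : (2 : Fin 4) ≠ 3)]
      rcases hy with hy | hy
      · exact absurd hy (by simp)
      · exact Or.inr (Or.inl (Sum.inl.inj hy))
    · simp only [hAnch, Sum.elim_inr, if_pos rfl]
      have := Sum.inl.inj hy
      fin_cases jj
      · exact Or.inl this
      · exact Or.inr (Or.inl this)
      · exact Or.inr (Or.inr this)
  have splice : ∀ {s t : V ⊕ Fin 4} (Q : (HExt H a b c d).Walk s t) (p q : V),
      Anch s p → t = Sum.inl q →
      ∃ w : H.Walk p q, ∀ e ∈ w.edges, Sym2.map Sum.inl e ∈ Q.edges ∨ e ∈ L := by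
    intro s t Q
    induction Q with
    | nil =>
      intro p q hp ht
      subst ht
      simp only [hAnch, Sum.elim_inl] at hp
      subst hp
      exact ⟨Walk.nil, by simp⟩
    | @cons u v w' h Q' ih =>
      intro p q hp ht
      rcases u with p₀ | i
      · simp only [hAnch, Sum.elim_inl] at hp
        subst hp
        rcases v with p₁ | j
        · obtain ⟨w, hw⟩ := ih p₁ q (by simp [hAnch]) ht
          refine ⟨Walk.cons (adj_inl_inl h) w, ?_⟩
          intro e he
          rw [Walk.edges_cons, List.mem_cons] at he
          rcases he with rfl | he
          · left
            rw [Walk.edges_cons, Sym2.map_pair_eq]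
            exact List.mem_cons_self
          · rcases hw e he with h' | h'
            · exact Or.inl (by rw [Walk.edges_cons]; exact List.mem_cons_of_mem _ h')
            · exact Or.inr h'
        · obtain ⟨w, hw⟩ := ih p₀ q (hAnchEnter j p₀ h.symm) ht
          refine ⟨w, fun e he => ?_⟩
          rcases hw e he with h' | h'
          · exact Or.inl (by rw [Walk.edges_cons]; exact List.mem_cons_of_mem _ h')
          · exact Or.inr h'
      · rcases v with p₁ | j
        · -- exits to an H-vertex p₁
          have hp₁ : Anch (Sum.inr i) p₁ := hAnchEnter i p₁ h
          obtain ⟨w, hw⟩ := ih p₁ q (by simp [hAnch]) ht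
          refine ⟨(hT p p₁).append w, ?_⟩
          intro e he
          rw [Walk.edges_append, List.mem_append] at he
          rcases he with he | he
          · exact Or.inr (hLmem p (hAv i p hp) p₁ (hAv i p₁ hp₁) e he)
          · rcases hw e he with h' | h'
            · exact Or.inl (by rw [Walk.edges_cons]; exact List.mem_cons_of_mem _ h')
            · exact Or.inr h'
        · -- moves to another new vertex
          have hA' : Anch (Sum.inr j) p := by
            simp only [hAnch, Sum.elim_inr] at hp ⊢
            rcases adj_cases_inr h with ⟨rfl, hy⟩ | ⟨rfl, hy⟩ | ⟨rfl, hy⟩ | ⟨rfl, jj, hy⟩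
            · rcases hy with hy | hy
              · exact absurd hy (by simp)
              · rw [Sum.inr.inj hy] at *
                rw [if_neg (by decide : (0 : Fin 4) ≠ 3)]
                rw [if_neg (by decide : (1 : Fin 4) ≠ 3)] at hp
                exact hp
            · rcases hy with hy | hy | hy
              · rw [Sum.inr.inj hy] at *
                rw [if_neg (by decide : (1 : Fin 4) ≠ 3)]
                rw [if_neg (by decide : (0 : Fin 4) ≠ 3)] at hp
                exact hp
              · rw [Sum.inr.inj hy] at *
                rw [if_neg (by decide : (2 : Fin 4) ≠ 3)]
                rw [if_neg (by decide : (0 : Fin 4) ≠ 3)] at hp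
                exact hp
              · exact absurd hy (by simp)
            · rcases hy with hy | hy
              · rw [Sum.inr.inj hy] at *
                rw [if_neg (by decide : (0 : Fin 4) ≠ 3)]
                rw [if_neg (by decide : (2 : Fin 4) ≠ 3)] at hp
                exact hp
              · exact absurd hy (by simp)
            · exact absurd hy (by simp)
          obtain ⟨w, hw⟩ := ih p q hA' ht
          refine ⟨w, fun e he => ?_⟩
          rcases hw e he with h' | h'
          · exact Or.inl (by rw [Walk.edges_cons]; exact List.mem_cons_of_mem _ h')
          · exact Or.inr h'
  have hmapedge : ∀ e ∈ H.edgeSet, Sym2.map Sum.inl e ∈ (HExt H a b c d).edgeSet := by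
    intro e he
    induction e using Sym2.ind with
    | _ x y =>
      rw [Sym2.map_pair_eq, mem_edgeSet]
      exact adj_of_H ((mem_edgeSet H).mp he)
  refine ⟨k + L.length, c0, ?_, ?_⟩
  · intro e he
    by_cases heL : e ∈ L
    · have := List.idxOf_lt_length_iff.mpr heL
      simp only [hc0, if_pos heL]
      omega
    · have := h1 _ (hmapedge e he)
      simp only [hc0, if_neg heL]
      omega
  · intro u v huv
    have hne : (Sum.inl u : V ⊕ Fin 4) ≠ Sum.inl v := by simpa using huv
    obtain ⟨Q, hQpath, hQnd⟩ := h2 _ _ hne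
    obtain ⟨w, hw⟩ := splice Q u v (by simp [hAnch]) rfl
    have hQinj := List.inj_on_of_nodup_map hQnd
    have hinj : ∀ e ∈ w.edges, ∀ f ∈ w.edges, c0 e = c0 f → e = f := by
      intro e he f hf hef
      by_cases heL : e ∈ L <;> by_cases hfL : f ∈ L
      · simp only [hc0, if_pos heL, if_pos hfL] at hef
        exact (List.idxOf_inj heL).mp (by omega)
      · rcases hw f hf with hfQ | hfQ
        · have := h1 _ (Q.edges_subset_edgeSet hfQ)
          have h2' := List.idxOf_lt_length_iff.mpr heL
          simp only [hc0, if_pos heL, if_neg hfL] at hef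
          omega
        · exact absurd hfQ hfL
      · rcases hw e he with heQ | heQ
        · have := h1 _ (Q.edges_subset_edgeSet heQ)
          simp only [hc0, if_neg heL, if_pos hfL] at hef
          omega
        · exact absurd heQ heL
      · rcases hw e he with heQ | heQ
        · rcases hw f hf with hfQ | hfQ
          · simp only [hc0, if_neg heL, if_neg hfL] at hef
            exact Sym2.map.injective Sum.inl_injective (hQinj heQ hfQ hef)
          · exact absurd hfQ hfL
        · exact absurd heQ heL
    exact aux_path_of_walk c0 w hinj
end

/-- Subcase 1.1.  Add new vertices `x = Sum.inr 0`, `u₁ = Sum.inr 1`, `v₁ = Sum.inr 2`,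
`x₁ = Sum.inr 3` to a connected graph `H`, with edges `a u₁, u₁ x, x v₁, v₁ b` for
distinct `a, b ∈ H`, an edge `e₀` joining `x` to a vertex `c` of `H`, and three edges
joining `x₁` to three distinct vertices `d 0, d 1, d 2` of `H`.  Then
`rc(H') ≤ rc(H) + 2`. -/
theorem rc_subcase11 {V : Type*} (H : SimpleGraph V) (hH : H.Connected)
    (a b c : V) (hab : a ≠ b) (d : Fin 3 → V) (hd : Function.Injective d) :
    rc (SimpleGraph.fromRel (fun u v : V ⊕ Fin 4 =>
        (∃ p q, u = Sum.inl p ∧ v = Sum.inl q ∧ H.Adj p q) ∨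
        (u = Sum.inl a ∧ v = Sum.inr 1) ∨
        (u = Sum.inr 1 ∧ v = Sum.inr 0) ∨
        (u = Sum.inr 0 ∧ v = Sum.inr 2) ∨
        (u = Sum.inr 2 ∧ v = Sum.inl b) ∨
        (u = Sum.inr 0 ∧ v = Sum.inl c) ∨
        (∃ j, u = Sum.inr 3 ∧ v = Sum.inl (d j)))) ≤ rc H + 2 := by
  classical
  show rc (HExt H a b c d) ≤ rc H + 2
  unfold rc
  by_cases hS' : {k : ℕ | ∃ c' : Sym2 (V ⊕ Fin 4) → ℕ,
      (∀ e ∈ (HExt H a b c d).edgeSet, c' e < k) ∧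
      ∀ u v : V ⊕ Fin 4, u ≠ v →
        ∃ p : (HExt H a b c d).Walk u v, p.IsPath ∧ (p.edges.map c').Nodup}.Nonempty
  · have hSne : {k : ℕ | ∃ c0 : Sym2 V → ℕ, (∀ e ∈ H.edgeSet, c0 e < k) ∧
        ∀ u v : V, u ≠ v → ∃ p : H.Walk u v, p.IsPath ∧ (p.edges.map c0).Nodup}.Nonempty := by
      obtain ⟨k, c', hb, hr⟩ := hS'
      obtain ⟨m, c0, hm1, hm2⟩ := step2 hH hb hr
      exact ⟨m, c0, hm1, hm2⟩
    obtain ⟨c0, h1, h2⟩ := Nat.sInf_mem hSne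
    have hd01 : d 0 ≠ d 1 := fun h => absurd (hd h) (by decide)
    obtain ⟨c', hb', hr'⟩ := step1 hd01 h1 h2
    exact Nat.sInf_le ⟨c', hb', hr'⟩
  · rw [Set.not_nonempty_iff_eq_empty] at hS'
    rw [hS', Nat.sInf_empty]
    exact Nat.zero_le _
end

section
/- Let H be a connected graph and let H' be obtained from H by adding five new vertices x, u_1, v_1, x_1, v_1' together with the following new edges: a u_1, u_1 x, x v_1, v_1 b, where a and b are distinct vertices of H; an edge e_0 joining x to a vertex of H; two edges e_0', e_1' joining x_1 to two distinct vertices of H; and the edges x_1 v_1' and v_1' b', where b' is a vertex of H. Then rc(H') ≤ rc(H) + 3. -/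
open SimpleGraph

lemma rainbow_of_walk {V : Type*} {G : SimpleGraph V} {u v : V} (c : Sym2 V → ℕ)
    (w : G.Walk u v)
    (h : ∀ e₁ ∈ w.edges, ∀ e₂ ∈ w.edges, c e₁ = c e₂ → e₁ = e₂) :
    ∃ p : G.Walk u v, p.IsPath ∧ (p.edges.map c).Nodup := by
  classical
  refine ⟨w.bypass, w.bypass_isPath, ?_⟩
  exact List.Nodup.map_on
    (fun e₁ he₁ e₂ he₂ => h e₁ (w.edges_bypass_subset he₁) e₂ (w.edges_bypass_subset he₂))
    w.bypass_isPath.isTrail.edges_nodup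

lemma nodup_aux0 (k x : ℕ) (l : List ℕ) (hl : l.Nodup) (hlt : ∀ y ∈ l, y < k)
    (hx : k ≤ x) : (x :: l).Nodup := by
  rw [List.nodup_cons]
  exact ⟨fun h => absurd (hlt x h) (by omega), hl⟩

lemma nodup_aux1 (k x z : ℕ) (l : List ℕ) (hl : l.Nodup) (hlt : ∀ y ∈ l, y < k)
    (hx : k ≤ x) (hz : k ≤ z) (hxz : x ≠ z) : (x :: (l ++ [z])).Nodup := by
  rw [List.nodup_cons, List.nodup_append]
  refine ⟨fun h => ?_, hl, List.nodup_singleton _, fun y hy _ hy' => ?_⟩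
  · rcases List.mem_append.mp h with h | h
    · exact absurd (hlt x h) (by omega)
    · rw [List.mem_singleton] at h; exact hxz h
  · rw [List.mem_singleton] at hy'
    subst hy'
    exact fun hyz => absurd (hlt y hy) (by omega)

lemma nodup_aux2 (k x z w : ℕ) (l : List ℕ) (hl : l.Nodup) (hlt : ∀ y ∈ l, y < k)
    (hx : k ≤ x) (hz : k ≤ z) (hw : k ≤ w) (hxz : x ≠ z) (hxw : x ≠ w) (hzw : z ≠ w) :
    (x :: (l ++ [z, w])).Nodup := by
  rw [List.nodup_cons, List.nodup_append]
  refine ⟨fun h => ?_, hl, by simp [hzw], fun y hy _ hy' => ?_⟩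
  · rcases List.mem_append.mp h with h | h
    · exact absurd (hlt x h) (by omega)
    · rcases List.mem_cons.mp h with h | h
      · exact hxz h
      · rw [List.mem_singleton] at h; exact hxw h
  · have := hlt y hy
    rcases List.mem_cons.mp hy' with h | h
    · omega
    · rw [List.mem_singleton] at h; omega

def projV {V : Type*} (a b c d₀ b' : V) : V ⊕ Fin 5 → V :=
  Sum.elim id fun i =>
    if i = 0 then c else if i = 1 then a else if i = 2 then b else if i = 3 then d₀ else b'

/-- Subcase 1.2.  Add new vertices `x = Sum.inr 0`, `u₁ = Sum.inr 1`, `v₁ = Sum.inr 2`,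
`x₁ = Sum.inr 3`, `v₁' = Sum.inr 4` to a connected graph `H`, with edges
`a u₁, u₁ x, x v₁, v₁ b` for distinct `a, b ∈ H`, an edge `e₀` joining `x` to a vertex
`c` of `H`, two edges joining `x₁` to distinct vertices `d₀, d₁` of `H`, and the edges
`x₁ v₁'` and `v₁' b'` with `b' ∈ H`.  Then `rc(H') ≤ rc(H) + 3`. -/
theorem rc_subcase12 {V : Type*} (H : SimpleGraph V) (hH : H.Connected)
    (a b c d₀ d₁ b' : V) (hab : a ≠ b) (hd : d₀ ≠ d₁) :
    rc (SimpleGraph.fromRel (fun u v : V ⊕ Fin 5 =>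
        (∃ p q, u = Sum.inl p ∧ v = Sum.inl q ∧ H.Adj p q) ∨
        (u = Sum.inl a ∧ v = Sum.inr 1) ∨
        (u = Sum.inr 1 ∧ v = Sum.inr 0) ∨
        (u = Sum.inr 0 ∧ v = Sum.inr 2) ∨
        (u = Sum.inr 2 ∧ v = Sum.inl b) ∨
        (u = Sum.inr 0 ∧ v = Sum.inl c) ∨
        (u = Sum.inr 3 ∧ v = Sum.inl d₀) ∨
        (u = Sum.inr 3 ∧ v = Sum.inl d₁) ∨
        (u = Sum.inr 3 ∧ v = Sum.inr 4) ∨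
        (u = Sum.inr 4 ∧ v = Sum.inl b'))) ≤ rc H + 3 := by
  classical
  unfold rc
  set rel : (V ⊕ Fin 5) → (V ⊕ Fin 5) → Prop := fun u v =>
        (∃ p q, u = Sum.inl p ∧ v = Sum.inl q ∧ H.Adj p q) ∨
        (u = Sum.inl a ∧ v = Sum.inr 1) ∨
        (u = Sum.inr 1 ∧ v = Sum.inr 0) ∨
        (u = Sum.inr 0 ∧ v = Sum.inr 2) ∨
        (u = Sum.inr 2 ∧ v = Sum.inl b) ∨
        (u = Sum.inr 0 ∧ v = Sum.inl c) ∨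
        (u = Sum.inr 3 ∧ v = Sum.inl d₀) ∨
        (u = Sum.inr 3 ∧ v = Sum.inl d₁) ∨
        (u = Sum.inr 3 ∧ v = Sum.inr 4) ∨
        (u = Sum.inr 4 ∧ v = Sum.inl b') with hrel
  set G2 : SimpleGraph (V ⊕ Fin 5) := SimpleGraph.fromRel rel with hG2
  have mkadj : ∀ u v : V ⊕ Fin 5, u ≠ v → (rel u v ∨ rel v u) → G2.Adj u v :=
    fun u v h1 h2 => (SimpleGraph.fromRel_adj rel u v).mpr ⟨h1, h2⟩
  have adjH : ∀ {p q : V}, H.Adj p q → G2.Adj (Sum.inl p) (Sum.inl q) := by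
    intro p q h
    exact mkadj _ _ (by simp [h.ne]) (Or.inl (by rw [hrel]; exact Or.inl ⟨p, q, rfl, rfl, h⟩))
  have adj1 : G2.Adj (Sum.inr 1) (Sum.inl a) := mkadj _ _ (by simp) (Or.inr (by simp [hrel]))
  have adj2 : G2.Adj (Sum.inr 1) (Sum.inr 0) := mkadj _ _ (by simp) (Or.inl (by simp [hrel]))
  have adj3 : G2.Adj (Sum.inr 0) (Sum.inr 2) := mkadj _ _ (by simp) (Or.inl (by simp [hrel]))
  have adj4 : G2.Adj (Sum.inr 2) (Sum.inl b) := mkadj _ _ (by simp) (Or.inl (by simp [hrel]))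
  have adj5 : G2.Adj (Sum.inr 0) (Sum.inl c) := mkadj _ _ (by simp) (Or.inl (by simp [hrel]))
  have adj6 : G2.Adj (Sum.inr 3) (Sum.inl d₀) := mkadj _ _ (by simp) (Or.inl (by simp [hrel]))
  have adj6s : G2.Adj (Sum.inl d₀) (Sum.inr 3) := adj6.symm
  have adj7s : G2.Adj (Sum.inl d₁) (Sum.inr 3) :=
    (mkadj _ _ (by simp) (Or.inl (by simp [hrel]))).symm
  have adj8 : G2.Adj (Sum.inr 3) (Sum.inr 4) := mkadj _ _ (by simp) (Or.inl (by simp [hrel]))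
  have adj9 : G2.Adj (Sum.inr 4) (Sum.inl b') := mkadj _ _ (by simp) (Or.inl (by simp [hrel]))
  have adj9s : G2.Adj (Sum.inl b') (Sum.inr 4) := adj9.symm
  by_cases hS : {k : ℕ | ∃ c : Sym2 V → ℕ, (∀ e ∈ H.edgeSet, c e < k) ∧
      ∀ u v : V, u ≠ v → ∃ p : H.Walk u v, p.IsPath ∧ (p.edges.map c).Nodup}.Nonempty
  case pos =>
    obtain ⟨c0, hc1, hc2⟩ := Nat.sInf_mem hS
    have main : ∀ k : ℕ, (∀ e ∈ H.edgeSet, c0 e < k) →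
        ∃ cc : Sym2 (V ⊕ Fin 5) → ℕ, (∀ e ∈ G2.edgeSet, cc e < k + 3) ∧
          ∀ u v : V ⊕ Fin 5, u ≠ v →
            ∃ p : G2.Walk u v, p.IsPath ∧ (p.edges.map cc).Nodup := by
      clear hc1
      intro k hc1
      set cc : Sym2 (V ⊕ Fin 5) → ℕ := fun e =>
        if e = s(Sum.inl a, Sum.inr 1) then k
        else if e = s(Sum.inr 1, Sum.inr 0) then k + 1
        else if e = s(Sum.inr 0, Sum.inr 2) then k
        else if e = s(Sum.inr 2, Sum.inl b) then k + 1
        else if e = s(Sum.inr 0, Sum.inl c) then k + 2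
        else if e = s(Sum.inr 3, Sum.inl d₀) then k + 1
        else if e = s(Sum.inr 3, Sum.inl d₁) then k + 2
        else if e = s(Sum.inr 3, Sum.inr 4) then k + 2
        else if e = s(Sum.inr 4, Sum.inl b') then k
        else c0 (e.map (Sum.elim id fun _ => a)) with hcc
      have fc : ∀ e : Sym2 V, cc (Sym2.map Sum.inl e) = c0 e := by
        intro e
        induction e using Sym2.ind with
        | _ p q => simp [hcc, Sym2.map_pair_eq, Sym2.eq_iff]
      have vE1 : cc s(Sum.inl a, Sum.inr 1) = k := by simp [hcc]
      have vE1s : cc s(Sum.inr 1, Sum.inl a) = k := by rw [Sym2.eq_swap]; exact vE1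
      have vE2 : cc s(Sum.inr 1, Sum.inr 0) = k + 1 := by simp [hcc, Sym2.eq_iff]
      have vE3 : cc s(Sum.inr 0, Sum.inr 2) = k := by simp [hcc, Sym2.eq_iff]
      have vE4 : cc s(Sum.inr 2, Sum.inl b) = k + 1 := by simp [hcc, Sym2.eq_iff]
      have vE5 : cc s(Sum.inr 0, Sum.inl c) = k + 2 := by simp [hcc, Sym2.eq_iff]
      have vE6 : cc s(Sum.inr 3, Sum.inl d₀) = k + 1 := by simp [hcc, Sym2.eq_iff]
      have vE6s : cc s(Sum.inl d₀, Sum.inr 3) = k + 1 := by rw [Sym2.eq_swap]; exact vE6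
      have vE7 : cc s(Sum.inr 3, Sum.inl d₁) = k + 2 := by
        simp [hcc, Sym2.eq_iff, hd.symm]
      have vE7s : cc s(Sum.inl d₁, Sum.inr 3) = k + 2 := by rw [Sym2.eq_swap]; exact vE7
      have vE8 : cc s(Sum.inr 3, Sum.inr 4) = k + 2 := by simp [hcc, Sym2.eq_iff]
      have vE9 : cc s(Sum.inr 4, Sum.inl b') = k := by simp [hcc, Sym2.eq_iff]
      have vE9s : cc s(Sum.inl b', Sum.inr 4) = k := by rw [Sym2.eq_swap]; exact vE9
      -- the colour bound
      have relcc : ∀ u v : V ⊕ Fin 5, rel u v → cc s(u, v) < k + 3 := by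
        intro u v h
        rw [hrel] at h
        rcases h with ⟨p, q, rfl, rfl, hpq⟩ | ⟨rfl, rfl⟩ | ⟨rfl, rfl⟩ | ⟨rfl, rfl⟩ | ⟨rfl, rfl⟩ |
          ⟨rfl, rfl⟩ | ⟨rfl, rfl⟩ | ⟨rfl, rfl⟩ | ⟨rfl, rfl⟩ | ⟨rfl, rfl⟩
        · rw [← Sym2.map_pair_eq Sum.inl, fc]
          have := hc1 _ (H.mem_edgeSet.mpr hpq)
          omega
        · rw [vE1]; omega
        · rw [vE2]; omega
        · rw [vE3]; omega
        · rw [vE4]; omega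
        · rw [vE5]; omega
        · rw [vE6]; omega
        · rw [vE7]; omega
        · rw [vE8]; omega
        · rw [vE9]; omega
      have hbound : ∀ e ∈ G2.edgeSet, cc e < k + 3 := by
        intro e he
        induction e using Sym2.ind with
        | _ u v =>
          rw [SimpleGraph.mem_edgeSet, hG2, SimpleGraph.fromRel_adj] at he
          rcases he.2 with h | h
          · exact relcc u v h
          · rw [Sym2.eq_swap]; exact relcc v u h
      -- rainbow walks within `H`
      have WHmap : ∀ {s t : V} (p : H.Walk s t), ∃ w : G2.Walk (Sum.inl s) (Sum.inl t),
          w.edges.map cc = p.edges.map c0 := by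
        intro s t p
        refine ⟨p.map ⟨Sum.inl, fun {x y} h => adjH h⟩, ?_⟩
        rw [Walk.edges_map, List.map_map]
        exact List.map_congr_left fun e _ => fc e
      have WH : ∀ s t : V, ∃ w : G2.Walk (Sum.inl s) (Sum.inl t),
          (w.edges.map cc).Nodup ∧ ∀ y ∈ w.edges.map cc, y < k := by
        intro s t
        by_cases hst : s = t
        · subst hst; exact ⟨Walk.nil, by simp, by simp⟩
        · obtain ⟨p, _, hnd⟩ := hc2 s t hst
          obtain ⟨w, hw⟩ := WHmap p
          refine ⟨w, ?_, ?_⟩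
          · rw [hw]; exact hnd
          · intro y hy
            rw [hw] at hy
            obtain ⟨e, he, rfl⟩ := List.mem_map.mp hy
            exact hc1 _ (p.edges_subset_edgeSet he)
      have symm : ∀ {u v : V ⊕ Fin 5},
          (∃ w : G2.Walk u v, (w.edges.map cc).Nodup) →
          ∃ w : G2.Walk v u, (w.edges.map cc).Nodup := by
        rintro u v ⟨w, hw⟩
        refine ⟨w.reverse, ?_⟩
        rw [Walk.edges_reverse, List.map_reverse, List.nodup_reverse]
        exact hw
      -- walks from a new vertex to an old vertex
      have sideA0 : ∀ p : V, ∃ w : G2.Walk (Sum.inr 0) (Sum.inl p),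
          (w.edges.map cc).Nodup := by
        intro p
        obtain ⟨w0, hw0, hlt0⟩ := WH c p
        refine ⟨Walk.cons adj5 w0, ?_⟩
        rw [Walk.edges_cons, List.map_cons, vE5]
        exact nodup_aux0 k (k + 2) _ hw0 hlt0 (by omega)
      have sideA1 : ∀ p : V, ∃ w : G2.Walk (Sum.inr 1) (Sum.inl p),
          (w.edges.map cc).Nodup := by
        intro p
        obtain ⟨w0, hw0, hlt0⟩ := WH a p
        refine ⟨Walk.cons adj1 w0, ?_⟩
        rw [Walk.edges_cons, List.map_cons, vE1s]
        exact nodup_aux0 k k _ hw0 hlt0 (by omega)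
      have sideA2 : ∀ p : V, ∃ w : G2.Walk (Sum.inr 2) (Sum.inl p),
          (w.edges.map cc).Nodup := by
        intro p
        obtain ⟨w0, hw0, hlt0⟩ := WH b p
        refine ⟨Walk.cons adj4 w0, ?_⟩
        rw [Walk.edges_cons, List.map_cons, vE4]
        exact nodup_aux0 k (k + 1) _ hw0 hlt0 (by omega)
      have sideA3 : ∀ p : V, ∃ w : G2.Walk (Sum.inr 3) (Sum.inl p),
          (w.edges.map cc).Nodup := by
        intro p
        obtain ⟨w0, hw0, hlt0⟩ := WH d₀ p
        refine ⟨Walk.cons adj6 w0, ?_⟩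
        rw [Walk.edges_cons, List.map_cons, vE6]
        exact nodup_aux0 k (k + 1) _ hw0 hlt0 (by omega)
      have sideA4 : ∀ p : V, ∃ w : G2.Walk (Sum.inr 4) (Sum.inl p),
          (w.edges.map cc).Nodup := by
        intro p
        obtain ⟨w0, hw0, hlt0⟩ := WH b' p
        refine ⟨Walk.cons adj9 w0, ?_⟩
        rw [Walk.edges_cons, List.map_cons, vE9]
        exact nodup_aux0 k k _ hw0 hlt0 (by omega)
      have side : ∀ (j : Fin 5) (p : V), ∃ w : G2.Walk (Sum.inr j) (Sum.inl p),
          (w.edges.map cc).Nodup := by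
        intro j p
        fin_cases j
        exacts [sideA0 p, sideA1 p, sideA2 p, sideA3 p, sideA4 p]
      -- walks between the new vertices
      have c01 : ∃ w : G2.Walk (Sum.inr 0) (Sum.inr 1), (w.edges.map cc).Nodup :=
        symm ⟨Walk.cons adj2 Walk.nil, by
          rw [Walk.edges_cons, Walk.edges_nil, List.map_cons, List.map_nil, vE2]
          exact List.nodup_singleton _⟩
      have c02 : ∃ w : G2.Walk (Sum.inr 0) (Sum.inr 2), (w.edges.map cc).Nodup :=
        ⟨Walk.cons adj3 Walk.nil, by
          rw [Walk.edges_cons, Walk.edges_nil, List.map_cons, List.map_nil, vE3]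
          exact List.nodup_singleton _⟩
      have c03 : ∃ w : G2.Walk (Sum.inr 0) (Sum.inr 3), (w.edges.map cc).Nodup := by
        obtain ⟨w0, hw0, hlt0⟩ := WH c d₀
        refine ⟨Walk.cons adj5 (w0.append (Walk.cons adj6s Walk.nil)), ?_⟩
        rw [Walk.edges_cons, Walk.edges_append, Walk.edges_cons, Walk.edges_nil,
          List.map_cons, List.map_append, List.map_cons, List.map_nil, vE5, vE6s]
        exact nodup_aux1 k (k + 2) (k + 1) _ hw0 hlt0 (by omega) (by omega) (by omega)
      have c04 : ∃ w : G2.Walk (Sum.inr 0) (Sum.inr 4), (w.edges.map cc).Nodup := by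
        obtain ⟨w0, hw0, hlt0⟩ := WH c b'
        refine ⟨Walk.cons adj5 (w0.append (Walk.cons adj9s Walk.nil)), ?_⟩
        rw [Walk.edges_cons, Walk.edges_append, Walk.edges_cons, Walk.edges_nil,
          List.map_cons, List.map_append, List.map_cons, List.map_nil, vE5, vE9s]
        exact nodup_aux1 k (k + 2) k _ hw0 hlt0 (by omega) (by omega) (by omega)
      have c12 : ∃ w : G2.Walk (Sum.inr 1) (Sum.inr 2), (w.edges.map cc).Nodup := by
        refine ⟨Walk.cons adj2 (Walk.cons adj3 Walk.nil), ?_⟩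
        rw [Walk.edges_cons, Walk.edges_cons, Walk.edges_nil, List.map_cons, List.map_cons,
          List.map_nil, vE2, vE3]
        refine List.nodup_cons.mpr ⟨?_, List.nodup_singleton _⟩
        rw [List.mem_singleton]; omega
      have c13 : ∃ w : G2.Walk (Sum.inr 1) (Sum.inr 3), (w.edges.map cc).Nodup := by
        obtain ⟨w0, hw0, hlt0⟩ := WH a d₀
        refine ⟨Walk.cons adj1 (w0.append (Walk.cons adj6s Walk.nil)), ?_⟩
        rw [Walk.edges_cons, Walk.edges_append, Walk.edges_cons, Walk.edges_nil,
          List.map_cons, List.map_append, List.map_cons, List.map_nil, vE1s, vE6s]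
        exact nodup_aux1 k k (k + 1) _ hw0 hlt0 (by omega) (by omega) (by omega)
      have c14 : ∃ w : G2.Walk (Sum.inr 1) (Sum.inr 4), (w.edges.map cc).Nodup := by
        obtain ⟨w0, hw0, hlt0⟩ := WH a d₀
        refine ⟨Walk.cons adj1 (w0.append (Walk.cons adj6s (Walk.cons adj8 Walk.nil))), ?_⟩
        rw [Walk.edges_cons, Walk.edges_append, Walk.edges_cons, Walk.edges_cons,
          Walk.edges_nil, List.map_cons, List.map_append, List.map_cons, List.map_cons,
          List.map_nil, vE1s, vE6s, vE8]
        exact nodup_aux2 k k (k + 1) (k + 2) _ hw0 hlt0 (by omega) (by omega) (by omega)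
          (by omega) (by omega) (by omega)
      have c23 : ∃ w : G2.Walk (Sum.inr 2) (Sum.inr 3), (w.edges.map cc).Nodup := by
        obtain ⟨w0, hw0, hlt0⟩ := WH b d₁
        refine ⟨Walk.cons adj4 (w0.append (Walk.cons adj7s Walk.nil)), ?_⟩
        rw [Walk.edges_cons, Walk.edges_append, Walk.edges_cons, Walk.edges_nil,
          List.map_cons, List.map_append, List.map_cons, List.map_nil, vE4, vE7s]
        exact nodup_aux1 k (k + 1) (k + 2) _ hw0 hlt0 (by omega) (by omega) (by omega)
      have c24 : ∃ w : G2.Walk (Sum.inr 2) (Sum.inr 4), (w.edges.map cc).Nodup := by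
        obtain ⟨w0, hw0, hlt0⟩ := WH b b'
        refine ⟨Walk.cons adj4 (w0.append (Walk.cons adj9s Walk.nil)), ?_⟩
        rw [Walk.edges_cons, Walk.edges_append, Walk.edges_cons, Walk.edges_nil,
          List.map_cons, List.map_append, List.map_cons, List.map_nil, vE4, vE9s]
        exact nodup_aux1 k (k + 1) k _ hw0 hlt0 (by omega) (by omega) (by omega)
      have c34 : ∃ w : G2.Walk (Sum.inr 3) (Sum.inr 4), (w.edges.map cc).Nodup :=
        ⟨Walk.cons adj8 Walk.nil, by
          rw [Walk.edges_cons, Walk.edges_nil, List.map_cons, List.map_nil, vE8]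
          exact List.nodup_singleton _⟩
      have diag : ∀ i : Fin 5, ∃ w : G2.Walk (Sum.inr i) (Sum.inr i),
          (w.edges.map cc).Nodup := fun i => ⟨Walk.nil, by simp⟩
      have side2 : ∀ i j : Fin 5, ∃ w : G2.Walk (Sum.inr i) (Sum.inr j),
          (w.edges.map cc).Nodup := by
        intro i j
        fin_cases i <;> fin_cases j
        exacts [diag _, c01, c02, c03, c04,
          symm c01, diag _, c12, c13, c14,
          symm c02, symm c12, diag _, c23, c24,
          symm c03, symm c13, symm c23, diag _, c34,
          symm c04, symm c14, symm c24, symm c34, diag _]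
      have key : ∀ u v : V ⊕ Fin 5, ∃ w : G2.Walk u v, (w.edges.map cc).Nodup := by
        intro u v
        rcases u with p | i
        · rcases v with q | j
          · by_cases hpq : p = q
            · subst hpq; exact ⟨Walk.nil, by simp⟩
            · obtain ⟨w, hw, _⟩ := WH p q
              exact ⟨w, hw⟩
          · exact symm (side j p)
        · rcases v with q | j
          · exact side i q
          · exact side2 i j
      refine ⟨cc, hbound, ?_⟩
      intro u v _
      obtain ⟨w, hw⟩ := key u v
      exact rainbow_of_walk cc w (List.inj_on_of_nodup_map hw)
    exact Nat.sInf_le (main _ hc1)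
  case neg =>
    -- if `H` admits no rainbow colouring at all, neither does the extended graph
    have hfdef : True := trivial
    have Q1 : H.Walk a c := (hH.preconnected a c).some
    have Q2 : H.Walk c b := (hH.preconnected c b).some
    have Q3 : H.Walk d₀ d₁ := (hH.preconnected d₀ d₁).some
    have Q4 : H.Walk d₀ b' := (hH.preconnected d₀ b').some
    set L : List (Sym2 V) := Q1.edges ++ Q2.edges ++ Q3.edges ++ Q4.edges with hL
    have memQ1 : ∀ e ∈ Q1.edges, e ∈ L := by
      intro e he; rw [hL]; simp only [List.mem_append]; tauto
    have memQ2 : ∀ e ∈ Q2.edges, e ∈ L := by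
      intro e he; rw [hL]; simp only [List.mem_append]; tauto
    have memQ3 : ∀ e ∈ Q3.edges, e ∈ L := by
      intro e he; rw [hL]; simp only [List.mem_append]; tauto
    have memQ4 : ∀ e ∈ Q4.edges, e ∈ L := by
      intro e he; rw [hL]; simp only [List.mem_append]; tauto
    have halfstep : ∀ u v : V ⊕ Fin 5, rel u v →
        ∃ st : H.Walk (projV a b c d₀ b' u) (projV a b c d₀ b' v), ∀ e ∈ st.edges,
          e ∈ L ∨ Sym2.map Sum.inl e = s(u, v) := by
      intro u v h
      rw [hrel] at h
      rcases h with ⟨p, q, rfl, rfl, hpq⟩ | ⟨rfl, rfl⟩ | ⟨rfl, rfl⟩ | ⟨rfl, rfl⟩ | ⟨rfl, rfl⟩ |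
        ⟨rfl, rfl⟩ | ⟨rfl, rfl⟩ | ⟨rfl, rfl⟩ | ⟨rfl, rfl⟩ | ⟨rfl, rfl⟩
      · refine ⟨(Walk.cons hpq Walk.nil : H.Walk p q), ?_⟩
        intro e he
        change e ∈ [s(p, q)] at he
        rw [List.mem_singleton] at he
        subst he
        exact Or.inr (Sym2.map_pair_eq Sum.inl p q)
      · exact ⟨Walk.nil, fun e he => by cases he⟩
      · exact ⟨Q1, fun e he => Or.inl (memQ1 e he)⟩
      · exact ⟨Q2, fun e he => Or.inl (memQ2 e he)⟩
      · exact ⟨Walk.nil, fun e he => by cases he⟩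
      · exact ⟨Walk.nil, fun e he => by cases he⟩
      · exact ⟨Walk.nil, fun e he => by cases he⟩
      · exact ⟨Q3, fun e he => Or.inl (memQ3 e he)⟩
      · exact ⟨Q4, fun e he => Or.inl (memQ4 e he)⟩
      · exact ⟨Walk.nil, fun e he => by cases he⟩
    have step : ∀ u v : V ⊕ Fin 5, G2.Adj u v →
        ∃ st : H.Walk (projV a b c d₀ b' u) (projV a b c d₀ b' v), ∀ e ∈ st.edges,
          e ∈ L ∨ Sym2.map Sum.inl e = s(u, v) := by
      intro u v h
      rw [hG2, SimpleGraph.fromRel_adj] at h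
      rcases h.2 with h' | h'
      · exact halfstep u v h'
      · obtain ⟨st, hst⟩ := halfstep v u h'
        refine ⟨st.reverse, fun e he => ?_⟩
        rw [Walk.edges_reverse, List.mem_reverse] at he
        rcases hst e he with h'' | h''
        · exact Or.inl h''
        · refine Or.inr ?_
          rw [Sym2.eq_swap]
          exact h''
    have transfer : ∀ {s t : V ⊕ Fin 5} (w : G2.Walk s t),
        ∃ q : H.Walk (projV a b c d₀ b' s) (projV a b c d₀ b' t), ∀ e ∈ q.edges,
          e ∈ L ∨ Sym2.map Sum.inl e ∈ w.edges := by
      intro s t w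
      induction w with
      | nil => exact ⟨Walk.nil, by simp⟩
      | cons h w ih =>
        obtain ⟨q', hq'⟩ := ih
        obtain ⟨st, hst⟩ := step _ _ h
        refine ⟨st.append q', fun e he => ?_⟩
        rw [Walk.edges_append, List.mem_append] at he
        rcases he with he | he
        · rcases hst e he with h' | h'
          · exact Or.inl h'
          · exact Or.inr (by rw [Walk.edges_cons, h']; exact List.mem_cons_self)
        · rcases hq' e he with h' | h'
          · exact Or.inl h'
          · exact Or.inr (by rw [Walk.edges_cons]; exact List.mem_cons_of_mem _ h')
    have hempty : {m : ℕ | ∃ cc : Sym2 (V ⊕ Fin 5) → ℕ, (∀ e ∈ G2.edgeSet, cc e < m) ∧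
        ∀ u v : V ⊕ Fin 5, u ≠ v →
          ∃ p : G2.Walk u v, p.IsPath ∧ (p.edges.map cc).Nodup} = ∅ := by
      rw [Set.eq_empty_iff_forall_notMem]
      intro m hm
      obtain ⟨c', hc1', hc2'⟩ := hm
      apply hS
      set ch : Sym2 V → ℕ := fun e =>
        if e ∈ L then m + L.idxOf e else c' (Sym2.map Sum.inl e) with hch
      refine ⟨m + L.length, ch, ?_, ?_⟩
      · intro e he
        by_cases hLe : e ∈ L
        · rw [hch]
          simp only [hLe, if_true]
          have := List.idxOf_lt_length_iff.mpr hLe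
          omega
        · rw [hch]
          simp only [hLe, if_false]
          induction e using Sym2.ind with
          | _ p q =>
            rw [Sym2.map_pair_eq]
            have : s(Sum.inl p, Sum.inl q) ∈ G2.edgeSet :=
              G2.mem_edgeSet.mpr (adjH (H.mem_edgeSet.mp he))
            have := hc1' _ this
            omega
      · intro u v huv
        have hne2 : (Sum.inl u : V ⊕ Fin 5) ≠ Sum.inl v := fun h => huv (Sum.inl.inj h)
        obtain ⟨p, _, hpnd⟩ := hc2' _ _ hne2
        obtain ⟨q, hq⟩ := transfer p
        have hinj := List.inj_on_of_nodup_map hpnd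
        refine rainbow_of_walk ch q ?_
        intro e₁ he₁ e₂ he₂ hce
        by_cases h₁ : e₁ ∈ L <;> by_cases h₂ : e₂ ∈ L
        · rw [hch] at hce
          simp only [h₁, h₂, if_true] at hce
          exact (List.idxOf_inj h₁).mp (by omega)
        · exfalso
          rcases hq e₂ he₂ with h' | h'
          · exact h₂ h'
          · have hlt := hc1' _ (p.edges_subset_edgeSet h')
            rw [hch] at hce
            simp only [h₁, h₂, if_true, if_false] at hce
            have := List.idxOf_lt_length_iff.mpr h₁
            omega
        · exfalso
          rcases hq e₁ he₁ with h' | h'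
          · exact h₁ h'
          · have hlt := hc1' _ (p.edges_subset_edgeSet h')
            rw [hch] at hce
            simp only [h₁, h₂, if_true, if_false] at hce
            have := List.idxOf_lt_length_iff.mpr h₂
            omega
        · rw [hch] at hce
          simp only [h₁, h₂, if_false] at hce
          have hm₁ : Sym2.map Sum.inl e₁ ∈ p.edges := by
            rcases hq e₁ he₁ with h' | h'
            · exact absurd h' h₁
            · exact h'
          have hm₂ : Sym2.map Sum.inl e₂ ∈ p.edges := by
            rcases hq e₂ he₂ with h' | h'
            · exact absurd h' h₂
            · exact h'
          exact Sym2.map.injective Sum.inl_injective (hinj hm₁ hm₂ hce)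
    rw [hempty, Nat.sInf_empty]
    exact Nat.zero_le _
end

section
/- Let H be a connected graph and let H' be obtained from H by adding six new vertices x, u_1, v_1, x_1, u_1', v_1' together with the following new edges: a u_1, u_1 x, x v_1, v_1 b, where a and b are distinct vertices of H; an edge e_0 joining x to a vertex of H; an edge e_0' joining x_1 to a vertex of H; and the edges a' u_1', u_1' x_1, x_1 v_1', v_1' b', where a' and b' are distinct vertices of H. Then rc(H') ≤ rc(H) + 3. -/
open SimpleGraph

open Sum

section Proj
variable {V : Type*} {H : SimpleGraph V} {G' : SimpleGraph (V ⊕ Fin 6)}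
variable (W : ∀ s t : V, H.Walk s t) (S₀ : Set V) (L : List (Sym2 V))

lemma exists_rainbow_of_walk {G : SimpleGraph V} (c : Sym2 V → ℕ) {u v : V} (w : G.Walk u v)
    (h : ∀ e₁ ∈ w.edges, ∀ e₂ ∈ w.edges, c e₁ = c e₂ → e₁ = e₂) :
    ∃ p : G.Walk u v, p.IsPath ∧ (p.edges.map c).Nodup := by
  haveI := Classical.decEq V
  exact ⟨w.bypass, w.bypass_isPath,
    (w.bypass_isPath.edges_nodup).map_on
      (fun e₁ h₁ e₂ h₂ => h _ (w.edges_bypass_subset h₁) _ (w.edges_bypass_subset h₂))⟩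

def projW
    (hinl : ∀ p q, G'.Adj (inl p) (inl q) → H.Adj p q)
    (hmix : ∀ p i, G'.Adj (inl p) (inr i) → p ∈ S₀)
    (hLW : ∀ s ∈ S₀, ∀ t ∈ S₀, ∀ e ∈ (W s t).edges, e ∈ L) :
    ∀ {y : V ⊕ Fin 6} {v : V} (p : G'.Walk y (inl v)),
      Σ' (u : V) (r : H.Walk u v),
        ((y = inl u) ∨ ((∃ i, y = inr i) ∧ u ∈ S₀)) ∧
        (∀ e ∈ r.edges, Sym2.map inl e ∈ p.edges ∨ e ∈ L)
  | _, v, .nil => ⟨v, .nil, Or.inl rfl, by simp⟩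
  | _, v, @Walk.cons _ _ (inl u) (inl u') _ h q => by
    obtain ⟨w, r, hw, he⟩ := projW hinl hmix hLW q
    have hwu : w = u' := by
      rcases hw with h1 | ⟨⟨i, h2⟩, _⟩
      · exact (Sum.inl.injEq _ _ ▸ h1).symm
      · exact absurd h2 (by simp)
    refine ⟨u, Walk.cons (hinl _ _ h) (r.copy hwu rfl), Or.inl rfl, ?_⟩
    intro e hee
    rw [Walk.edges_cons, Walk.edges_copy] at hee
    rcases List.mem_cons.mp hee with h1 | h1
    · subst h1
      left
      rw [Sym2.map_pair_eq, Walk.edges_cons]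
      exact List.mem_cons_self
    · rcases he e h1 with h2 | h2
      · exact Or.inl (by rw [Walk.edges_cons]; exact List.mem_cons_of_mem _ h2)
      · exact Or.inr h2
  | _, v, @Walk.cons _ _ (inl u) (inr i) _ h q => by
    obtain ⟨w, r, hw, he⟩ := projW hinl hmix hLW q
    have hwS : w ∈ S₀ := by
      rcases hw with h1 | ⟨_, h2⟩
      · exact absurd h1 (by simp)
      · exact h2
    refine ⟨u, (W u w).append r, Or.inl rfl, ?_⟩
    intro e hee
    rw [Walk.edges_append] at hee
    rcases List.mem_append.mp hee with h1 | h1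
    · exact Or.inr (hLW u (hmix u i h) w hwS e h1)
    · rcases he e h1 with h2 | h2
      · exact Or.inl (by rw [Walk.edges_cons]; exact List.mem_cons_of_mem _ h2)
      · exact Or.inr h2
  | _, v, @Walk.cons _ _ (inr i) (inl u') _ h q => by
    obtain ⟨w, r, hw, he⟩ := projW hinl hmix hLW q
    have hwS : w ∈ S₀ := by
      rcases hw with h1 | ⟨_, h2⟩
      · rw [show w = u' from (Sum.inl.injEq _ _ ▸ h1).symm]
        exact hmix u' i h.symm
      · exact h2
    refine ⟨w, r, Or.inr ⟨⟨i, rfl⟩, hwS⟩, ?_⟩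
    intro e hee
    rcases he e hee with h2 | h2
    · exact Or.inl (by rw [Walk.edges_cons]; exact List.mem_cons_of_mem _ h2)
    · exact Or.inr h2
  | _, v, @Walk.cons _ _ (inr i) (inr j) _ h q => by
    obtain ⟨w, r, hw, he⟩ := projW hinl hmix hLW q
    have hwS : w ∈ S₀ := by
      rcases hw with h1 | ⟨_, h2⟩
      · exact absurd h1 (by simp)
      · exact h2
    refine ⟨w, r, Or.inr ⟨⟨i, rfl⟩, hwS⟩, ?_⟩
    intro e hee
    rcases he e hee with h2 | h2
    · exact Or.inl (by rw [Walk.edges_cons]; exact List.mem_cons_of_mem _ h2)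
    · exact Or.inr h2

lemma caseB (hH : H.Connected) (SL : List V)
    (hinl : ∀ p q, G'.Adj (inl p) (inl q) → H.Adj p q)
    (hhom : ∀ p q, H.Adj p q → G'.Adj (inl p) (inl q))
    (hmix : ∀ p i, G'.Adj (inl p) (inr i) → p ∈ SL)
    (k : ℕ) (c' : Sym2 (V ⊕ Fin 6) → ℕ) (hlt : ∀ e ∈ G'.edgeSet, c' e < k)
    (hrb : ∀ x y : V ⊕ Fin 6, x ≠ y →
      ∃ p : G'.Walk x y, p.IsPath ∧ (p.edges.map c').Nodup) :
    {m : ℕ | ∃ cH : Sym2 V → ℕ, (∀ e ∈ H.edgeSet, cH e < m) ∧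
      ∀ u v : V, u ≠ v → ∃ p : H.Walk u v,
        p.IsPath ∧ (p.edges.map cH).Nodup}.Nonempty := by
  classical
  have hW : ∀ s t : V, Nonempty (H.Walk s t) := fun s t => hH.preconnected s t
  set W' : ∀ s t : V, H.Walk s t := fun s t => (hW s t).some with hWdef
  set L : List (Sym2 V) := SL.flatMap fun s => SL.flatMap fun t => (W' s t).edges with hLdef
  set cH : Sym2 V → ℕ :=
    fun e => if e ∈ L then k + L.idxOf e else c' (Sym2.map inl e) with hcHdef
  refine ⟨k + L.length, cH, ?_, ?_⟩
  · intro e he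
    by_cases hel : e ∈ L
    · simp only [hcHdef, if_pos hel]
      exact Nat.add_lt_add_left (List.idxOf_lt_length_iff.mpr hel) k
    · simp only [hcHdef, if_neg hel]
      have hmem : Sym2.map inl e ∈ G'.edgeSet := by
        induction e using Sym2.ind with
        | _ x y =>
          rw [Sym2.map_pair_eq, G'.mem_edgeSet]
          exact hhom x y (H.mem_edgeSet.mp he)
      have := hlt _ hmem
      omega
  · intro u v huv
    obtain ⟨p, hp, hnd⟩ := hrb (inl u) (inl v) (by simpa using huv)
    obtain ⟨w, r, hw, he⟩ := projW W' {x | x ∈ SL} L hinl hmix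
      (fun s hs t ht e hel => List.mem_flatMap.mpr ⟨s, hs, List.mem_flatMap.mpr ⟨t, ht, hel⟩⟩) p
    have hwu : w = u := by
      rcases hw with h1 | ⟨⟨i, h2⟩, _⟩
      · exact (Sum.inl.injEq _ _ ▸ h1).symm
      · exact absurd h2 (by simp)
    subst hwu
    apply exists_rainbow_of_walk cH r
    intro e₁ h₁ e₂ h₂ hcc
    have key : ∀ e ∈ r.edges, e ∉ L → Sym2.map inl e ∈ p.edges :=
      fun e hh hnl => (he e hh).resolve_right hnl
    by_cases m1 : e₁ ∈ L <;> by_cases m2 : e₂ ∈ L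
    · simp only [hcHdef, if_pos m1, if_pos m2] at hcc
      exact (List.idxOf_inj m1).mp (Nat.add_left_cancel hcc)
    · exfalso
      simp only [hcHdef, if_pos m1, if_neg m2] at hcc
      have h3 : c' (Sym2.map inl e₂) < k := hlt _ (p.edges_subset_edgeSet (key e₂ h₂ m2))
      omega
    · exfalso
      simp only [hcHdef, if_neg m1, if_pos m2] at hcc
      have h3 : c' (Sym2.map inl e₁) < k := hlt _ (p.edges_subset_edgeSet (key e₁ h₁ m1))
      omega
    · simp only [hcHdef, if_neg m1, if_neg m2] at hcc
      have := List.inj_on_of_nodup_map hnd (key e₁ h₁ m1) (key e₂ h₂ m2) hcc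
      exact Sym2.map.injective Sum.inl_injective this

end Proj

section NewCol
variable {V : Type*}

def giCol (k : ℕ) (i : Fin 6) : ℕ := if i.val ≤ 2 then k else k + 1

def hCol (k : ℕ) (i j : Fin 6) : ℕ :=
  if s(i,j) = s(0,1) then k+1 else if s(i,j) = s(0,2) then k+2
  else if s(i,j) = s(3,4) then k else if s(i,j) = s(3,5) then k+2 else 0

lemma hCol_symm (k : ℕ) (i j : Fin 6) : hCol k i j = hCol k j i := by
  unfold hCol; rw [show s(i,j) = s(j,i) from Sym2.eq_swap]

def newCol (k : ℕ) (cH : Sym2 V → ℕ) : Sym2 (V ⊕ Fin 6) → ℕ :=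
  Sym2.lift ⟨fun x y => match x, y with
    | .inl p, .inl q => cH s(p, q)
    | .inl _, .inr i => giCol k i
    | .inr i, .inl _ => giCol k i
    | .inr i, .inr j => hCol k i j, by
      rintro (p|i) (q|j)
      · show cH s(p,q) = cH s(q,p); rw [Sym2.eq_swap]
      · rfl
      · rfl
      · exact hCol_symm k i j⟩

lemma newCol_inl_inl (k : ℕ) (cH : Sym2 V → ℕ) (p q : V) :
    newCol k cH s(inl p, inl q) = cH s(p, q) := by rw [newCol, Sym2.lift_mk]

lemma newCol_inl_inr (k : ℕ) (cH : Sym2 V → ℕ) (p : V) (i : Fin 6) :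
    newCol k cH s(inl p, inr i) = giCol k i := by rw [newCol, Sym2.lift_mk]

lemma newCol_inr_inl (k : ℕ) (cH : Sym2 V → ℕ) (p : V) (i : Fin 6) :
    newCol k cH s(inr i, inl p) = giCol k i := by rw [newCol, Sym2.lift_mk]

lemma newCol_inr_inr (k : ℕ) (cH : Sym2 V → ℕ) (i j : Fin 6) :
    newCol k cH s(inr i, inr j) = hCol k i j := by rw [newCol, Sym2.lift_mk]

lemma newCol_map_inl (k : ℕ) (cH : Sym2 V → ℕ) (e : Sym2 V) :
    newCol k cH (Sym2.map inl e) = cH e := by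
  induction e using Sym2.ind with
  | _ x y => rw [Sym2.map_pair_eq, newCol_inl_inl]

variable {H : SimpleGraph V} {G' : SimpleGraph (V ⊕ Fin 6)}

lemma rainbow_symm {W : Type*} {G : SimpleGraph W} (c : Sym2 W → ℕ) {u v : W}
    (h : ∃ p : G.Walk u v, p.IsPath ∧ (p.edges.map c).Nodup) :
    ∃ p : G.Walk v u, p.IsPath ∧ (p.edges.map c).Nodup := by
  obtain ⟨p, hp, hn⟩ := h
  exact ⟨p.reverse, hp.reverse, by
    rw [SimpleGraph.Walk.edges_reverse, List.map_reverse]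
    exact List.nodup_reverse.mpr hn⟩

lemma caseA {a b c a' b' c' : V}
    (hinl : ∀ p q, G'.Adj (inl p) (inl q) → H.Adj p q)
    (hhom : ∀ p q, H.Adj p q → G'.Adj (inl p) (inl q))
    (hA1 : G'.Adj (inl a) (inr 1)) (hA2 : G'.Adj (inr 1) (inr 0))
    (hA3 : G'.Adj (inr 0) (inr 2)) (hA4 : G'.Adj (inr 2) (inl b))
    (hA5 : G'.Adj (inr 0) (inl c)) (hA6 : G'.Adj (inr 3) (inl c'))
    (hA7 : G'.Adj (inl a') (inr 4)) (hA8 : G'.Adj (inr 4) (inr 3))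
    (hA9 : G'.Adj (inr 3) (inr 5)) (hA10 : G'.Adj (inr 5) (inl b'))
    (k : ℕ) (cH : Sym2 V → ℕ) (hlt : ∀ e ∈ H.edgeSet, cH e < k)
    (hrb : ∀ u v : V, u ≠ v → ∃ p : H.Walk u v, p.IsPath ∧ (p.edges.map cH).Nodup) :
    ∃ cc : Sym2 (V ⊕ Fin 6) → ℕ, (∀ e ∈ G'.edgeSet, cc e < k + 3) ∧
      ∀ x y : V ⊕ Fin 6, x ≠ y →
        ∃ p : G'.Walk x y, p.IsPath ∧ (p.edges.map cc).Nodup := by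
  set cc : Sym2 (V ⊕ Fin 6) → ℕ := newCol k cH with hccdef
  have hpath : ∀ s w : V, ∃ p : H.Walk s w, p.IsPath ∧ (p.edges.map cH).Nodup ∧
      ∀ e ∈ p.edges, cH e < k := by
    intro s w
    rcases eq_or_ne s w with rfl | h
    · exact ⟨Walk.nil, by simp, by simp, by simp⟩
    · obtain ⟨p, hp, hn⟩ := hrb s w h
      exact ⟨p, hp, hn, fun e he => hlt e (p.edges_subset_edgeSet he)⟩
  have hins : ∀ s w : V, ∃ p : G'.Walk (inl s) (inl w), p.IsPath ∧
      (p.edges.map cc).Nodup ∧ (∀ e ∈ p.edges, cc e < k) ∧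
      (∀ y ∈ p.support, ∃ z, y = inl z) := by
    intro s w
    obtain ⟨p, hp, hn, hle⟩ := hpath s w
    refine ⟨p.map ⟨inl, fun h => hhom _ _ h⟩,
      Walk.map_isPath_of_injective inl_injective hp, ?_, ?_, ?_⟩
    · rw [Walk.edges_map, List.map_map]
      show (List.map (cc ∘ Sym2.map inl) p.edges).Nodup
      rw [show cc ∘ Sym2.map inl = cH from funext (newCol_map_inl k cH)]
      exact hn
    · intro e he
      rw [Walk.edges_map] at he
      obtain ⟨ee, hee, rfl⟩ := List.mem_map.mp he
      show newCol k cH (Sym2.map inl ee) < k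
      rw [newCol_map_inl]
      exact hle ee hee
    · intro y hy
      rw [Walk.support_map] at hy
      obtain ⟨z, _, rfl⟩ := List.mem_map.mp hy
      exact ⟨z, rfl⟩
  have hC1 : ∀ (i : Fin 6) (s : V), G'.Adj (inr i) (inl s) → k ≤ cc s(inr i, inl s) →
      ∀ w : V, ∃ p : G'.Walk (inr i) (inl w), p.IsPath ∧ (p.edges.map cc).Nodup := by
    intro i s hadj hk w
    obtain ⟨p, hp, hn, hle, hsupp⟩ := hins s w
    refine ⟨Walk.cons hadj p, ?_, ?_⟩
    · rw [Walk.cons_isPath_iff]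
      refine ⟨hp, fun hmem => ?_⟩
      obtain ⟨z, hz⟩ := hsupp _ hmem
      simp at hz
    · rw [Walk.edges_cons, List.map_cons, List.nodup_cons]
      refine ⟨fun hmem => ?_, hn⟩
      obtain ⟨e, he, hee⟩ := List.mem_map.mp hmem
      have := hle e he
      omega
  have hC2 : ∀ (i j : Fin 6) (s t : V), G'.Adj (inr i) (inl s) → G'.Adj (inl t) (inr j) →
      i ≠ j → k ≤ cc s(inr i, inl s) → k ≤ cc s(inl t, inr j) →
      cc s(inr i, inl s) ≠ cc s(inl t, inr j) →
      ∃ p : G'.Walk (inr i) (inr j), p.IsPath ∧ (p.edges.map cc).Nodup := by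
    intro i j s t hadj1 hadj2 hij hk1 hk2 hne
    obtain ⟨p, hp, hn, hle, hsupp⟩ := hins s t
    refine ⟨Walk.cons hadj1 (p.concat hadj2), ?_, ?_⟩
    · rw [Walk.isPath_def, Walk.support_cons, Walk.support_concat, List.nodup_cons]
      refine ⟨?_, ?_⟩
      · intro hmem
        rcases List.mem_append.mp hmem with h1 | h1
        · obtain ⟨z, hz⟩ := hsupp _ h1; simp at hz
        · simp only [List.mem_singleton] at h1
          exact hij (inr_injective h1)
      · refine List.Nodup.append hp.support_nodup (List.nodup_singleton _) ?_
        intro x hx hx2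
        simp only [List.mem_singleton] at hx2
        subst hx2
        obtain ⟨z, hz⟩ := hsupp _ hx
        simp at hz
    · rw [Walk.edges_cons, Walk.edges_concat, List.concat_eq_append, List.map_cons,
        List.map_append, List.nodup_cons]
      refine ⟨?_, ?_⟩
      · intro hmem
        rcases List.mem_append.mp hmem with h1 | h1
        · obtain ⟨e, he, hee⟩ := List.mem_map.mp h1
          have := hle e he
          omega
        · simp only [List.map_singleton, List.mem_singleton] at h1
          exact hne h1
      · refine List.Nodup.append hn (List.nodup_singleton _) ?_
        intro x hx hx2
        simp only [List.map_singleton, List.mem_singleton] at hx2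
        subst hx2
        obtain ⟨e, he, hee⟩ := List.mem_map.mp hx
        have := hle e he
        omega
  have hC0 : ∀ x y : V ⊕ Fin 6, G'.Adj x y →
      ∃ p : G'.Walk x y, p.IsPath ∧ (p.edges.map cc).Nodup := by
    intro x y h
    exact ⟨Walk.cons h Walk.nil, by simp [Walk.isPath_def, h.ne], by simp⟩
  have hC2' : ∀ x y z : V ⊕ Fin 6, G'.Adj x y → G'.Adj y z → x ≠ z →
      cc s(x, y) ≠ cc s(y, z) →
      ∃ p : G'.Walk x z, p.IsPath ∧ (p.edges.map cc).Nodup := by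
    intro x y z h1 h2 hxz hne
    refine ⟨Walk.cons h1 (Walk.cons h2 Walk.nil), ?_, ?_⟩
    · simp [Walk.isPath_def, h1.ne, h2.ne, hxz]
    · simp [hne]
  -- color computations
  have hlow : ∀ (i : Fin 6) (s : V), i.val ≤ 2 → cc s(inr i, inl s) = k := by
    intro i s h; rw [hccdef, newCol_inr_inl]; exact if_pos h
  have hlow' : ∀ (i : Fin 6) (s : V), i.val ≤ 2 → cc s(inl s, inr i) = k := by
    intro i s h; rw [hccdef, newCol_inl_inr]; exact if_pos h
  have hhigh : ∀ (i : Fin 6) (s : V), ¬ i.val ≤ 2 → cc s(inr i, inl s) = k + 1 := by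
    intro i s h; rw [hccdef, newCol_inr_inl]; exact if_neg h
  have hhigh' : ∀ (i : Fin 6) (s : V), ¬ i.val ≤ 2 → cc s(inl s, inr i) = k + 1 := by
    intro i s h; rw [hccdef, newCol_inl_inr]; exact if_neg h
  have hgk : ∀ (i : Fin 6) (s : V), k ≤ cc s(inr i, inl s) := by
    intro i s; rw [hccdef, newCol_inr_inl]; unfold giCol; split <;> omega
  have hgk' : ∀ (i : Fin 6) (s : V), k ≤ cc s(inl s, inr i) := by
    intro i s; rw [hccdef, newCol_inl_inr]; unfold giCol; split <;> omega
  have hc10 : cc s((inr 1 : V ⊕ Fin 6), inr 0) = k + 1 := by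
    rw [hccdef, newCol_inr_inr]; unfold hCol; rw [if_pos (by decide)]
  have hc02 : cc s((inr 0 : V ⊕ Fin 6), inr 2) = k + 2 := by
    rw [hccdef, newCol_inr_inr]; unfold hCol
    rw [if_neg (by decide), if_pos (by decide)]
  have hc43 : cc s((inr 4 : V ⊕ Fin 6), inr 3) = k := by
    rw [hccdef, newCol_inr_inr]; unfold hCol
    rw [if_neg (by decide), if_neg (by decide), if_pos (by decide)]
  have hc35 : cc s((inr 3 : V ⊕ Fin 6), inr 5) = k + 2 := by
    rw [hccdef, newCol_inr_inr]; unfold hCol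
    rw [if_neg (by decide), if_neg (by decide), if_neg (by decide), if_pos (by decide)]
  refine ⟨cc, ?_, ?_⟩
  · intro e
    induction e using Sym2.ind with
    | _ x y =>
      intro he
      match x, y with
      | inl p, inl q =>
        rw [hccdef, newCol_inl_inl]
        have := hlt s(p,q) (H.mem_edgeSet.mpr (hinl p q (G'.mem_edgeSet.mp he)))
        omega
      | inl p, inr i =>
        rw [hccdef, newCol_inl_inr]; unfold giCol; split <;> omega
      | inr i, inl p =>
        rw [hccdef, newCol_inr_inl]; unfold giCol; split <;> omega
      | inr i, inr j =>
        rw [hccdef, newCol_inr_inr]; unfold hCol; split_ifs <;> omega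
  · rintro (u | i) (v | j) hne
    · obtain ⟨p, hp, hn, _, _⟩ := hins u v
      exact ⟨p, hp, hn⟩
    · -- inl u to inr j
      apply rainbow_symm
      fin_cases j
      · exact hC1 0 c hA5 (hgk 0 c) u
      · exact hC1 1 a hA1.symm (hgk 1 a) u
      · exact hC1 2 b hA4 (hgk 2 b) u
      · exact hC1 3 c' hA6 (hgk 3 c') u
      · exact hC1 4 a' hA7.symm (hgk 4 a') u
      · exact hC1 5 b' hA10 (hgk 5 b') u
    · -- inr i to inl v
      fin_cases i
      · exact hC1 0 c hA5 (hgk 0 c) v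
      · exact hC1 1 a hA1.symm (hgk 1 a) v
      · exact hC1 2 b hA4 (hgk 2 b) v
      · exact hC1 3 c' hA6 (hgk 3 c') v
      · exact hC1 4 a' hA7.symm (hgk 4 a') v
      · exact hC1 5 b' hA10 (hgk 5 b') v
    · -- inr i to inr j
      have cross : ∀ (i j : Fin 6) (s t : V), G'.Adj (inr i) (inl s) →
          G'.Adj (inl t) (inr j) → i ≠ j → i.val ≤ 2 → ¬ j.val ≤ 2 →
          ∃ p : G'.Walk (inr i) (inr j), p.IsPath ∧ (p.edges.map cc).Nodup := by
        intro i j s t h1 h2 hij hi hj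
        exact hC2 i j s t h1 h2 hij (hgk i s) (hgk' j t)
          (by rw [hlow i s hi, hhigh' j t hj]; omega)
      fin_cases i <;> fin_cases j
      · exact absurd rfl hne
      · exact hC0 _ _ hA2.symm
      · exact hC0 _ _ hA3
      · exact cross 0 3 c c' hA5 hA6.symm (by decide) (by decide) (by decide)
      · exact cross 0 4 c a' hA5 hA7 (by decide) (by decide) (by decide)
      · exact cross 0 5 c b' hA5 hA10.symm (by decide) (by decide) (by decide)
      · exact hC0 _ _ hA2
      · exact absurd rfl hne
      · exact hC2' (inr 1) (inr 0) (inr 2) hA2 hA3 (by simp) (by rw [hc10, hc02]; omega)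
      · exact cross 1 3 a c' hA1.symm hA6.symm (by decide) (by decide) (by decide)
      · exact cross 1 4 a a' hA1.symm hA7 (by decide) (by decide) (by decide)
      · exact cross 1 5 a b' hA1.symm hA10.symm (by decide) (by decide) (by decide)
      · exact hC0 _ _ hA3.symm
      · exact rainbow_symm _ (hC2' (inr 1) (inr 0) (inr 2) hA2 hA3 (by simp) (by rw [hc10, hc02]; omega))
      · exact absurd rfl hne
      · exact cross 2 3 b c' hA4 hA6.symm (by decide) (by decide) (by decide)
      · exact cross 2 4 b a' hA4 hA7 (by decide) (by decide) (by decide)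
      · exact cross 2 5 b b' hA4 hA10.symm (by decide) (by decide) (by decide)
      · exact rainbow_symm _ (cross 0 3 c c' hA5 hA6.symm (by decide) (by decide) (by decide))
      · exact rainbow_symm _ (cross 1 3 a c' hA1.symm hA6.symm (by decide) (by decide) (by decide))
      · exact rainbow_symm _ (cross 2 3 b c' hA4 hA6.symm (by decide) (by decide) (by decide))
      · exact absurd rfl hne
      · exact hC0 _ _ hA8.symm
      · exact hC0 _ _ hA9
      · exact rainbow_symm _ (cross 0 4 c a' hA5 hA7 (by decide) (by decide) (by decide))
      · exact rainbow_symm _ (cross 1 4 a a' hA1.symm hA7 (by decide) (by decide) (by decide))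
      · exact rainbow_symm _ (cross 2 4 b a' hA4 hA7 (by decide) (by decide) (by decide))
      · exact hC0 _ _ hA8
      · exact absurd rfl hne
      · exact hC2' (inr 4) (inr 3) (inr 5) hA8 hA9 (by simp) (by rw [hc43, hc35]; omega)
      · exact rainbow_symm _ (cross 0 5 c b' hA5 hA10.symm (by decide) (by decide) (by decide))
      · exact rainbow_symm _ (cross 1 5 a b' hA1.symm hA10.symm (by decide) (by decide) (by decide))
      · exact rainbow_symm _ (cross 2 5 b b' hA4 hA10.symm (by decide) (by decide) (by decide))
      · exact hC0 _ _ hA9.symm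
      · exact rainbow_symm _ (hC2' (inr 4) (inr 3) (inr 5) hA8 hA9 (by simp) (by rw [hc43, hc35]; omega))
      · exact absurd rfl hne

end NewCol

/-- Subcase 1.3.  Add new vertices `x = Sum.inr 0`, `u₁ = Sum.inr 1`, `v₁ = Sum.inr 2`,
`x₁ = Sum.inr 3`, `u₁' = Sum.inr 4`, `v₁' = Sum.inr 5` to a connected graph `H`, with
edges `a u₁, u₁ x, x v₁, v₁ b` for distinct `a, b ∈ H`, an edge `e₀` joining `x` to a
vertex `c` of `H`, an edge `e₀'` joining `x₁` to a vertex `c'` of `H`, and edges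
`a' u₁', u₁' x₁, x₁ v₁', v₁' b'` for distinct `a', b' ∈ H`.  Then
`rc(H') ≤ rc(H) + 3`. -/
theorem rc_subcase13 {V : Type*} (H : SimpleGraph V) (hH : H.Connected)
    (a b c a' b' c' : V) (hab : a ≠ b) (hab' : a' ≠ b') :
    rc (SimpleGraph.fromRel (fun u v : V ⊕ Fin 6 =>
        (∃ p q, u = Sum.inl p ∧ v = Sum.inl q ∧ H.Adj p q) ∨
        (u = Sum.inl a ∧ v = Sum.inr 1) ∨
        (u = Sum.inr 1 ∧ v = Sum.inr 0) ∨
        (u = Sum.inr 0 ∧ v = Sum.inr 2) ∨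
        (u = Sum.inr 2 ∧ v = Sum.inl b) ∨
        (u = Sum.inr 0 ∧ v = Sum.inl c) ∨
        (u = Sum.inr 3 ∧ v = Sum.inl c') ∨
        (u = Sum.inl a' ∧ v = Sum.inr 4) ∨
        (u = Sum.inr 4 ∧ v = Sum.inr 3) ∨
        (u = Sum.inr 3 ∧ v = Sum.inr 5) ∨
        (u = Sum.inr 5 ∧ v = Sum.inl b'))) ≤ rc H + 3 := by
  classical
  set G' : SimpleGraph (V ⊕ Fin 6) := SimpleGraph.fromRel (fun u v : V ⊕ Fin 6 =>
        (∃ p q, u = Sum.inl p ∧ v = Sum.inl q ∧ H.Adj p q) ∨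
        (u = Sum.inl a ∧ v = Sum.inr 1) ∨
        (u = Sum.inr 1 ∧ v = Sum.inr 0) ∨
        (u = Sum.inr 0 ∧ v = Sum.inr 2) ∨
        (u = Sum.inr 2 ∧ v = Sum.inl b) ∨
        (u = Sum.inr 0 ∧ v = Sum.inl c) ∨
        (u = Sum.inr 3 ∧ v = Sum.inl c') ∨
        (u = Sum.inl a' ∧ v = Sum.inr 4) ∨
        (u = Sum.inr 4 ∧ v = Sum.inr 3) ∨
        (u = Sum.inr 3 ∧ v = Sum.inr 5) ∨
        (u = Sum.inr 5 ∧ v = Sum.inl b')) with hG'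
  have hinl : ∀ p q, G'.Adj (inl p) (inl q) → H.Adj p q := by
    intro p q h
    rw [hG', SimpleGraph.fromRel_adj] at h
    obtain ⟨-, h | h⟩ := h
    · rcases h with ⟨p', q', h1, h2, h3⟩ | h | h | h | h | h | h | h | h | h | h
      · obtain rfl : p = p' := inl_injective h1
        obtain rfl : q = q' := inl_injective h2
        exact h3
      all_goals simp_all
    · rcases h with ⟨p', q', h1, h2, h3⟩ | h | h | h | h | h | h | h | h | h | h
      · obtain rfl : q = p' := inl_injective h1
        obtain rfl : p = q' := inl_injective h2
        exact h3.symm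
      all_goals simp_all
  have hhom : ∀ p q, H.Adj p q → G'.Adj (inl p) (inl q) := by
    intro p q h
    rw [hG', SimpleGraph.fromRel_adj]
    exact ⟨by simpa using h.ne, Or.inl (Or.inl ⟨p, q, rfl, rfl, h⟩)⟩
  have hmix : ∀ p i, G'.Adj (inl p) (inr i) → p ∈ [a, b, c, a', b', c'] := by
    intro p i h
    rw [hG', SimpleGraph.fromRel_adj] at h
    obtain ⟨-, h | h⟩ := h
    · rcases h with ⟨p', q', h1, h2, h3⟩ | h | h | h | h | h | h | h | h | h | h <;>
        simp_all
    · rcases h with ⟨p', q', h1, h2, h3⟩ | h | h | h | h | h | h | h | h | h | h <;>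
        simp_all
  have hne_rr : ∀ i j : Fin 6, i ≠ j → (inr i : V ⊕ Fin 6) ≠ inr j :=
    fun i j h hh => h (inr_injective hh)
  have hA1 : G'.Adj (inl a) (inr 1) := by
    rw [hG', SimpleGraph.fromRel_adj]
    exact ⟨by simp, Or.inl (Or.inr (Or.inl ⟨rfl, rfl⟩))⟩
  have hA2 : G'.Adj (inr 1) (inr 0) := by
    rw [hG', SimpleGraph.fromRel_adj]
    exact ⟨hne_rr 1 0 (by decide), Or.inl (Or.inr (Or.inr (Or.inl ⟨rfl, rfl⟩)))⟩
  have hA3 : G'.Adj (inr 0) (inr 2) := by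
    rw [hG', SimpleGraph.fromRel_adj]
    exact ⟨hne_rr 0 2 (by decide),
      Or.inl (Or.inr (Or.inr (Or.inr (Or.inl ⟨rfl, rfl⟩))))⟩
  have hA4 : G'.Adj (inr 2) (inl b) := by
    rw [hG', SimpleGraph.fromRel_adj]
    exact ⟨by simp, Or.inl (Or.inr (Or.inr (Or.inr (Or.inr (Or.inl ⟨rfl, rfl⟩)))))⟩
  have hA5 : G'.Adj (inr 0) (inl c) := by
    rw [hG', SimpleGraph.fromRel_adj]
    exact ⟨by simp,
      Or.inl (Or.inr (Or.inr (Or.inr (Or.inr (Or.inr (Or.inl ⟨rfl, rfl⟩))))))⟩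
  have hA6 : G'.Adj (inr 3) (inl c') := by
    rw [hG', SimpleGraph.fromRel_adj]
    exact ⟨by simp,
      Or.inl (Or.inr (Or.inr (Or.inr (Or.inr (Or.inr (Or.inr (Or.inl ⟨rfl, rfl⟩)))))))⟩
  have hA7 : G'.Adj (inl a') (inr 4) := by
    rw [hG', SimpleGraph.fromRel_adj]
    exact ⟨by simp,
      Or.inl (Or.inr (Or.inr (Or.inr (Or.inr (Or.inr (Or.inr (Or.inr (Or.inl ⟨rfl, rfl⟩))))))))⟩
  have hA8 : G'.Adj (inr 4) (inr 3) := by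
    rw [hG', SimpleGraph.fromRel_adj]
    exact ⟨hne_rr 4 3 (by decide),
      Or.inl (Or.inr (Or.inr (Or.inr (Or.inr (Or.inr (Or.inr (Or.inr (Or.inr (Or.inl ⟨rfl, rfl⟩)))))))))⟩
  have hA9 : G'.Adj (inr 3) (inr 5) := by
    rw [hG', SimpleGraph.fromRel_adj]
    exact ⟨hne_rr 3 5 (by decide),
      Or.inl (Or.inr (Or.inr (Or.inr (Or.inr (Or.inr (Or.inr (Or.inr (Or.inr (Or.inr (Or.inl ⟨rfl, rfl⟩))))))))))⟩
  have hA10 : G'.Adj (inr 5) (inl b') := by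
    rw [hG', SimpleGraph.fromRel_adj]
    exact ⟨by simp,
      Or.inl (Or.inr (Or.inr (Or.inr (Or.inr (Or.inr (Or.inr (Or.inr (Or.inr (Or.inr (Or.inr ⟨rfl, rfl⟩))))))))))⟩
  rw [rc, rc]
  rcases Set.eq_empty_or_nonempty {k : ℕ | ∃ c0 : Sym2 (V ⊕ Fin 6) → ℕ,
      (∀ e ∈ G'.edgeSet, c0 e < k) ∧ ∀ u v : V ⊕ Fin 6, u ≠ v →
        ∃ p : G'.Walk u v, p.IsPath ∧ (p.edges.map c0).Nodup} with h1 | h1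
  · rw [h1, Nat.sInf_empty]
    exact Nat.zero_le _
  · obtain ⟨k0, c0, hc0lt, hc0rb⟩ := h1
    have hSne := caseB (H := H) (G' := G') hH [a, b, c, a', b', c'] hinl hhom hmix
      k0 c0 hc0lt hc0rb
    have hmem := Nat.sInf_mem hSne
    obtain ⟨cH, hlt, hrb⟩ := hmem
    obtain ⟨cc, hcc1, hcc2⟩ := caseA hinl hhom hA1 hA2 hA3 hA4 hA5 hA6 hA7 hA8 hA9 hA10
      _ cH hlt hrb
    exact Nat.sInf_le ⟨cc, hcc1, hcc2⟩
end

section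
/- Let H be a connected graph and let H' be obtained from H by adding four new vertices x, v_1, x_1, x_2 together with the following new edges: two edges e_0, e_1 joining x to two distinct vertices of H; the edges x v_1 and v_1 b, where b is a vertex of H; three edges joining x_1 to three distinct vertices of H; and three edges joining x_2 to three distinct vertices of H. Then rc(H') ≤ rc(H) + 2. -/
set_option maxHeartbeats 1000000

open SimpleGraph Sum

namespace RcAux

variable {V : Type*}

/-- The relation defining the augmented graph. -/
def rel (H : SimpleGraph V) (c₀ c₁ b₀ : V) (d e : Fin 3 → V) :
    (V ⊕ Fin 4) → (V ⊕ Fin 4) → Prop := fun u v =>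
  (∃ p q, u = Sum.inl p ∧ v = Sum.inl q ∧ H.Adj p q) ∨
  (u = Sum.inl c₀ ∧ v = Sum.inr 0) ∨
  (u = Sum.inl c₁ ∧ v = Sum.inr 0) ∨
  (u = Sum.inr 0 ∧ v = Sum.inr 1) ∨
  (u = Sum.inr 1 ∧ v = Sum.inl b₀) ∨
  (∃ j, u = Sum.inr 2 ∧ v = Sum.inl (d j)) ∨
  (∃ j, u = Sum.inr 3 ∧ v = Sum.inl (e j))

variable {H : SimpleGraph V} {c₀ c₁ b₀ : V} {d e : Fin 3 → V}

lemma adj_inl_inl {a a' : V} :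
    (fromRel (rel H c₀ c₁ b₀ d e)).Adj (inl a) (inl a') ↔ H.Adj a a' := by
  rw [fromRel_adj]
  constructor
  · rintro ⟨hne, h | h⟩ <;>
      rcases h with ⟨p, q, hp, hq, h⟩ | ⟨h1, h2⟩ | ⟨h1, h2⟩ | ⟨h1, h2⟩ | ⟨h1, h2⟩ |
        ⟨j, h1, h2⟩ | ⟨j, h1, h2⟩ <;>
      simp only [Sum.inl.injEq, Sum.inr.injEq, reduceCtorEq] at * <;> subst_vars
    · exact h
    · exact h.symm
  · intro h
    exact ⟨by simpa using h.ne, Or.inl (Or.inl ⟨a, a', rfl, rfl, h⟩)⟩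

lemma adj_inl_inr {a : V} {i : Fin 4} :
    (fromRel (rel H c₀ c₁ b₀ d e)).Adj (inl a) (inr i) ↔
      (i = 0 ∧ (a = c₀ ∨ a = c₁)) ∨ (i = 1 ∧ a = b₀) ∨
      (i = 2 ∧ ∃ j, a = d j) ∨ (i = 3 ∧ ∃ j, a = e j) := by
  rw [fromRel_adj]
  constructor
  · rintro ⟨hne, h | h⟩ <;>
      rcases h with ⟨p, q, hp, hq, h⟩ | ⟨h1, h2⟩ | ⟨h1, h2⟩ | ⟨h1, h2⟩ | ⟨h1, h2⟩ |
        ⟨j, h1, h2⟩ | ⟨j, h1, h2⟩ <;>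
      simp only [Sum.inl.injEq, Sum.inr.injEq, reduceCtorEq] at * <;> subst_vars
    · exact Or.inl ⟨rfl, Or.inl rfl⟩
    · exact Or.inl ⟨rfl, Or.inr rfl⟩
    · exact Or.inr (Or.inl ⟨rfl, rfl⟩)
    · exact Or.inr (Or.inr (Or.inl ⟨rfl, ⟨j, rfl⟩⟩))
    · exact Or.inr (Or.inr (Or.inr ⟨rfl, ⟨j, rfl⟩⟩))
  · rintro (⟨rfl, rfl | rfl⟩ | ⟨rfl, rfl⟩ | ⟨rfl, j, rfl⟩ | ⟨rfl, j, rfl⟩)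
    · exact ⟨by simp, Or.inl (Or.inr (Or.inl ⟨rfl, rfl⟩))⟩
    · exact ⟨by simp, Or.inl (Or.inr (Or.inr (Or.inl ⟨rfl, rfl⟩)))⟩
    · exact ⟨by simp, Or.inr (Or.inr (Or.inr (Or.inr (Or.inr (Or.inl ⟨rfl, rfl⟩)))))⟩
    · exact ⟨by simp, Or.inr (Or.inr (Or.inr (Or.inr (Or.inr (Or.inr (Or.inl ⟨j, rfl, rfl⟩))))))⟩
    · exact ⟨by simp, Or.inr (Or.inr (Or.inr (Or.inr (Or.inr (Or.inr (Or.inr ⟨j, rfl, rfl⟩))))))⟩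

lemma adj_inr_inr {i j : Fin 4} :
    (fromRel (rel H c₀ c₁ b₀ d e)).Adj (inr i) (inr j) ↔
      (i = 0 ∧ j = 1) ∨ (i = 1 ∧ j = 0) := by
  rw [fromRel_adj]
  constructor
  · rintro ⟨hne, h | h⟩ <;>
      rcases h with ⟨p, q, hp, hq, h⟩ | ⟨h1, h2⟩ | ⟨h1, h2⟩ | ⟨h1, h2⟩ | ⟨h1, h2⟩ |
        ⟨jj, h1, h2⟩ | ⟨jj, h1, h2⟩ <;>
      simp only [Sum.inl.injEq, Sum.inr.injEq, reduceCtorEq] at * <;> subst_vars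
    · exact Or.inl ⟨rfl, rfl⟩
    · exact Or.inr ⟨rfl, rfl⟩
  · rintro (⟨rfl, rfl⟩ | ⟨rfl, rfl⟩)
    · exact ⟨by simp, Or.inl (Or.inr (Or.inr (Or.inr (Or.inl ⟨rfl, rfl⟩))))⟩
    · exact ⟨by simp, Or.inr (Or.inr (Or.inr (Or.inr (Or.inl ⟨rfl, rfl⟩))))⟩

/-- the hom from `H` into the augmented graph -/
def inlHom : H →g fromRel (rel H c₀ c₁ b₀ d e) where
  toFun := Sum.inl
  map_rel' := fun h => adj_inl_inl.2 h

/-- colours for the pendant edges -/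
def pcol [DecidableEq V] (k : ℕ) (c₀ : V) (d e : Fin 3 → V) (p : V) (i : Fin 4) : ℕ :=
  if i = 0 then (if p = c₀ then k else k + 1)
  else if i = 1 then k + 1
  else if i = 2 then (if p = d 0 then k else k + 1)
  else (if p = e 1 then k else k + 1)

/-- the colouring of the augmented graph -/
def col [DecidableEq V] (c : Sym2 V → ℕ) (k : ℕ) (c₀ : V) (d e : Fin 3 → V) :
    Sym2 (V ⊕ Fin 4) → ℕ :=
  Sym2.lift ⟨fun a b => match a, b with
    | Sum.inl p, Sum.inl q => c s(p, q)
    | Sum.inl p, Sum.inr i => pcol k c₀ d e p i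
    | Sum.inr i, Sum.inl p => pcol k c₀ d e p i
    | Sum.inr _, Sum.inr _ => k,
    by intro a b; cases a <;> cases b <;> simp [Sym2.eq_swap]⟩

variable [DecidableEq V] {c : Sym2 V → ℕ} {k : ℕ}

@[simp] lemma col_inl_inl {p q : V} : col c k c₀ d e s(inl p, inl q) = c s(p, q) := rfl
@[simp] lemma col_inl_inr {p : V} {i : Fin 4} :
    col c k c₀ d e s(inl p, inr i) = pcol k c₀ d e p i := rfl
@[simp] lemma col_inr_inl {p : V} {i : Fin 4} :
    col c k c₀ d e s(inr i, inl p) = pcol k c₀ d e p i := rfl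
@[simp] lemma col_inr_inr {i j : Fin 4} : col c k c₀ d e s(inr i, inr j) = k := rfl

@[simp] lemma col_map_inl (ed : Sym2 V) : col c k c₀ d e (Sym2.map Sum.inl ed) = c ed := by
  induction ed using Sym2.ind with
  | _ x y => rfl


lemma step1 (H : SimpleGraph V) (c₀ c₁ b₀ : V) (hc : c₀ ≠ c₁)
    (d : Fin 3 → V) (hd : Function.Injective d) (e : Fin 3 → V) (he : Function.Injective e)
    (k : ℕ) (c : Sym2 V → ℕ) (hbd : ∀ ed ∈ H.edgeSet, c ed < k)
    (hpath : ∀ u v : V, u ≠ v → ∃ p : H.Walk u v, p.IsPath ∧ (p.edges.map c).Nodup) :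
    (∀ ed ∈ (fromRel (rel H c₀ c₁ b₀ d e)).edgeSet, col c k c₀ d e ed < k + 2) ∧
      ∀ u v : V ⊕ Fin 4, u ≠ v → ∃ p : (fromRel (rel H c₀ c₁ b₀ d e)).Walk u v,
        p.IsPath ∧ (p.edges.map (col c k c₀ d e)).Nodup := by
  have hd10 : d 1 ≠ d 0 := fun h => absurd (hd h) (by decide)
  have he01 : e 0 ≠ e 1 := fun h => absurd (he h) (by decide)
  have hinj : Function.Injective (⇑(inlHom : H →g fromRel (rel H c₀ c₁ b₀ d e))) :=
    fun a a' h => Sum.inl.inj h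
  -- lifting rainbow paths of H
  have hlift : ∀ u v : V, ∃ q : (fromRel (rel H c₀ c₁ b₀ d e)).Walk (inl u) (inl v),
      q.IsPath ∧ (q.edges.map (col c k c₀ d e)).Nodup ∧
      (∀ x ∈ q.edges.map (col c k c₀ d e), x < k) ∧
      ∀ s ∈ q.support, ∃ z : V, s = inl z := by
    intro u v
    by_cases huv : u = v
    · subst huv
      exact ⟨Walk.nil, by simp, by simp, by simp, by simp⟩
    · obtain ⟨p, hp, hnd⟩ := hpath u v huv
      have hedges : (p.map (inlHom : H →g fromRel (rel H c₀ c₁ b₀ d e))).edges.map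
          (col c k c₀ d e) = p.edges.map c := by
        rw [Walk.edges_map, List.map_map]
        refine List.map_congr_left fun ed _ => ?_
        exact col_map_inl ed
      refine ⟨p.map (inlHom : H →g fromRel (rel H c₀ c₁ b₀ d e)),
        Walk.map_isPath_of_injective hinj hp, ?_, ?_, ?_⟩
      · exact (congrArg List.Nodup hedges).mpr hnd
      · refine (congrArg (fun l => ∀ x ∈ l, x < k) hedges).mpr ?_
        intro x hx
        obtain ⟨ed, hed, rfl⟩ := List.mem_map.1 hx
        exact hbd ed (p.edges_subset_edgeSet hed)
      · intro s hs
        have hs : s ∈ p.support.map (inlHom : H →g fromRel (rel H c₀ c₁ b₀ d e)) := by rw [← Walk.support_map]; exact hs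
        obtain ⟨z, _, rfl⟩ := List.mem_map.1 hs
        exact ⟨z, rfl⟩
  have haux1 : ∀ (x : ℕ) (l : List ℕ), l.Nodup → (∀ z ∈ l, z < k) → k ≤ x →
      (x :: l).Nodup := fun x l h1 h2 h3 =>
    List.nodup_cons.2 ⟨fun hm => absurd (h2 x hm) (by omega), h1⟩
  have haux2 : ∀ (x y : ℕ) (l : List ℕ), l.Nodup → (∀ z ∈ l, z < k) → k ≤ x → k ≤ y →
      x ≠ y → (x :: (l ++ [y])).Nodup := by
    intro x y l h1 h2 h3 h4 h5
    refine List.nodup_cons.2 ⟨?_, ?_⟩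
    · simp only [List.mem_append, List.mem_singleton]
      rintro (hm | rfl)
      · exact absurd (h2 _ hm) (by omega)
      · exact h5 rfl
    · refine h1.append (List.nodup_singleton y) ?_
      intro a ha ha'
      rw [List.mem_singleton] at ha'
      subst ha'
      exact absurd (h2 _ ha) (by omega)
  have key1 : ∀ (i : Fin 4) (a : V),
      (fromRel (rel H c₀ c₁ b₀ d e)).Adj (inr i) (inl a) →
      k ≤ col c k c₀ d e s(inr i, inl a) → ∀ u : V,
      ∃ p : (fromRel (rel H c₀ c₁ b₀ d e)).Walk (inr i) (inl u),
        p.IsPath ∧ (p.edges.map (col c k c₀ d e)).Nodup := by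
    intro i a hadj hcol u
    obtain ⟨q, hq1, hq2, hq3, hq4⟩ := hlift a u
    refine ⟨Walk.cons hadj q, ?_, ?_⟩
    · rw [Walk.cons_isPath_iff]
      refine ⟨hq1, fun hmem => ?_⟩
      obtain ⟨z, hz⟩ := hq4 _ hmem
      exact absurd hz (by simp)
    · rw [Walk.edges_cons, List.map_cons]
      exact haux1 _ _ hq2 hq3 hcol
  have key2 : ∀ (i j : Fin 4) (a a' : V), (inr i : V ⊕ Fin 4) ≠ inr j →
      (fromRel (rel H c₀ c₁ b₀ d e)).Adj (inr i) (inl a) →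
      (fromRel (rel H c₀ c₁ b₀ d e)).Adj (inl a') (inr j) →
      k ≤ col c k c₀ d e s(inr i, inl a) → k ≤ col c k c₀ d e s(inl a', inr j) →
      col c k c₀ d e s(inr i, inl a) ≠ col c k c₀ d e s(inl a', inr j) →
      ∃ p : (fromRel (rel H c₀ c₁ b₀ d e)).Walk (inr i) (inr j),
        p.IsPath ∧ (p.edges.map (col c k c₀ d e)).Nodup := by
    intro i j a a' hne hadj1 hadj2 h1 h2 h12
    obtain ⟨q, hq1, hq2, hq3, hq4⟩ := hlift a a'
    refine ⟨Walk.cons hadj1 (q.append (Walk.cons hadj2 Walk.nil)), ?_, ?_⟩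
    · rw [Walk.isPath_def, Walk.support_cons, Walk.support_append]
      simp only [Walk.support_cons, Walk.support_nil, List.tail_cons]
      refine List.nodup_cons.2 ⟨?_, ?_⟩
      · simp only [List.mem_append, List.mem_singleton]
        rintro (hm | hm)
        · obtain ⟨z, hz⟩ := hq4 _ hm
          exact absurd hz (by simp)
        · exact hne hm
      · refine (Walk.isPath_def q).1 hq1 |>.append (List.nodup_singleton _) ?_
        intro s hs hs'
        rw [List.mem_singleton] at hs'
        obtain ⟨z, hz⟩ := hq4 _ hs
        rw [hs'] at hz
        exact absurd hz (by simp)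
    · rw [Walk.edges_cons, Walk.edges_append, Walk.edges_cons, Walk.edges_nil,
        List.map_cons, List.map_append, List.map_cons, List.map_nil]
      exact haux2 _ _ _ hq2 hq3 h1 h2 h12
  -- adjacency of the new edges
  have hA0 : (fromRel (rel H c₀ c₁ b₀ d e)).Adj (inr 0) (inl c₀) :=
    (adj_inl_inr.2 (Or.inl ⟨rfl, Or.inl rfl⟩)).symm
  have hA0' : (fromRel (rel H c₀ c₁ b₀ d e)).Adj (inr 0) (inl c₁) :=
    (adj_inl_inr.2 (Or.inl ⟨rfl, Or.inr rfl⟩)).symm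
  have hA1 : (fromRel (rel H c₀ c₁ b₀ d e)).Adj (inr 1) (inl b₀) :=
    (adj_inl_inr.2 (Or.inr (Or.inl ⟨rfl, rfl⟩))).symm
  have hA2 : ∀ j : Fin 3, (fromRel (rel H c₀ c₁ b₀ d e)).Adj (inr 2) (inl (d j)) :=
    fun j => (adj_inl_inr.2 (Or.inr (Or.inr (Or.inl ⟨rfl, j, rfl⟩)))).symm
  have hA3 : ∀ j : Fin 3, (fromRel (rel H c₀ c₁ b₀ d e)).Adj (inr 3) (inl (e j)) :=
    fun j => (adj_inl_inr.2 (Or.inr (Or.inr (Or.inr ⟨rfl, j, rfl⟩)))).symm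
  have hA01 : (fromRel (rel H c₀ c₁ b₀ d e)).Adj (inr 0) (inr 1) :=
    adj_inr_inr.2 (Or.inl ⟨rfl, rfl⟩)
  have rev : ∀ {s t : V ⊕ Fin 4},
      (∃ p : (fromRel (rel H c₀ c₁ b₀ d e)).Walk s t,
        p.IsPath ∧ (p.edges.map (col c k c₀ d e)).Nodup) →
      ∃ p : (fromRel (rel H c₀ c₁ b₀ d e)).Walk t s,
        p.IsPath ∧ (p.edges.map (col c k c₀ d e)).Nodup := by
    rintro s t ⟨p, h1, h2⟩
    exact ⟨p.reverse, h1.reverse,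
      by rw [Walk.edges_reverse, List.map_reverse]; exact List.nodup_reverse.2 h2⟩
  have key3 : ∀ (i : Fin 4) (u : V),
      ∃ p : (fromRel (rel H c₀ c₁ b₀ d e)).Walk (inr i) (inl u),
        p.IsPath ∧ (p.edges.map (col c k c₀ d e)).Nodup := by
    intro i u
    fin_cases i
    · exact key1 0 c₀ hA0 (by simp [pcol]) u
    · exact key1 1 b₀ hA1 (by simp [pcol]) u
    · exact key1 2 (d 0) (hA2 0) (by simp [pcol]) u
    · exact key1 3 (e 0) (hA3 0) (by simp [pcol, he01]) u
  have p01 : ∃ p : (fromRel (rel H c₀ c₁ b₀ d e)).Walk (inr 0) (inr 1),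
      p.IsPath ∧ (p.edges.map (col c k c₀ d e)).Nodup :=
    ⟨Walk.cons hA01 Walk.nil, by simp [Walk.cons_isPath_iff], by simp⟩
  have p02 := key2 0 2 c₀ (d 1) (by simp) hA0 (hA2 1).symm
    (by simp [pcol]) (by simp [pcol, hd10]) (by simp [pcol, hd10])
  have p03 := key2 0 3 c₁ (e 1) (by simp) hA0' (hA3 1).symm
    (by simp [pcol, hc.symm]) (by simp [pcol]) (by simp [pcol, hc.symm])
  have p12 := key2 1 2 b₀ (d 0) (by simp) hA1 (hA2 0).symm
    (by simp [pcol]) (by simp [pcol]) (by simp [pcol])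
  have p13 := key2 1 3 b₀ (e 1) (by simp) hA1 (hA3 1).symm
    (by simp [pcol]) (by simp [pcol]) (by simp [pcol])
  have p23 := key2 2 3 (d 0) (e 0) (by simp) (hA2 0) (hA3 0).symm
    (by simp [pcol]) (by simp [pcol, he01]) (by simp [pcol, he01])
  constructor
  · intro ed
    induction ed using Sym2.ind with
    | _ a bb =>
      intro hed
      rw [mem_edgeSet] at hed
      rcases a with p | i <;> rcases bb with q | j
      · rw [adj_inl_inl] at hed
        have := hbd s(p, q) (H.mem_edgeSet.2 hed)
        simp only [col_inl_inl]
        omega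
      · simp only [col_inl_inr, pcol]
        split_ifs <;> omega
      · simp only [col_inr_inl, pcol]
        split_ifs <;> omega
      · simp only [col_inr_inr]
        omega
  · intro s t hst
    rcases s with u | i <;> rcases t with v | j
    · obtain ⟨q, h1, h2, _, _⟩ := hlift u v
      exact ⟨q, h1, h2⟩
    · exact rev (key3 j u)
    · exact key3 i v
    · have hij : i ≠ j := fun h => hst (by rw [h])
      fin_cases i <;> fin_cases j <;>
        first
          | exact absurd rfl hij
          | exact p01 | exact p02 | exact p03 | exact p12 | exact p13 | exact p23
          | exact rev p01 | exact rev p02 | exact rev p03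
          | exact rev p12 | exact rev p13 | exact rev p23


lemma map_inl_mem_edgeSet {ed : Sym2 V} (h : ed ∈ H.edgeSet) :
    Sym2.map Sum.inl ed ∈ (fromRel (rel H c₀ c₁ b₀ d e)).edgeSet := by
  revert h
  refine Sym2.ind (fun a bb h => ?_) ed
  rw [Sym2.map_pair_eq, mem_edgeSet]
  exact adj_inl_inl.2 (H.mem_edgeSet.1 h)

lemma step2 (H : SimpleGraph V) (hH : H.Connected) (c₀ c₁ b₀ : V) (d e : Fin 3 → V)
    (k : ℕ) (c' : Sym2 (V ⊕ Fin 4) → ℕ)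
    (hbd : ∀ ed ∈ (fromRel (rel H c₀ c₁ b₀ d e)).edgeSet, c' ed < k)
    (hpath : ∀ u v : V ⊕ Fin 4, u ≠ v → ∃ p : (fromRel (rel H c₀ c₁ b₀ d e)).Walk u v,
      p.IsPath ∧ (p.edges.map c').Nodup) :
    ∃ (k' : ℕ) (c : Sym2 V → ℕ), (∀ ed ∈ H.edgeSet, c ed < k') ∧
      ∀ u v : V, u ≠ v → ∃ p : H.Walk u v, p.IsPath ∧ (p.edges.map c).Nodup := by
  have P : ∀ a bb : V, H.Walk a bb := fun a bb => Nonempty.some (hH.preconnected a bb)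
  obtain ⟨L, hPL⟩ : ∃ L : List (Sym2 V),
      ∀ a ∈ [c₀, c₁, b₀, d 0, d 1, d 2, e 0, e 1, e 2],
      ∀ bb ∈ [c₀, c₁, b₀, d 0, d 1, d 2, e 0, e 1, e 2],
      ∀ ed ∈ (P a bb).edges, ed ∈ L := by
    refine ⟨([c₀, c₁, b₀, d 0, d 1, d 2, e 0, e 1, e 2].flatMap fun a =>
      [c₀, c₁, b₀, d 0, d 1, d 2, e 0, e 1, e 2].flatMap fun bb => (P a bb).edges), ?_⟩
    intro a ha bb hbb ed hed
    rw [List.mem_flatMap]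
    exact ⟨a, ha, List.mem_flatMap.2 ⟨bb, hbb, hed⟩⟩
  obtain ⟨cH, hcH⟩ : ∃ cH : Sym2 V → ℕ, ∀ ed : Sym2 V,
      (ed ∈ L → cH ed = k + L.idxOf ed) ∧
      (ed ∉ L → cH ed = c' (Sym2.map Sum.inl ed)) :=
    ⟨fun ed => if h : ed ∈ L then k + L.idxOf ed else c' (Sym2.map Sum.inl ed),
      fun ed => ⟨fun h => dif_pos h, fun h => dif_neg h⟩⟩
  have hmemT : ∀ (a : V) (i : Fin 4), (fromRel (rel H c₀ c₁ b₀ d e)).Adj (inl a) (inr i) →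
      a ∈ [c₀, c₁, b₀, d 0, d 1, d 2, e 0, e 1, e 2] := by
    intro a i h
    rw [adj_inl_inr] at h
    rcases h with ⟨_, rfl | rfl⟩ | ⟨_, rfl⟩ | ⟨_, j, rfl⟩ | ⟨_, j, rfl⟩
    · simp
    · simp
    · simp
    · fin_cases j <;> simp
    · fin_cases j <;> simp
  have reroute : ∀ n : ℕ, ∀ u v : V, ∀ p : (fromRel (rel H c₀ c₁ b₀ d e)).Walk (inl u) (inl v),
      p.IsPath → p.length ≤ n →
      ∃ w : H.Walk u v, ∀ ed ∈ w.edges, Sym2.map Sum.inl ed ∈ p.edges ∨ ed ∈ L := by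
    intro n
    induction n with
    | zero =>
      intro u v p hp hl
      cases p with
      | nil => exact ⟨Walk.nil, by simp⟩
      | cons h q => simp [Walk.length_cons] at hl
    | succ n ih =>
      intro u v p hp hl
      cases p with
      | nil => exact ⟨Walk.nil, by simp⟩
      | @cons _ mid _ h q =>
        cases mid with
        | inl w1 =>
          obtain ⟨ww, hww⟩ := ih w1 v q hp.of_cons
            (by simp only [Walk.length_cons] at hl; omega)
          refine ⟨Walk.cons (adj_inl_inl.1 h) ww, ?_⟩
          intro ed hed
          rcases List.mem_cons.1 (by simpa [Walk.edges_cons] using hed) with rfl | hed'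
          · left
            rw [Walk.edges_cons, Sym2.map_pair_eq]
            exact List.mem_cons_self
          · rcases hww ed hed' with h1 | h2
            · left
              rw [Walk.edges_cons]
              exact List.mem_cons_of_mem _ h1
            · exact Or.inr h2
        | inr i =>
          cases q with
          | @cons _ mid2 _ h' q2 =>
            cases mid2 with
            | inl w1 =>
              obtain ⟨ww, hww⟩ := ih w1 v q2 (hp.of_cons.of_cons)
                (by simp only [Walk.length_cons] at hl; omega)
              refine ⟨(P u w1).append ww, ?_⟩
              intro ed hed
              rcases List.mem_append.1 (by simpa [Walk.edges_append] using hed) with hed1 | hed2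
              · exact Or.inr (hPL u (hmemT u i h) w1 (hmemT w1 i h'.symm) ed hed1)
              · rcases hww ed hed2 with h1 | h2
                · left
                  rw [Walk.edges_cons, Walk.edges_cons]
                  exact List.mem_cons_of_mem _ (List.mem_cons_of_mem _ h1)
                · exact Or.inr h2
            | inr i2 =>
              cases q2 with
              | @cons _ mid3 _ h'' q3 =>
                cases mid3 with
                | inl w1 =>
                  obtain ⟨ww, hww⟩ := ih w1 v q3 (hp.of_cons.of_cons.of_cons)
                    (by simp only [Walk.length_cons] at hl; omega)
                  refine ⟨(P u w1).append ww, ?_⟩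
                  intro ed hed
                  rcases List.mem_append.1 (by simpa [Walk.edges_append] using hed)
                    with hed1 | hed2
                  · exact Or.inr (hPL u (hmemT u i h) w1 (hmemT w1 i2 h''.symm) ed hed1)
                  · rcases hww ed hed2 with h1 | h2
                    · left
                      rw [Walk.edges_cons, Walk.edges_cons, Walk.edges_cons]
                      exact List.mem_cons_of_mem _
                        (List.mem_cons_of_mem _ (List.mem_cons_of_mem _ h1))
                    · exact Or.inr h2
                | inr i3 =>
                  exfalso
                  have e1 := adj_inr_inr.1 h'
                  have e2 := adj_inr_inr.1 h''
                  have hi : i3 = i := by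
                    rcases e1 with ⟨rfl, rfl⟩ | ⟨rfl, rfl⟩ <;>
                      rcases e2 with ⟨h3, rfl⟩ | ⟨h3, rfl⟩ <;>
                      first | rfl | exact absurd h3 (by decide)
                  have hnd := (Walk.isPath_def _).1 hp
                  rw [Walk.support_cons, Walk.support_cons, Walk.support_cons] at hnd
                  have hmem3 : (inr i : V ⊕ Fin 4) ∈ q3.support := by
                    rw [← hi]; exact q3.start_mem_support
                  have := (List.nodup_cons.1 ((List.nodup_cons.1 hnd).2)).1
                  exact this (List.mem_cons_of_mem _ hmem3)
  refine ⟨k + L.length, cH, ?_, ?_⟩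
  · intro ed hed
    by_cases hmem : ed ∈ L
    · rw [(hcH ed).1 hmem]
      have := List.idxOf_lt_length_iff.2 hmem
      omega
    · rw [(hcH ed).2 hmem]
      have := hbd _ (map_inl_mem_edgeSet hed)
      omega
  · intro u v huv
    obtain ⟨p, hp, hnd⟩ := hpath (inl u) (inl v) (by simp [huv])
    obtain ⟨w, hw⟩ := reroute p.length u v p hp le_rfl
    refine ⟨w.bypass, w.bypass_isPath, ?_⟩
    have hsub := w.edges_bypass_subset
    refine List.Nodup.map_on ?_ w.bypass_isPath.edges_nodup
    intro x hx y hy hxy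
    have hx' := hw x (hsub hx)
    have hy' := hw y (hsub hy)
    by_cases hxL : x ∈ L <;> by_cases hyL : y ∈ L
    · rw [(hcH x).1 hxL, (hcH y).1 hyL] at hxy
      exact (List.idxOf_inj hxL).1 (by omega)
    · exfalso
      rw [(hcH x).1 hxL, (hcH y).2 hyL] at hxy
      have hyp : Sym2.map Sum.inl y ∈ p.edges := hy'.resolve_right hyL
      have := hbd _ (p.edges_subset_edgeSet hyp)
      omega
    · exfalso
      rw [(hcH x).2 hxL, (hcH y).1 hyL] at hxy
      have hxp : Sym2.map Sum.inl x ∈ p.edges := hx'.resolve_right hxL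
      have := hbd _ (p.edges_subset_edgeSet hxp)
      omega
    · rw [(hcH x).2 hxL, (hcH y).2 hyL] at hxy
      have hxp : Sym2.map Sum.inl x ∈ p.edges := hx'.resolve_right hxL
      have hyp : Sym2.map Sum.inl y ∈ p.edges := hy'.resolve_right hyL
      have := List.inj_on_of_nodup_map hnd hxp hyp hxy
      exact Sym2.map.injective Sum.inl_injective this

end RcAux

/-- Case 3 (first subcase).  Add new vertices `x = Sum.inr 0`, `v₁ = Sum.inr 1`,
`x₁ = Sum.inr 2`, `x₂ = Sum.inr 3` to a connected graph `H`, with two edges `e₀, e₁`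
joining `x` to distinct vertices `c₀, c₁` of `H`, the edges `x v₁` and `v₁ b` with
`b ∈ H`, three edges joining `x₁` to three distinct vertices `d 0, d 1, d 2` of `H`, and
three edges joining `x₂` to three distinct vertices `e 0, e 1, e 2` of `H`.  Then
`rc(H') ≤ rc(H) + 2`. -/
theorem rc_case3a {V : Type*} (H : SimpleGraph V) (hH : H.Connected)
    (c₀ c₁ b : V) (hc : c₀ ≠ c₁)
    (d : Fin 3 → V) (hd : Function.Injective d)
    (e : Fin 3 → V) (he : Function.Injective e) :
    rc (SimpleGraph.fromRel (fun u v : V ⊕ Fin 4 =>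
        (∃ p q, u = Sum.inl p ∧ v = Sum.inl q ∧ H.Adj p q) ∨
        (u = Sum.inl c₀ ∧ v = Sum.inr 0) ∨
        (u = Sum.inl c₁ ∧ v = Sum.inr 0) ∨
        (u = Sum.inr 0 ∧ v = Sum.inr 1) ∨
        (u = Sum.inr 1 ∧ v = Sum.inl b) ∨
        (∃ j, u = Sum.inr 2 ∧ v = Sum.inl (d j)) ∨
        (∃ j, u = Sum.inr 3 ∧ v = Sum.inl (e j)))) ≤ rc H + 2 := by

  classical
  by_cases hne : {k : ℕ | ∃ c : Sym2 V → ℕ, (∀ e ∈ H.edgeSet, c e < k) ∧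
      ∀ u v : V, u ≠ v → ∃ p : H.Walk u v, p.IsPath ∧ (p.edges.map c).Nodup}.Nonempty
  · have hm : rc H ∈ {k : ℕ | ∃ c : Sym2 V → ℕ, (∀ e ∈ H.edgeSet, c e < k) ∧
        ∀ u v : V, u ≠ v → ∃ p : H.Walk u v, p.IsPath ∧ (p.edges.map c).Nodup} :=
      Nat.sInf_mem hne
    obtain ⟨c, hbd, hpath⟩ := hm
    have hstep := RcAux.step1 H c₀ c₁ b hc d hd e he (rc H) c hbd hpath
    show rc (fromRel (RcAux.rel H c₀ c₁ b d e)) ≤ rc H + 2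
    unfold rc
    refine Nat.sInf_le ?_
    exact ⟨RcAux.col c (rc H) c₀ d e, hstep.1, hstep.2⟩
  · have h0 : rc (fromRel (RcAux.rel H c₀ c₁ b d e)) = 0 := by
      unfold rc
      refine Nat.sInf_eq_zero.2 (Or.inr ?_)
      rw [Set.eq_empty_iff_forall_notMem]
      rintro k ⟨c', hbd', hpath'⟩
      obtain ⟨k', c, h1, h2⟩ := RcAux.step2 H hH c₀ c₁ b d e k c' hbd' hpath'
      exact hne ⟨k', c, h1, h2⟩
    show rc (fromRel (RcAux.rel H c₀ c₁ b d e)) ≤ rc H + 2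
    rw [h0]
    exact Nat.zero_le _
end
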